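/- arXiv:1606.00639 — 7 statements merged into one kernel-verified Lean document; each statement's English description precedes it below -/
import Mathlib

section
/- Jacobi triple product: for all real numbers X and Y with 0 < X < 1 and Y ≠ 0, the infinite product ∏_{i=1}^∞ (1 − X^{2i})(1 + X^{2i−1} Y²)(1 + X^{2i−1} Y^{−2}) converges, the two-sided series ∑_{j=−∞}^∞ X^{j²} Y^{2j} converges absolutely, and the two are equal: ∏_{i=1}^∞ (1 − X^{2i})(1 + X^{2i−1} Y²)(1 + X^{2i−1}/Y²) = ∑_{j=−∞}^∞ X^{j²} Y^{2j}. -/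
open Finset Filter Real Topology

namespace JTP

noncomputable def gb (q : ℝ) : ℕ → ℤ → ℝ
  | 0, k => if k = 0 then 1 else 0
  | (n+1), k => q ^ k * gb q n k + gb q n (k - 1)

lemma gb_neg (q : ℝ) (n : ℕ) : ∀ k : ℤ, k < 0 → gb q n k = 0 := by
  induction n with
  | zero => intro k hk; simp [gb, hk.ne]
  | succ n ih =>
    intro k hk
    simp [gb, ih k hk, ih (k-1) (by omega)]

lemma gb_gt (q : ℝ) (n : ℕ) : ∀ k : ℤ, (n : ℤ) < k → gb q n k = 0 := by
  induction n with
  | zero => intro k hk; simp [gb]; omega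
  | succ n ih =>
    intro k hk
    simp [gb, ih k (by omega), ih (k-1) (by omega)]

lemma gb_zero (q : ℝ) (n : ℕ) : gb q n 0 = 1 := by
  induction n with
  | zero => simp [gb]
  | succ n ih => simp [gb, ih, gb_neg q n (-1) (by omega)]

lemma gb_self (q : ℝ) (n : ℕ) : gb q n n = 1 := by
  induction n with
  | zero => simp [gb]
  | succ n ih =>
    have : ((n : ℤ) + 1) - 1 = n := by ring
    simp [gb, gb_gt q n (n+1) (by omega), push_cast, this, ih]

lemma gb_nonneg {q : ℝ} (hq : 0 < q) (n : ℕ) : ∀ k : ℤ, 0 ≤ gb q n k := by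
  induction n with
  | zero => intro k; simp [gb]; positivity
  | succ n ih =>
    intro k
    have := ih k; have := ih (k-1)
    have : (0:ℝ) ≤ q ^ k := le_of_lt (zpow_pos hq k)
    simp only [gb]
    positivity

/-- second Pascal rule -/
lemma gb_pascal2 {q : ℝ} (hq : q ≠ 0) (n : ℕ) :
    ∀ k : ℤ, gb q (n+1) k = gb q n k + q ^ ((n:ℤ) + 1 - k) * gb q n (k - 1) := by
  induction n with
  | zero =>
    intro k
    rcases eq_or_ne k 0 with rfl | h0
    · simp [gb]
    rcases eq_or_ne k 1 with rfl | h1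
    · norm_num [gb]
    · have h1' : k - 1 ≠ 0 := by omega
      simp [gb, h0, h1, h1']
  | succ n ih =>
    intro k
    have hk1 : q ^ k * q ^ ((n:ℤ) + 1 - k) = q ^ ((n:ℤ) + 1) := by
      rw [← zpow_add₀ hq]; ring_nf
    have hk2 : q ^ ((n:ℤ) + 1 + 1 - k) * q ^ (k - 1) = q ^ ((n:ℤ) + 1) := by
      rw [← zpow_add₀ hq]; ring_nf
    calc gb q (n+2) k = q ^ k * gb q (n+1) k + gb q (n+1) (k-1) := rfl
      _ = q ^ k * (gb q n k + q ^ ((n:ℤ) + 1 - k) * gb q n (k - 1)) +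
          (gb q n (k-1) + q ^ ((n:ℤ) + 1 - (k-1)) * gb q n (k - 1 - 1)) := by
          rw [ih k, ih (k-1)]
      _ = q ^ k * gb q n k + q ^ ((n:ℤ)+1) * gb q n (k-1) + gb q n (k-1)
          + q ^ ((n:ℤ) + 1 + 1 - k) * gb q n (k - 1 - 1) := by
          rw [show ((n:ℤ) + 1 - (k-1)) = ((n:ℤ) + 1 + 1 - k) by ring, mul_add,
            ← mul_assoc, hk1]; ring
      _ = (q ^ k * gb q n k + gb q n (k - 1)) +
          q ^ ((n:ℤ) + 1 + 1 - k) * (q ^ (k-1) * gb q n (k-1) + gb q n (k - 1 - 1)) := by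
          rw [mul_add, ← mul_assoc, hk2]; ring
      _ = gb q (n+1) k + q ^ ((n:ℤ) + 1 + 1 - k) * gb q (n+1) (k - 1) := rfl
      _ = gb q (n+1) k + q ^ ((↑(n+1):ℤ) + 1 - k) * gb q (n+1) (k - 1) := by push_cast; ring_nf


/-- double Pascal rule -/
lemma gb_pascal_sq {q : ℝ} (hq : q ≠ 0) (n : ℕ) (k : ℤ) :
    gb q (n+2) k = q ^ k * gb q n k + (1 + q ^ ((n:ℤ)+1)) * gb q n (k-1)
      + q ^ ((n:ℤ) + 2 - k) * gb q n (k-2) := by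
  have e1 : gb q (n+2) k = q ^ k * gb q (n+1) k + gb q (n+1) (k-1) := rfl
  rw [e1, gb_pascal2 hq n k, gb_pascal2 hq n (k-1)]
  have h1 : q ^ k * q ^ ((n:ℤ) + 1 - k) = q ^ ((n:ℤ)+1) := by rw [← zpow_add₀ hq]; ring_nf
  have h2 : ((n:ℤ) + 1 - (k-1)) = ((n:ℤ) + 2 - k) := by ring
  have h3 : (k - 1 - 1) = k - 2 := by ring
  rw [mul_add, ← mul_assoc, h1, h2, h3]; ring

noncomputable def Ee (q : ℝ) (n : ℕ) : ℝ := ∏ j ∈ Finset.range n, (1 - q ^ (j+1))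

lemma Ee_succ (q : ℝ) (n : ℕ) : Ee q (n+1) = Ee q n * (1 - q ^ (n+1)) := by
  simp [Ee, Finset.prod_range_succ]

lemma Ee_pos {q : ℝ} (hq0 : 0 < q) (hq1 : q < 1) (n : ℕ) : 0 < Ee q n := by
  apply Finset.prod_pos
  intro j _
  have : q ^ (j+1) < 1 := pow_lt_one₀ hq0.le hq1 (by omega)
  linarith

lemma Ee_le_one {q : ℝ} (hq0 : 0 < q) (hq1 : q < 1) (n : ℕ) : Ee q n ≤ 1 := by
  apply Finset.prod_le_one
  · intro j _; have : q ^ (j+1) < 1 := pow_lt_one₀ hq0.le hq1 (by omega); linarith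
  · intro j _; have : 0 < q ^ (j+1) := pow_pos hq0 _; linarith

lemma Ee_antitone {q : ℝ} (hq0 : 0 < q) (hq1 : q < 1) : Antitone (Ee q) := by
  apply antitone_nat_of_succ_le
  intro n
  rw [Ee_succ]
  have h1 : 0 < q ^ (n+1) := pow_pos hq0 _
  nlinarith [Ee_pos hq0 hq1 n]

/-- product formula -/
lemma Ee_gb {q : ℝ} (hq0 : 0 < q) (hq1 : q < 1) :
    ∀ n k : ℕ, k ≤ n → Ee q k * Ee q (n - k) * gb q n (k : ℤ) = Ee q n := by
  intro n
  induction n with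
  | zero => intro k hk; interval_cases k; simp [Ee, gb]
  | succ n ih =>
    intro k hk
    rcases Nat.eq_zero_or_pos k with rfl | hkpos
    · simp [Ee, gb_zero]
    rcases eq_or_lt_of_le hk with rfl | hklt
    · rw [Nat.sub_self]
      simp only [Ee, Finset.range_zero, Finset.prod_empty, mul_one]
      have := gb_self q (n+1)
      push_cast at this ⊢
      rw [this]; ring
    -- 1 ≤ k ≤ n
    have hkn : k ≤ n := by omega
    obtain ⟨k', rfl⟩ : ∃ k', k = k' + 1 := ⟨k - 1, by omega⟩
    have hdef : gb q (n+1) ((k'+1 : ℕ) : ℤ) = q ^ ((k'+1:ℕ) : ℤ) * gb q n ((k'+1:ℕ):ℤ)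
        + gb q n ((k':ℕ):ℤ) := by
      show gb q (n+1) _ = _
      rw [show ((k'+1 : ℕ) : ℤ) = ((k' : ℕ) : ℤ) + 1 by push_cast; ring]
      show q ^ (((k':ℕ):ℤ)+1) * gb q n (((k':ℕ):ℤ)+1) + gb q n ((((k':ℕ):ℤ)+1) - 1) = _
      norm_num
    rw [hdef]
    have hsub1 : n + 1 - (k'+1) = n - (k'+1) + 1 ∨ n + 1 - (k'+1) = n - k' := by omega
    have e1 : Ee q (k'+1) = Ee q k' * (1 - q ^ (k'+1)) := Ee_succ q k'
    have e2 : Ee q (n+1-(k'+1)) = Ee q (n - (k'+1)) * (1 - q ^ (n - k')) := by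
      rw [show n+1-(k'+1) = (n - (k'+1)) + 1 by omega, Ee_succ,
        show n - (k'+1) + 1 = n - k' by omega]
    have ih1 := ih (k'+1) hkn
    have ih2 := ih k' (by omega)
    have hz : q ^ (((k'+1:ℕ)) : ℤ) = q ^ (k'+1) := by
      rw [zpow_natCast]
    rw [mul_add, hz]
    have goal1 : Ee q (k'+1) * Ee q (n+1-(k'+1)) * (q ^ (k'+1) * gb q n ((k'+1:ℕ):ℤ))
        = q ^ (k'+1) * (1 - q ^ (n - k')) * Ee q n := by
      rw [e2]
      rw [show n + 1 - (k'+1) = (n - (k'+1)) + 1 by omega] at *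
      calc Ee q (k'+1) * (Ee q (n - (k'+1)) * (1 - q ^ (n-k'))) * (q ^ (k'+1) * gb q n ((k'+1:ℕ):ℤ))
          = q ^ (k'+1) * (1 - q ^ (n - k')) *
            (Ee q (k'+1) * Ee q (n - (k'+1)) * gb q n ((k'+1:ℕ):ℤ)) := by ring
        _ = _ := by rw [ih1]
    have goal2 : Ee q (k'+1) * Ee q (n+1-(k'+1)) * gb q n ((k':ℕ):ℤ)
        = (1 - q ^ (k'+1)) * Ee q n := by
      rw [e1, show n+1-(k'+1) = n - k' by omega]
      calc Ee q k' * (1 - q^(k'+1)) * Ee q (n-k') * gb q n ((k':ℕ):ℤ)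
          = (1 - q^(k'+1)) * (Ee q k' * Ee q (n - k') * gb q n ((k':ℕ):ℤ)) := by ring
        _ = _ := by rw [ih2]
    rw [goal1, goal2, Ee_succ]
    have : k' + 1 + (n - k') = n + 1 := by omega
    have hq3 : q^(k'+1) * (1 - q^(n-k')) = q^(k'+1) - q^(n+1) := by
      rw [mul_sub, mul_one, ← pow_add, this]
    rw [hq3]; ring

lemma sum_shift (F : ℤ → ℝ) (a b a' b' c : ℤ) (h0 : ∀ m, m ∉ Icc a b → F m = 0)
    (ha : a' ≤ a + c) (hb : b + c ≤ b') :
    ∑ m ∈ Icc a' b', F (m - c) = ∑ m ∈ Icc a b, F m := by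
  have step1 : ∑ m ∈ Icc a' b', F (m - c) = ∑ m ∈ Icc (a+c) (b+c), F (m - c) := by
    refine (Finset.sum_subset ?_ ?_).symm
    · intro m hm; simp only [mem_Icc] at *; omega
    · intro m _ hm
      apply h0
      simp only [mem_Icc] at *; omega
  rw [step1, show Icc (a+c) (b+c) = (Icc a b).map (addRightEmbedding c) from
    (Finset.map_add_right_Icc a b c).symm, Finset.sum_map]
  simp

lemma finite_jacobi (x z : ℝ) (hx : 0 < x) (hz : 0 < z) (n : ℕ) :
    ∏ i ∈ range n, ((1 + x^(2*i+1) * z) * (1 + x^(2*i+1) / z))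
    = ∑ m ∈ Icc (-(n:ℤ)) (n:ℤ), gb (x^2) (2*n) ((n:ℤ)+m) * x ^ (m^2) * z ^ m := by
  have hx0 : x ≠ 0 := hx.ne'
  have hz0 : z ≠ 0 := hz.ne'
  have hq0 : x^2 ≠ 0 := pow_ne_zero _ hx0
  set q : ℝ := x^2 with hqdef
  induction n with
  | zero => simp [gb]
  | succ n ih =>
    set G : ℤ → ℝ := fun m => gb q (2*n) ((n:ℤ)+m) * x ^ (m^2) * z ^ m with hG
    have hGsupp : ∀ m : ℤ, m ∉ Icc (-(n:ℤ)) (n:ℤ) → G m = 0 := by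
      intro m hm
      simp only [mem_Icc, not_and_or, not_le] at hm
      rcases hm with hm | hm
      · simp [hG, gb_neg q (2*n) ((n:ℤ)+m) (by omega)]
      · simp [hG, gb_gt q (2*n) ((n:ℤ)+m) (by push_cast; omega)]
    have hA : ∑ m ∈ Icc (-(n:ℤ)-1) ((n:ℤ)+1), G m = ∑ m ∈ Icc (-(n:ℤ)) (n:ℤ), G m := by
      refine (Finset.sum_subset ?_ ?_).symm
      · intro m hm; simp only [mem_Icc] at *; omega
      · intro m _ hm; exact hGsupp m hm
    have hB : ∑ m ∈ Icc (-(n:ℤ)-1) ((n:ℤ)+1), G (m-1) = ∑ m ∈ Icc (-(n:ℤ)) (n:ℤ), G m :=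
      sum_shift G (-(n:ℤ)) n _ _ 1 hGsupp (by omega) (by omega)
    have hC : ∑ m ∈ Icc (-(n:ℤ)-1) ((n:ℤ)+1), G (m+1) = ∑ m ∈ Icc (-(n:ℤ)) (n:ℤ), G m := by
      have := sum_shift G (-(n:ℤ)) n (-(n:ℤ)-1) ((n:ℤ)+1) (-1) hGsupp (by omega) (by omega)
      rw [← this]
      apply Finset.sum_congr rfl
      intro m _; norm_num
    -- per term identity
    have ptl : ∀ m : ℤ, gb q (2*(n+1)) (((n:ℕ)+1:ℤ)+m) * x ^ (m^2) * z ^ m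
        = (1 + q^(2*n+1)) * G m + (x^(2*n+1) * z) * G (m-1) + (x^(2*n+1) / z) * G (m+1) := by
      intro m
      have h2n : 2*(n+1) = 2*n + 2 := by ring
      have hps := gb_pascal_sq hq0 (2*n) ((n:ℤ)+1+m)
      have hk1 : ((n:ℤ)+1+m) - 1 = (n:ℤ) + m := by ring
      have hk2 : ((n:ℤ)+1+m) - 2 = (n:ℤ) + (m-1) := by ring
      have hk3 : ((2*n:ℕ):ℤ) + 2 - ((n:ℤ)+1+m) = (n:ℤ)+1-m := by push_cast; ring
      have hk4 : ((2*n:ℕ):ℤ) + 1 = ((2*n+1:ℕ):ℤ) := by push_cast; ring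
      rw [hk1, hk2, hk3, hk4] at hps
      rw [h2n, show (((n:ℕ)+1:ℤ)+m) = ((n:ℤ)+1+m) by push_cast; ring, hps]
      have hzpow : ∀ a b : ℤ, x ^ a * x ^ b = x ^ (a+b) := fun a b => (zpow_add₀ hx0 a b).symm
      have hq2 : ∀ k : ℤ, q ^ k = x ^ (2*k) := by
        intro k
        rw [hqdef, ← zpow_natCast x 2, ← zpow_mul]
        norm_num
      have hxn : (x ^ (2*n+1 : ℕ) : ℝ) = x ^ ((2*n+1 : ℕ) : ℤ) := (zpow_natCast x _).symm
      have hqn : (1 + q ^ (2*n+1 : ℕ) : ℝ) = 1 + q^(2*n+1) := rfl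
      have t2 : (1 + q ^ ((2*n+1:ℕ):ℤ)) * gb q (2*n) ((n:ℤ)+m) * x ^ (m^2) * z ^ m
          = (1 + q^(2*n+1)) * G m := by
        rw [hG]
        have : q ^ ((2*n+1:ℕ):ℤ) = q ^ (2*n+1) := zpow_natCast q _
        rw [this]; ring
      have p1 : x ^ (((2*n+1:ℕ)):ℤ) * x ^ ((m+1)^2) = x ^ (2*((n:ℤ)+1+m)) * x ^ (m^2) := by
        rw [hzpow, hzpow]; congr 1; push_cast; ring
      have p3 : x ^ (((2*n+1:ℕ)):ℤ) * x ^ ((m-1)^2) = x ^ (2*((n:ℤ)+1-m)) * x ^ (m^2) := by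
        rw [hzpow, hzpow]; congr 1; push_cast; ring
      have t1 : q ^ ((n:ℤ)+1+m) * gb q (2*n) ((n:ℤ)+1+m) * x ^ (m^2) * z ^ m
          = (x^(2*n+1) / z) * G (m+1) := by
        show _ = (x^(2*n+1) / z) * (gb q (2*n) ((n:ℤ)+(m+1)) * x ^ ((m+1)^2) * z ^ (m+1))
        rw [show ((n:ℤ) + (m+1)) = ((n:ℤ)+1+m) by ring, hq2, hxn,
          zpow_add_one₀ hz0 m]
        field_simp
        push_cast at p1 ⊢
        linear_combination (-(gb q (2*n) ((n:ℤ)+1+m))) * p1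
      have t3 : q ^ ((n:ℤ)+1-m) * gb q (2*n) ((n:ℤ)+(m-1)) * x ^ (m^2) * z ^ m
          = (x^(2*n+1) * z) * G (m-1) := by
        show _ = (x^(2*n+1) * z) * (gb q (2*n) ((n:ℤ)+(m-1)) * x ^ ((m-1)^2) * z ^ (m-1))
        rw [hq2, hxn, zpow_sub_one₀ hz0 m]
        field_simp
        push_cast at p3 ⊢
        linear_combination (-(gb q (2*n) ((n:ℤ)+(m-1)))) * p3
      rw [add_mul, add_mul, add_mul, add_mul, t1, t2, t3]
      ring
    rw [Finset.prod_range_succ, ih]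
    have hIcc : Icc (-((n:ℕ)+1:ℤ)) (((n:ℕ)+1:ℤ)) = Icc (-(n:ℤ)-1) ((n:ℤ)+1) := by
      congr 1 <;> push_cast <;> ring
    push_cast [hIcc]
    rw [Finset.sum_congr rfl (fun m _ => ptl m)]
    rw [Finset.sum_add_distrib, Finset.sum_add_distrib, ← Finset.mul_sum, ← Finset.mul_sum,
      ← Finset.mul_sum, hA, hB, hC]
    have hqn2 : q^(2*n+1) = x^(2*(2*n+1)) := by rw [hqdef, ← pow_mul]
    rw [hqn2]
    field_simp
    ring

/-- summable log bounds: `|log (1+t)| ≤ |t|/(1-?)` style helpers -/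
lemma abs_log_one_add_le {t : ℝ} (ht : 0 ≤ t) : |Real.log (1 + t)| ≤ t := by
  rw [abs_of_nonneg (Real.log_nonneg (by linarith))]
  have := Real.log_le_sub_one_of_pos (show (0:ℝ) < 1 + t by linarith)
  linarith

lemma abs_log_one_sub_le {t c : ℝ} (ht : 0 ≤ t) (htc : t ≤ c) (hc : c < 1) :
    |Real.log (1 - t)| ≤ t / (1 - c) := by
  have h1 : 0 < 1 - t := by linarith
  have h2 : Real.log (1 - t) ≤ 0 := Real.log_nonpos (by linarith) (by linarith)
  rw [abs_of_nonpos h2, ← Real.log_inv]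
  have h3 := Real.log_le_sub_one_of_pos (show (0:ℝ) < (1-t)⁻¹ by positivity)
  have h4 : (1 - t)⁻¹ - 1 = t / (1 - t) := by field_simp; ring
  have h5 : t / (1 - t) ≤ t / (1 - c) := by
    apply div_le_div_of_nonneg_left ht (by linarith) (by linarith)
  linarith [h3, h4 ▸ h3]


end JTP

/-- **Jacobi triple product** (for reals): for `0 < X < 1` and `Y ≠ 0`, the infinite
product `∏_{i=1}^∞ (1 - X^{2i})(1 + X^{2i-1} Y^2)(1 + X^{2i-1}/Y^2)` converges, the
two-sided series `∑_{j ∈ ℤ} X^{j^2} Y^{2j}` converges absolutely, and they are equal. -/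
theorem jacobi_triple_product (X Y : ℝ) (hX0 : 0 < X) (hX1 : X < 1) (hY : Y ≠ 0) :
    Multipliable (fun i : ℕ =>
      (1 - X ^ (2 * i + 2)) * (1 + X ^ (2 * i + 1) * Y ^ 2) * (1 + X ^ (2 * i + 1) / Y ^ 2)) ∧
    Summable (fun j : ℤ => |X ^ (j ^ 2) * Y ^ (2 * j)|) ∧
    (∏' i : ℕ,
      (1 - X ^ (2 * i + 2)) * (1 + X ^ (2 * i + 1) * Y ^ 2) * (1 + X ^ (2 * i + 1) / Y ^ 2))
      = ∑' j : ℤ, X ^ (j ^ 2) * Y ^ (2 * j) := by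
  have hX0' : X ≠ 0 := hX0.ne'
  set z : ℝ := Y ^ 2 with hzdef
  have hz : 0 < z := by positivity
  have hz0 : z ≠ 0 := hz.ne'
  set q : ℝ := X ^ 2 with hqdef
  have hq0 : 0 < q := by positivity
  have hq1 : q < 1 := by
    calc q = X^2 := rfl
      _ < 1 := by nlinarith
  -- basic power facts
  have hXpow : ∀ i : ℕ, X ^ (2*i+2) = q ^ (i+1) := by
    intro i
    rw [hqdef, ← pow_mul]
    ring_nf
  have hXlt1 : ∀ i : ℕ, X ^ (2*i+1) ≤ X ^ i := by
    intro i
    apply pow_le_pow_of_le_one hX0.le hX1.le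
    omega
  have hq_pow_lt1 : ∀ i : ℕ, q ^ (i+1) < 1 := fun i => pow_lt_one₀ hq0.le hq1 (by omega)
  have hq_pow_pos : ∀ i : ℕ, (0:ℝ) < q ^ (i+1) := fun i => pow_pos hq0 _
  set f : ℕ → ℝ := fun i =>
    (1 - X ^ (2 * i + 2)) * (1 + X ^ (2 * i + 1) * z) * (1 + X ^ (2 * i + 1) / z) with hf
  have hfpos : ∀ i, 0 < f i := by
    intro i
    have h1 : (0:ℝ) < 1 - X ^ (2*i+2) := by rw [hXpow i]; linarith [hq_pow_lt1 i]
    have h2 : (0:ℝ) < 1 + X ^ (2*i+1) * z := by positivity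
    have h3 : (0:ℝ) < 1 + X ^ (2*i+1) / z := by positivity
    positivity
  -- log of f summable
  set g : ℕ → ℝ := fun i => Real.log (1 - X ^ (2*i+2)) + Real.log (1 + X ^ (2*i+1) * z)
    + Real.log (1 + X ^ (2*i+1) / z) with hg
  have hfg : ∀ i, f i = Real.exp (g i) := by
    intro i
    have h1 : (0:ℝ) < 1 - X ^ (2*i+2) := by rw [hXpow i]; linarith [hq_pow_lt1 i]
    have h2 : (0:ℝ) < 1 + X ^ (2*i+1) * z := by positivity
    have h3 : (0:ℝ) < 1 + X ^ (2*i+1) / z := by positivity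
    rw [hg, Real.exp_add, Real.exp_add, Real.exp_log h1, Real.exp_log h2, Real.exp_log h3]
  have hXsummable : Summable (fun i : ℕ => X ^ i) := summable_geometric_of_lt_one hX0.le hX1
  have hgsummable : Summable g := by
    have hb : Summable (fun i : ℕ => X ^ i * (q/(1-q)) + X ^ i * z + X ^ i / z) := by
      apply Summable.add
      apply Summable.add
      · exact hXsummable.mul_right _
      · exact hXsummable.mul_right _
      · exact (hXsummable.div_const _)
    apply Summable.of_norm_bounded hb
    intro i
    have hqiX : q ^ i ≤ X ^ i := by
      apply pow_le_pow_left₀ hq0.le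
      nlinarith
    have e1 : |Real.log (1 - X ^ (2*i+2))| ≤ X ^ i * (q/(1-q)) := by
      rw [hXpow i]
      have ht : q ^ (i+1) ≤ q := by
        calc q^(i+1) ≤ q^1 := pow_le_pow_of_le_one hq0.le hq1.le (by omega)
          _ = q := pow_one q
      have h := JTP.abs_log_one_sub_le (hq_pow_pos i).le ht hq1
      have h2 : q^(i+1)/(1-q) ≤ X^i * (q/(1-q)) := by
        have heq : q^(i+1)/(1-q) = q^i * (q/(1-q)) := by rw [pow_succ]; ring
        rw [heq]
        have hq1' : (0:ℝ) < 1 - q := by linarith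
        exact mul_le_mul_of_nonneg_right hqiX (by positivity)
      linarith
    have e2 : |Real.log (1 + X ^ (2*i+1) * z)| ≤ X ^ i * z := by
      have h := JTP.abs_log_one_add_le (t := X ^ (2*i+1) * z) (by positivity)
      have h2 : X ^ (2*i+1) * z ≤ X ^ i * z := mul_le_mul_of_nonneg_right (hXlt1 i) hz.le
      linarith
    have e3 : |Real.log (1 + X ^ (2*i+1) / z)| ≤ X ^ i / z := by
      have h := JTP.abs_log_one_add_le (t := X ^ (2*i+1) / z) (by positivity)
      have h2 : X ^ (2*i+1) / z ≤ X ^ i / z := by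
        have := mul_le_mul_of_nonneg_right (hXlt1 i) (inv_nonneg.mpr hz.le)
        simpa [div_eq_mul_inv] using this
      linarith
    calc ‖g i‖ ≤ |Real.log (1 - X ^ (2*i+2)) + Real.log (1 + X ^ (2*i+1) * z)|
          + |Real.log (1 + X ^ (2*i+1) / z)| := abs_add_le _ _
      _ ≤ |Real.log (1 - X ^ (2*i+2))| + |Real.log (1 + X ^ (2*i+1) * z)|
          + |Real.log (1 + X ^ (2*i+1) / z)| := by linarith [abs_add_le (Real.log (1 - X ^ (2*i+2))) (Real.log (1 + X ^ (2*i+1) * z))]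
      _ ≤ X ^ i * (q/(1-q)) + X ^ i * z + X ^ i / z := by linarith
  -- multipliability via exp of summable logs
  have hP : HasProd f (Real.exp (∑' i, g i)) := by
    have h := hgsummable.hasSum.rexp
    have : (rexp ∘ g) = f := funext fun i => (hfg i).symm
    rwa [this] at h
  have hMult : Multipliable f := hP.multipliable
  have hProdLim : Tendsto (fun n => ∏ i ∈ range n, f i) atTop (𝓝 (∏' i, f i)) :=
    hMult.hasProd.tendsto_prod_nat
  -- summability of W over ℤ
  set W : ℤ → ℝ := fun m => X ^ (m^2) * z ^ m with hW
  have hWpos : ∀ m, 0 < W m := fun m => mul_pos (zpow_pos hX0 _) (zpow_pos hz _)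
  have hXq : Tendsto (fun n : ℕ => X ^ (2*n+1)) atTop (𝓝 0) := by
    have h1 : (fun n : ℕ => X ^ (2*n+1)) = fun n => q ^ n * X := by
      funext n; rw [hqdef, ← pow_mul]; ring
    rw [h1]
    simpa using (tendsto_pow_atTop_nhds_zero_of_lt_one hq0.le hq1).mul_const X
  have hWsplit : ∀ n : ℕ, W ((n:ℤ)+1) = W n * (X ^ (2*n+1) * z) := by
    intro n
    rw [hW]
    simp only []
    rw [show ((n:ℤ)+1)^2 = (n:ℤ)^2 + ((2*n+1:ℕ):ℤ) by push_cast; ring,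
      zpow_add₀ hX0', zpow_add_one₀ hz0, zpow_natCast]
    ring
  have hWsplit' : ∀ n : ℕ, W (-((n:ℤ)+1)) = W (-n) * (X ^ (2*n+1) / z) := by
    intro n
    rw [hW]
    simp only []
    rw [show (-((n:ℤ)+1))^2 = (-(n:ℤ))^2 + ((2*n+1:ℕ):ℤ) by push_cast; ring,
      zpow_add₀ hX0', show (-((n:ℤ)+1)) = (-(n:ℤ)) - 1 by ring,
      zpow_sub_one₀ hz0, zpow_natCast]
    ring
  have hWnat : Summable (fun n : ℕ => W n) := by
    apply summable_of_ratio_test_tendsto_lt_one (l := 0) zero_lt_one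
      (Eventually.of_forall fun n => (hWpos n).ne')
    have heq : (fun n : ℕ => ‖W ((n:ℕ)+1:ℕ)‖ / ‖W n‖) = fun n => X ^ (2*n+1) * z := by
      funext n
      rw [Real.norm_eq_abs, Real.norm_eq_abs, abs_of_pos (hWpos _), abs_of_pos (hWpos _),
        show (((n:ℕ)+1:ℕ):ℤ) = (n:ℤ)+1 by push_cast; ring, hWsplit n,
        mul_comm (W (n:ℤ)), mul_div_assoc, div_self (hWpos _).ne', mul_one]
    rw [show (fun n : ℕ => ‖W ((n:ℕ)+1:ℕ)‖ / ‖W n‖) = (fun n : ℕ => ‖W (((n+1:ℕ)):ℤ)‖ / ‖W n‖) from rfl] at heq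
    rw [heq]
    simpa using hXq.mul_const z
  have hWneg : Summable (fun n : ℕ => W (-n)) := by
    apply summable_of_ratio_test_tendsto_lt_one (l := 0) zero_lt_one
      (Eventually.of_forall fun n => (hWpos _).ne')
    have heq : (fun n : ℕ => ‖W (-((n+1:ℕ):ℤ))‖ / ‖W (-n)‖) = fun n => X ^ (2*n+1) / z := by
      funext n
      rw [Real.norm_eq_abs, Real.norm_eq_abs, abs_of_pos (hWpos _), abs_of_pos (hWpos _),
        show (((n:ℕ)+1:ℕ):ℤ) = (n:ℤ)+1 by push_cast; ring, hWsplit' n,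
        mul_comm (W (-(n:ℤ))), mul_div_assoc, div_self (hWpos _).ne', mul_one]
    rw [heq]
    simpa using hXq.div_const z
  have hWsummable : Summable W := Summable.of_nat_of_neg hWnat hWneg
  have hYz : ∀ j : ℤ, Y ^ (2*j) = z ^ j := by
    intro j
    rw [hzdef, show (2*j) = (2:ℤ)*j by push_cast; ring, zpow_mul]
    norm_cast
  -- the tail-product constant L
  have hqlogsum : Summable (fun i : ℕ => Real.log (1 - q^(i+1))) := by
    apply Summable.of_norm_bounded (g := fun i => q^i * (q/(1-q)))
      ((summable_geometric_of_lt_one hq0.le hq1).mul_right _)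
    intro i
    have ht : q ^ (i+1) ≤ q := by
      calc q^(i+1) ≤ q^1 := pow_le_pow_of_le_one hq0.le hq1.le (by omega)
        _ = q := pow_one q
    have h := JTP.abs_log_one_sub_le (pow_pos hq0 (i+1)).le ht hq1
    have heq : q^(i+1)/(1-q) = q^i * (q/(1-q)) := by rw [pow_succ]; ring
    rw [Real.norm_eq_abs]
    linarith [heq ▸ h]
  set L : ℝ := Real.exp (∑' i, Real.log (1 - q^(i+1))) with hLdef
  have hLpos : 0 < L := Real.exp_pos _
  have hEProd : HasProd (fun i : ℕ => 1 - q^(i+1)) L := by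
    have h := hqlogsum.hasSum.rexp
    have heq : (rexp ∘ fun i : ℕ => Real.log (1 - q^(i+1))) = fun i : ℕ => 1 - q^(i+1) :=
      funext fun i => Real.exp_log (by linarith [hq_pow_lt1 i])
    rwa [heq] at h
  have hEtends : Tendsto (fun n => JTP.Ee q n) atTop (𝓝 L) := hEProd.tendsto_prod_nat
  have hEge : ∀ n, L ≤ JTP.Ee q n := fun n => (JTP.Ee_antitone hq0 hq1).le_of_tendsto hEtends n
  set C : ℝ := (L*L)⁻¹ with hC
  set c : ℕ → ℤ → ℝ := fun n m => JTP.Ee q n * JTP.gb q (2*n) ((n:ℤ)+m) with hc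
  have hc_nonneg : ∀ n m, 0 ≤ c n m :=
    fun n m => mul_nonneg (JTP.Ee_pos hq0 hq1 n).le (JTP.gb_nonneg hq0 _ _)
  have hc_ratio : ∀ (n : ℕ) (m : ℤ), -(n:ℤ) ≤ m → m ≤ (n:ℤ) →
      c n m * (JTP.Ee q ((n:ℤ)+m).toNat * JTP.Ee q ((n:ℤ)-m).toNat) = JTP.Ee q n * JTP.Ee q (2*n) := by
    intro n m h1 h2
    set a : ℕ := ((n:ℤ)+m).toNat with hadef
    have ha : (a:ℤ) = (n:ℤ)+m := Int.toNat_of_nonneg (by omega)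
    have hale : a ≤ 2*n := by omega
    have hbn : 2*n - a = ((n:ℤ)-m).toNat := by omega
    have hgb := JTP.Ee_gb hq0 hq1 (2*n) a hale
    rw [ha] at hgb
    rw [hc]
    simp only []
    rw [← hbn]
    linear_combination JTP.Ee q n * hgb
  have hc_le : ∀ (n : ℕ) (m : ℤ), c n m ≤ C := by
    intro n m
    rcases le_or_gt m (n:ℤ) with h2 | h2
    rcases le_or_gt (-(n:ℤ)) m with h1 | h1
    · have hr := hc_ratio n m h1 h2
      have hEa := hEge ((n:ℤ)+m).toNat
      have hEb := hEge ((n:ℤ)-m).toNat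
      have h3 : JTP.Ee q n * JTP.Ee q (2*n) ≤ 1 :=
        mul_le_one₀ (JTP.Ee_le_one hq0 hq1 n) (JTP.Ee_pos hq0 hq1 _).le (JTP.Ee_le_one hq0 hq1 _)
      have h4 : c n m * (L * L) ≤ 1 := by
        calc c n m * (L*L) ≤ c n m * (JTP.Ee q ((n:ℤ)+m).toNat * JTP.Ee q ((n:ℤ)-m).toNat) := by
              apply mul_le_mul_of_nonneg_left ?_ (hc_nonneg n m)
              exact mul_le_mul hEa hEb hLpos.le (JTP.Ee_pos hq0 hq1 _).le
          _ = JTP.Ee q n * JTP.Ee q (2*n) := hr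
          _ ≤ 1 := h3
      rw [hC, ← one_div]
      exact (le_div_iff₀ (by positivity)).mpr h4
    · have : JTP.gb q (2*n) ((n:ℤ)+m) = 0 := JTP.gb_neg q _ _ (by omega)
      rw [hc]; simp only [this, mul_zero]
      rw [hC]; positivity
    · have : JTP.gb q (2*n) ((n:ℤ)+m) = 0 := JTP.gb_gt q _ _ (by push_cast; omega)
      rw [hc]; simp only [this, mul_zero]
      rw [hC]; positivity
  set F : ℕ → ℤ → ℝ := fun n m => c n m * W m with hFdef
  have hFbound : ∀ (n : ℕ) (m : ℤ), ‖F n m‖ ≤ C * W m := by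
    intro n m
    rw [Real.norm_eq_abs, hFdef]
    simp only []
    rw [abs_of_nonneg (mul_nonneg (hc_nonneg n m) (hWpos m).le)]
    exact mul_le_mul_of_nonneg_right (hc_le n m) (hWpos m).le
  have hBoundSummable : Summable (fun m : ℤ => C * W m) := hWsummable.mul_left C
  have hclim : ∀ m : ℤ, Tendsto (fun n : ℕ => c n m) atTop (𝓝 1) := by
    intro m
    have ht1 : Tendsto (fun n : ℕ => ((n:ℤ)+m).toNat) atTop atTop :=
      tendsto_atTop_atTop.mpr fun b => ⟨b + m.natAbs, fun n hn => by omega⟩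
    have ht2 : Tendsto (fun n : ℕ => ((n:ℤ)-m).toNat) atTop atTop :=
      tendsto_atTop_atTop.mpr fun b => ⟨b + m.natAbs, fun n hn => by omega⟩
    have ht3 : Tendsto (fun n : ℕ => 2*n) atTop atTop :=
      tendsto_atTop_atTop.mpr fun b => ⟨b, fun n hn => by omega⟩
    have hLL : (L * L) ≠ 0 := by positivity
    have hRatio : Tendsto
        (fun n : ℕ => JTP.Ee q n * JTP.Ee q (2*n) / (JTP.Ee q ((n:ℤ)+m).toNat * JTP.Ee q ((n:ℤ)-m).toNat))
        atTop (𝓝 (L * L / (L * L))) :=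
      (hEtends.mul (hEtends.comp ht3)).div
        ((hEtends.comp ht1).mul (hEtends.comp ht2)) hLL
    rw [div_self hLL] at hRatio
    apply hRatio.congr'
    filter_upwards [eventually_ge_atTop m.natAbs] with n hn
    have h1 : -(n:ℤ) ≤ m := by omega
    have h2 : m ≤ (n:ℤ) := by omega
    have hr := hc_ratio n m h1 h2
    have hne : JTP.Ee q ((n:ℤ)+m).toNat * JTP.Ee q ((n:ℤ)-m).toNat ≠ 0 := by
      have := JTP.Ee_pos hq0 hq1 ((n:ℤ)+m).toNat
      have := JTP.Ee_pos hq0 hq1 ((n:ℤ)-m).toNat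
      positivity
    rw [div_eq_iff hne]
    linarith [hr]
  have hFlim : ∀ m : ℤ, Tendsto (fun n : ℕ => F n m) atTop (𝓝 (W m)) := by
    intro m
    have := (hclim m).mul_const (W m)
    rw [one_mul] at this
    exact this
  have hDC : Tendsto (fun n : ℕ => ∑' m : ℤ, F n m) atTop (𝓝 (∑' m : ℤ, W m)) :=
    tendsto_tsum_of_dominated_convergence hBoundSummable hFlim
      (Eventually.of_forall fun n m => hFbound n m)
  have hFn_eq : ∀ n : ℕ, (∑' m : ℤ, F n m) = ∏ i ∈ range n, f i := by
    intro n
    have hvanish : ∀ m ∉ Icc (-(n:ℤ)) (n:ℤ), F n m = 0 := by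
      intro m hm
      simp only [mem_Icc, not_and_or, not_le] at hm
      rcases hm with hm | hm
      · have : JTP.gb q (2*n) ((n:ℤ)+m) = 0 := JTP.gb_neg q _ _ (by omega)
        simp [hFdef, hc, this]
      · have : JTP.gb q (2*n) ((n:ℤ)+m) = 0 := JTP.gb_gt q _ _ (by push_cast; omega)
        simp [hFdef, hc, this]
    rw [tsum_eq_sum hvanish]
    have hfj := JTP.finite_jacobi X z hX0 hz n
    rw [← hqdef] at hfj
    calc ∑ m ∈ Icc (-(n:ℤ)) (n:ℤ), F n m
        = JTP.Ee q n * ∑ m ∈ Icc (-(n:ℤ)) (n:ℤ), JTP.gb q (2*n) ((n:ℤ)+m) * X ^ (m^2) * z ^ m := by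
          rw [Finset.mul_sum]
          apply Finset.sum_congr rfl
          intro m _
          rw [hFdef]; simp only []; rw [hc]; simp only []; rw [hW]; ring
      _ = JTP.Ee q n * ∏ i ∈ range n, ((1 + X^(2*i+1) * z) * (1 + X^(2*i+1) / z)) := by
          rw [← hfj]
      _ = ∏ i ∈ range n, f i := by
          rw [JTP.Ee, ← Finset.prod_mul_distrib]
          apply Finset.prod_congr rfl
          intro i _
          rw [hf]; simp only []; rw [hXpow i]; ring
  have hProdLim' : Tendsto (fun n : ℕ => ∑' m : ℤ, F n m) atTop (𝓝 (∏' i, f i)) :=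
    hProdLim.congr fun n => (hFn_eq n).symm
  have hEq : (∏' i, f i) = ∑' m : ℤ, W m := tendsto_nhds_unique hProdLim' hDC
  refine ⟨hMult, ?_, ?_⟩
  · apply hWsummable.congr
    intro j
    rw [hYz j, abs_of_pos (hWpos j)]
  · rw [hEq]
    exact tsum_congr fun j => by rw [hYz j]
end

section
/- The blocking weights sum to one over H: the family (η ↦ w^c(η)) indexed by the countable set H is summable and ∑_{η ∈ H} w^c(η) = 1. -/
/- ASEP configurations are functions `η : ℤ → {0,1}`, encoded as `η : ℤ → ℕ` with
values at most `1`. Throughout, `p ∈ (1/2, 1)` is the right jump rate, `q = 1 - p`,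
and `c ∈ ℝ` parametrizes the blocking measure. -/

/-- `N_p(η) = ∑_{i ≤ 0} η_i`. -/
noncomputable def exNp (η : ℤ → ℕ) : ℕ := ∑ᶠ m ∈ {m : ℤ | m ≤ 0}, η m

/-- `N_h(η) = ∑_{i ≥ 1} (1 - η_i)`. -/
noncomputable def exNh (η : ℤ → ℕ) : ℕ := ∑ᶠ m ∈ {m : ℤ | 1 ≤ m}, (1 - η m)

/-- Membership in `H`: a `{0,1}`-valued configuration with `N_p(η) < ∞` and `N_h(η) < ∞`. -/
def memH (η : ℤ → ℕ) : Prop :=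
  (∀ m, η m ≤ 1) ∧ {m : ℤ | m ≤ 0 ∧ η m = 1}.Finite ∧ {m : ℤ | 1 ≤ m ∧ η m = 0}.Finite

/-- The conserved quantity `N(η) = N_h(η) - N_p(η)`. -/
noncomputable def exN (η : ℤ → ℕ) : ℤ := (exNh η : ℤ) - (exNp η : ℤ)

/-- The Bernoulli parameter `ρ_i = e^c (p/q)^i / (1 + e^c (p/q)^i)`, with `q = 1 - p`. -/
noncomputable def rho (p c : ℝ) (i : ℤ) : ℝ :=
  Real.exp c * (p / (1 - p)) ^ i / (1 + Real.exp c * (p / (1 - p)) ^ i)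

/-- The `i`-th factor of the blocking weight: `ρ_i` if `η_i = 1`, else `1 - ρ_i`. -/
noncomputable def wFactor (p c : ℝ) (η : ℤ → ℕ) (i : ℤ) : ℝ :=
  if η i = 1 then rho p c i else 1 - rho p c i

/-- The blocking weight `w^c(η) = ∏_{i ∈ ℤ} (ρ_i if η_i = 1 else 1 - ρ_i)`. -/
noncomputable def wBlock (p c : ℝ) (η : ℤ → ℕ) : ℝ := ∏' i : ℤ, wFactor p c η i

open Filter Finset

/-- auxiliary: `e^c (p/q)^i`. -/
noncomputable def aaux (p c : ℝ) (i : ℤ) : ℝ := Real.exp c * (p / (1 - p)) ^ i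

/-- auxiliary: `a_i` for `i ≤ 0` and `a_i⁻¹` for `i ≥ 1`. -/
noncomputable def caux (p c : ℝ) (i : ℤ) : ℝ := if i ≤ 0 then aaux p c i else (aaux p c i)⁻¹

/-- The configuration associated to a finite set `S` of "defects". -/
def etaS (S : Finset ℤ) : ℤ → ℕ :=
  fun i => if i ≤ 0 then (if i ∈ S then 1 else 0) else (if i ∈ S then 0 else 1)

lemma memH_etaS (S : Finset ℤ) : memH (etaS S) := by
  refine ⟨fun m => ?_, ?_, ?_⟩
  · unfold etaS; split_ifs <;> omega
  · apply S.finite_toSet.subset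
    rintro m ⟨hm, he⟩
    unfold etaS at he
    by_contra hS
    rw [if_pos hm, if_neg (by simpa using hS)] at he
    exact absurd he (by omega)
  · apply S.finite_toSet.subset
    rintro m ⟨hm, he⟩
    unfold etaS at he
    have h0 : ¬ m ≤ 0 := by omega
    by_contra hS
    rw [if_neg h0, if_neg (by simpa using hS)] at he
    exact absurd he (by omega)

/-- Summing products over all finite subsets gives the infinite product of `1 + a i`. -/
lemma hasSum_prod_finset {ι : Type*} [DecidableEq ι] {a : ι → ℝ}
    (ha : ∀ i, 0 ≤ a i) (hs : Summable a) :
    Multipliable (fun i => 1 + a i) ∧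
      HasSum (fun s : Finset ι => ∏ i ∈ s, a i) (∏' i, (1 + a i)) := by
  have h1 : ∀ i, (1:ℝ) ≤ 1 + a i := fun i => le_add_of_nonneg_right (ha i)
  have hmono : Monotone (fun t : Finset ι => ∏ i ∈ t, (1 + a i)) := by
    intro t u htu
    have h1p : (1:ℝ) ≤ ∏ i ∈ u \ t, (1 + a i) := by
      have := Finset.prod_le_prod (s := u \ t) (f := fun _ => (1:ℝ))
        (g := fun i => 1 + a i) (fun i _ => zero_le_one) (fun i _ => h1 i)
      simpa using this
    have hnn : (0:ℝ) ≤ ∏ i ∈ t, (1 + a i) :=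
      Finset.prod_nonneg fun i _ => le_trans zero_le_one (h1 i)
    calc ∏ i ∈ t, (1 + a i) ≤ (∏ i ∈ u \ t, (1 + a i)) * ∏ i ∈ t, (1 + a i) :=
          le_mul_of_one_le_left hnn h1p
      _ = ∏ i ∈ u, (1 + a i) := Finset.prod_sdiff htu
  have hbdd : BddAbove (Set.range (fun t : Finset ι => ∏ i ∈ t, (1 + a i))) := by
    refine ⟨Real.exp (∑' i, a i), ?_⟩
    rintro x ⟨t, rfl⟩
    calc ∏ i ∈ t, (1 + a i) ≤ ∏ i ∈ t, Real.exp (a i) :=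
          Finset.prod_le_prod (fun i _ => le_trans zero_le_one (h1 i))
            (fun i _ => by simpa [add_comm] using Real.add_one_le_exp (a i))
      _ = Real.exp (∑ i ∈ t, a i) := (Real.exp_sum t a).symm
      _ ≤ Real.exp (∑' i, a i) := Real.exp_le_exp.2 (Summable.sum_le_tsum t (fun i _ => ha i) hs)
  have hmult : Multipliable (fun i => 1 + a i) := ⟨_, tendsto_atTop_ciSup hmono hbdd⟩
  have hP : HasProd (fun i => 1 + a i) (∏' i, (1 + a i)) := hmult.hasProd
  have hexp : ∀ t : Finset ι, ∏ i ∈ t, (1 + a i) = ∑ s ∈ t.powerset, ∏ i ∈ s, a i := by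
    intro t
    calc ∏ i ∈ t, (1 + a i) = ∏ i ∈ t, (a i + 1) := by
          exact Finset.prod_congr rfl fun i _ => add_comm _ _
      _ = ∑ s ∈ t.powerset, (∏ i ∈ s, a i) * ∏ i ∈ t \ s, (1:ℝ) := Finset.prod_add a 1 t
      _ = ∑ s ∈ t.powerset, ∏ i ∈ s, a i := by simp
  have hnonneg : ∀ s : Finset ι, 0 ≤ ∏ i ∈ s, a i :=
    fun s => Finset.prod_nonneg fun i _ => ha i
  have hbnd : ∀ T : Finset (Finset ι),
      ∑ s ∈ T, ∏ i ∈ s, a i ≤ ∏' i, (1 + a i) := by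
    intro T
    have hsub : T ⊆ (T.sup id).powerset := by
      intro s hsT
      exact Finset.mem_powerset.2 (Finset.le_sup (f := id) hsT)
    calc ∑ s ∈ T, ∏ i ∈ s, a i ≤ ∑ s ∈ (T.sup id).powerset, ∏ i ∈ s, a i :=
          Finset.sum_le_sum_of_subset_of_nonneg hsub (fun s _ _ => hnonneg s)
      _ = ∏ i ∈ T.sup id, (1 + a i) := (hexp _).symm
      _ ≤ ∏' i, (1 + a i) :=
          ge_of_tendsto hP ((eventually_ge_atTop (T.sup id)).mono fun u hu => hmono hu)
  have hsummable : Summable (fun s : Finset ι => ∏ i ∈ s, a i) :=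
    summable_of_sum_le hnonneg hbnd
  have hle1 : ∑' s : Finset ι, ∏ i ∈ s, a i ≤ ∏' i, (1 + a i) :=
    Summable.tsum_le_of_sum_le hsummable hbnd
  have hle2 : ∏' i, (1 + a i) ≤ ∑' s : Finset ι, ∏ i ∈ s, a i := by
    refine le_of_tendsto' hP ?_
    intro t
    rw [hexp t]
    exact Summable.sum_le_tsum _ (fun s _ => hnonneg s) hsummable
  have := hsummable.hasSum
  rw [le_antisymm hle1 hle2] at this
  exact ⟨hmult, this⟩

/-- Modifying a convergent product on a finite set. -/
lemma hasProd_mul_ite {ι : Type*} [DecidableEq ι] {g : ι → ℝ} {W : ℝ}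
    (hg : HasProd g W) (S : Finset ι) (cf : ι → ℝ) :
    HasProd (fun i => g i * (if i ∈ S then cf i else 1)) ((∏ i ∈ S, cf i) * W) := by
  have h2 : Tendsto (fun t : Finset ι => (∏ i ∈ S, cf i) * ∏ i ∈ t, g i) atTop
      (nhds ((∏ i ∈ S, cf i) * W)) := hg.const_mul _
  refine h2.congr' ?_
  filter_upwards [eventually_ge_atTop S] with t hSt
  rw [Finset.prod_mul_distrib, Finset.prod_ite_mem,
    Finset.inter_eq_right.2 hSt, mul_comm]

/-- The blocking weights sum to one over the countable set `H`. -/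
theorem wBlock_sums_to_one (p c : ℝ) (hp : 1 / 2 < p) (hp1 : p < 1) :
    Summable (fun η : {η : ℤ → ℕ // memH η} => wBlock p c η.1) ∧
    ∑' η : {η : ℤ → ℕ // memH η}, wBlock p c η.1 = 1 := by
  have hq : (0:ℝ) < 1 - p := by linarith
  have hp0 : (0:ℝ) < p := by linarith
  have hr1 : 1 < p / (1 - p) := by rw [lt_div_iff₀ hq]; linarith
  have hr0 : 0 < p / (1 - p) := by positivity
  have hapos : ∀ i, 0 < aaux p c i := by
    intro i; unfold aaux; positivity
  have hcpos : ∀ i, 0 < caux p c i := by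
    intro i; unfold caux
    split_ifs
    · exact hapos i
    · exact inv_pos.2 (hapos i)
  -- summability of caux
  have hgeo : Summable (fun n : ℕ => (Real.exp c + Real.exp (-c)) * (p / (1 - p))⁻¹ ^ n) :=
    (summable_geometric_of_lt_one (by positivity) (inv_lt_one_of_one_lt₀ hr1)).mul_left _
  have hKpos : 0 < Real.exp c + Real.exp (-c) := by positivity
  have hcsum : Summable (caux p c) := by
    rw [summable_int_iff_summable_nat_and_neg]
    constructor
    · refine Summable.of_nonneg_of_le (fun n => (hcpos n).le) ?_ hgeo
      intro n
      cases n with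
      | zero =>
        simp only [Nat.cast_zero, caux, aaux, le_refl, if_pos, pow_zero, zpow_zero, mul_one]
        nlinarith [Real.exp_pos (-c), Real.exp_pos c]
      | succ m =>
        have h0 : ¬ ((m + 1 : ℕ) : ℤ) ≤ 0 := by omega
        have heq : caux p c ((m + 1 : ℕ) : ℤ)
            = Real.exp (-c) * (p / (1 - p))⁻¹ ^ (m + 1) := by
          rw [caux, if_neg h0, aaux, mul_inv, ← Real.exp_neg,
            zpow_natCast, ← inv_pow]
        rw [heq]
        have : (0:ℝ) ≤ (p / (1 - p))⁻¹ ^ (m + 1) := by positivity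
        nlinarith [Real.exp_pos c]
    · refine Summable.of_nonneg_of_le (fun n => (hcpos _).le) ?_ hgeo
      intro n
      have h0 : (-(n:ℤ)) ≤ 0 := by omega
      have heq : caux p c (-(n:ℤ)) = Real.exp c * (p / (1 - p))⁻¹ ^ n := by
        rw [caux, if_pos h0, aaux, zpow_neg, zpow_natCast, ← inv_pow]
      rw [heq]
      have : (0:ℝ) ≤ (p / (1 - p))⁻¹ ^ n := by positivity
      nlinarith [Real.exp_pos (-c)]
  obtain ⟨hmult, hsum⟩ := hasSum_prod_finset (fun i => (hcpos i).le) hcsum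
  set P := ∏' i, (1 + caux p c i) with hPdef
  have hP1 : (1:ℝ) ≤ P := by
    have h := le_hasSum hsum ∅ (fun s _ => Finset.prod_nonneg fun i _ => (hcpos i).le)
    simpa using h
  have hP0 : P ≠ 0 := by linarith
  have hProd : HasProd (fun i => 1 + caux p c i) P := hmult.hasProd
  -- the base product
  have hg : HasProd (fun i => (1 + caux p c i)⁻¹) P⁻¹ := by
    have h : Tendsto (fun s : Finset ℤ => (∏ i ∈ s, (1 + caux p c i))⁻¹) atTop
        (nhds P⁻¹) := Filter.Tendsto.inv₀ hProd hP0
    have heq : ∀ s : Finset ℤ,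
        (∏ i ∈ s, (1 + caux p c i)⁻¹) = (∏ i ∈ s, (1 + caux p c i))⁻¹ := by
      intro s; rw [Finset.prod_inv_distrib]
    exact (h.congr fun s => (heq s).symm : _)
  -- the factor computation
  have hwf : ∀ (S : Finset ℤ) (i : ℤ), wFactor p c (etaS S) i
      = (1 + caux p c i)⁻¹ * (if i ∈ S then caux p c i else 1) := by
    intro S i
    have ha := hapos i
    have h1a : (0:ℝ) < 1 + aaux p c i := by linarith
    have h1a' : (0:ℝ) < 1 + (aaux p c i)⁻¹ := by positivity
    have hrho : rho p c i = aaux p c i / (1 + aaux p c i) := rfl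
    by_cases h0 : i ≤ 0 <;> by_cases hS : i ∈ S
    · simp only [wFactor, etaS, caux, h0, hS, if_true, reduceIte, hrho]
      rw [div_eq_mul_inv, mul_comm]
    · simp only [wFactor, etaS, caux, h0, hS, if_true, if_false, reduceIte, hrho, zero_ne_one]
      field_simp
      ring
    · simp only [wFactor, etaS, caux, h0, hS, if_true, if_false, reduceIte, hrho, zero_ne_one]
      rw [eq_comm]
      field_simp
      ring
    · simp only [wFactor, etaS, caux, h0, hS, if_true, if_false, reduceIte, hrho]
      rw [eq_comm]
      field_simp
      exact add_comm _ _
  -- the weight of etaS S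
  have hwB : ∀ S : Finset ℤ, wBlock p c (etaS S) = (∏ i ∈ S, caux p c i) * P⁻¹ := by
    intro S
    have hfun : wFactor p c (etaS S)
        = fun i => (1 + caux p c i)⁻¹ * (if i ∈ S then caux p c i else 1) :=
      funext (hwf S)
    have hprod : HasProd (wFactor p c (etaS S)) ((∏ i ∈ S, caux p c i) * P⁻¹) := by
      rw [hfun]; exact hasProd_mul_ite hg S (caux p c)
    exact hprod.tprod_eq
  -- the bijection
  let F : Finset ℤ → {η : ℤ → ℕ // memH η} := fun S => ⟨etaS S, memH_etaS S⟩
  have hinj : Function.Injective F := by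
    intro S T h
    have h' : etaS S = etaS T := congrArg Subtype.val h
    ext i
    have := congrFun h' i
    by_cases h0 : i ≤ 0 <;>
      simp only [etaS, h0, if_pos, if_neg, if_true, if_false, reduceIte] at this <;>
      constructor <;> intro hi <;> by_contra hni <;> simp [hi, hni] at this
  have hsurj : Function.Surjective F := by
    rintro ⟨η, h01, hf1, hf2⟩
    refine ⟨hf1.toFinset ∪ hf2.toFinset, Subtype.ext (funext fun i => ?_)⟩
    show etaS (hf1.toFinset ∪ hf2.toFinset) i = η i
    have hi01 : η i = 0 ∨ η i = 1 := by have := h01 i; omega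
    unfold etaS
    by_cases h0 : i ≤ 0
    · rw [if_pos h0]
      by_cases h1 : η i = 1
      · have hmem : i ∈ hf1.toFinset ∪ hf2.toFinset := by
          simp only [Finset.mem_union, Set.Finite.mem_toFinset, Set.mem_setOf_eq]
          exact Or.inl ⟨h0, h1⟩
        rw [if_pos hmem, h1]
      · have hmem : i ∉ hf1.toFinset ∪ hf2.toFinset := by
          simp only [Finset.mem_union, Set.Finite.mem_toFinset, Set.mem_setOf_eq]
          rintro (⟨-, hh⟩ | ⟨hh, -⟩)
          · exact h1 hh
          · omega
        rw [if_neg hmem]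
        omega
    · rw [if_neg h0]
      by_cases h1 : η i = 0
      · have hmem : i ∈ hf1.toFinset ∪ hf2.toFinset := by
          simp only [Finset.mem_union, Set.Finite.mem_toFinset, Set.mem_setOf_eq]
          exact Or.inr ⟨by omega, h1⟩
        rw [if_pos hmem, h1]
      · have hmem : i ∉ hf1.toFinset ∪ hf2.toFinset := by
          simp only [Finset.mem_union, Set.Finite.mem_toFinset, Set.mem_setOf_eq]
          rintro (⟨hh, -⟩ | ⟨-, hh⟩)
          · exact h0 hh
          · exact h1 hh
        rw [if_neg hmem]
        omega
  let e := Equiv.ofBijective F ⟨hinj, hsurj⟩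
  have hcomp : (fun η : {η : ℤ → ℕ // memH η} => wBlock p c η.1) ∘ e
      = fun S => (∏ i ∈ S, caux p c i) * P⁻¹ := funext fun S => hwB S
  have hfin : HasSum (fun η : {η : ℤ → ℕ // memH η} => wBlock p c η.1) 1 := by
    rw [← e.hasSum_iff, hcomp]
    have h := hsum.mul_right P⁻¹
    rwa [mul_inv_cancel₀ hP0] at h
  exact ⟨hfin.summable, hfin.tsum_eq⟩
end

section
/- The product Bernoulli blocking measure concentrates on H: letting B_i be the probability measure on {0,1} with B_i({1}) = ρ_i and B_i({0}) = 1 − ρ_i, the infinite product probability measure ⊗_{i ∈ ℤ} B_i on {0,1}^ℤ assigns probability 1 to the set of configurations η such that η_i = 1 for only finitely many i ≤ 0 and η_i = 0 for only finitely many i ≥ 1 (i.e., almost every configuration lies in H). -/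
open MeasureTheory

/-- The product Bernoulli blocking measure concentrates on `H`: if `P` is the product
`⊗_{i ∈ ℤ} Bernoulli(ρ_i)` on `{0,1}^ℤ` — i.e. a probability measure on `ℤ → Bool` giving
every cylinder set its product probability — then `P`-almost every configuration `η` has
`η_i = 1` for only finitely many `i ≤ 0` and `η_i = 0` for only finitely many `i ≥ 1`,
that is, `P(H) = 1`. -/
theorem product_blocking_measure_concentrates_on_H (p c : ℝ) (hp : 1 / 2 < p) (hp1 : p < 1)
    (P : Measure (ℤ → Bool)) [IsProbabilityMeasure P]
    (hP : ∀ (s : Finset ℤ) (v : ℤ → Bool),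
      P {η : ℤ → Bool | ∀ i ∈ s, η i = v i} =
        ∏ i ∈ s, ENNReal.ofReal (if v i then rho p c i else 1 - rho p c i)) :
    P {η : ℤ → Bool |
        {i : ℤ | i ≤ 0 ∧ η i = true}.Finite ∧ {i : ℤ | 1 ≤ i ∧ η i = false}.Finite} = 1 := by
  classical
  have hq : (0:ℝ) < 1 - p := by linarith
  set r : ℝ := p / (1 - p) with hr
  have hr1 : 1 < r := by
    rw [hr, lt_div_iff₀ hq]; linarith
  have hr0 : (0:ℝ) < r := lt_trans one_pos hr1
  have hrinv0 : (0:ℝ) ≤ r⁻¹ := inv_nonneg.mpr hr0.le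
  have hrinv1 : r⁻¹ < 1 := inv_lt_one_of_one_lt₀ hr1
  have hA : ∀ i : ℤ, 0 < Real.exp c * r ^ i := fun i =>
    mul_pos (Real.exp_pos c) (zpow_pos hr0 i)
  -- single-site marginals
  have hsingle : ∀ (i : ℤ) (b : Bool),
      P {η : ℤ → Bool | η i = b} =
        ENNReal.ofReal (if b then rho p c i else 1 - rho p c i) := by
    intro i b
    have h := hP {i} (fun _ => b)
    simpa using h
  -- bounds on rho
  have hrho_nonneg : ∀ i : ℤ, 0 ≤ rho p c i := by
    intro i
    unfold rho
    rw [← hr]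
    exact div_nonneg (hA i).le (by linarith [hA i])
  have hrho_le : ∀ i : ℤ, rho p c i ≤ Real.exp c * r ^ i := by
    intro i
    unfold rho
    rw [← hr]
    exact div_le_self (hA i).le (by linarith [hA i])
  have hone_sub_eq : ∀ i : ℤ, 1 - rho p c i = 1 / (1 + Real.exp c * r ^ i) := by
    intro i
    unfold rho
    rw [← hr]
    have h1 : (1:ℝ) + Real.exp c * r ^ i ≠ 0 := by positivity
    field_simp
    ring
  have hone_sub_nonneg : ∀ i : ℤ, 0 ≤ 1 - rho p c i := by
    intro i
    rw [hone_sub_eq i]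
    positivity
  have hone_sub_le : ∀ i : ℤ, 1 - rho p c i ≤ (Real.exp c)⁻¹ * (r ^ i)⁻¹ := by
    intro i
    rw [hone_sub_eq i, ← mul_inv, ← one_div]
    exact one_div_le_one_div_of_le (hA i) (by linarith [hA i])
  -- Borel–Cantelli on the left
  have hL : P {η : ℤ → Bool | ∃ᶠ n : ℕ in Filter.atTop, η (-(n:ℤ)) = true} = 0 := by
    apply measure_setOf_frequently_eq_zero
    have hfn : ∀ n : ℕ, rho p c (-(n:ℤ)) ≤ Real.exp c * (r⁻¹) ^ n := by
      intro n
      have := hrho_le (-(n:ℤ))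
      rwa [zpow_neg, zpow_natCast, ← inv_pow] at this
    have hsumm : Summable (fun n : ℕ => rho p c (-(n:ℤ))) :=
      Summable.of_nonneg_of_le (fun n => hrho_nonneg _) hfn
        ((summable_geometric_of_lt_one hrinv0 hrinv1).mul_left (Real.exp c))
    have heq : (fun n : ℕ => P {x : ℤ → Bool | x (-(n:ℤ)) = true}) =
        fun n : ℕ => ENNReal.ofReal (rho p c (-(n:ℤ))) := by
      funext n
      simpa using hsingle (-(n:ℤ)) true
    calc ∑' n : ℕ, P {x : ℤ → Bool | x (-(n:ℤ)) = true}
        = ∑' n : ℕ, ENNReal.ofReal (rho p c (-(n:ℤ))) := by rw [heq]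
      _ = ENNReal.ofReal (∑' n : ℕ, rho p c (-(n:ℤ))) :=
          (ENNReal.ofReal_tsum_of_nonneg (fun n => hrho_nonneg _) hsumm).symm
      _ ≠ ⊤ := ENNReal.ofReal_ne_top
  -- Borel–Cantelli on the right
  have hR : P {η : ℤ → Bool | ∃ᶠ n : ℕ in Filter.atTop, η ((n:ℤ) + 1) = false} = 0 := by
    apply measure_setOf_frequently_eq_zero
    have hfn : ∀ n : ℕ, 1 - rho p c ((n:ℤ) + 1) ≤
        ((Real.exp c)⁻¹ * r⁻¹) * (r⁻¹) ^ n := by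
      intro n
      have h := hone_sub_le ((n:ℤ) + 1)
      have : (r ^ ((n:ℤ) + 1))⁻¹ = r⁻¹ * (r⁻¹) ^ n := by
        rw [zpow_add₀ hr0.ne', zpow_natCast, zpow_one, mul_inv, ← inv_pow, mul_comm]
      rw [this] at h
      linarith [h]
    have hsumm : Summable (fun n : ℕ => 1 - rho p c ((n:ℤ) + 1)) :=
      Summable.of_nonneg_of_le (fun n => hone_sub_nonneg _) hfn
        ((summable_geometric_of_lt_one hrinv0 hrinv1).mul_left _)
    have heq : (fun n : ℕ => P {x : ℤ → Bool | x ((n:ℤ) + 1) = false}) =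
        fun n : ℕ => ENNReal.ofReal (1 - rho p c ((n:ℤ) + 1)) := by
      funext n
      simpa using hsingle ((n:ℤ) + 1) false
    calc ∑' n : ℕ, P {x : ℤ → Bool | x ((n:ℤ) + 1) = false}
        = ∑' n : ℕ, ENNReal.ofReal (1 - rho p c ((n:ℤ) + 1)) := by rw [heq]
      _ = ENNReal.ofReal (∑' n : ℕ, (1 - rho p c ((n:ℤ) + 1))) :=
          (ENNReal.ofReal_tsum_of_nonneg (fun n => hone_sub_nonneg _) hsumm).symm
      _ ≠ ⊤ := ENNReal.ofReal_ne_top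
  -- translate finiteness along ℕ → ℤ embeddings
  have himgL : ∀ η : ℤ → Bool, {n : ℕ | η (-(n:ℤ)) = true}.Finite →
      {i : ℤ | i ≤ 0 ∧ η i = true}.Finite := by
    intro η h
    apply (h.image (fun n : ℕ => -(n:ℤ))).subset
    rintro i ⟨hi, hti⟩
    refine ⟨(-i).toNat, ?_, ?_⟩
    · show η (-(((-i).toNat : ℕ) : ℤ)) = true
      rw [Int.toNat_of_nonneg (by linarith), neg_neg]
      exact hti
    · show -(((-i).toNat : ℕ) : ℤ) = i
      rw [Int.toNat_of_nonneg (by linarith), neg_neg]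
  have himgR : ∀ η : ℤ → Bool, {n : ℕ | η ((n:ℤ) + 1) = false}.Finite →
      {i : ℤ | 1 ≤ i ∧ η i = false}.Finite := by
    intro η h
    apply (h.image (fun n : ℕ => (n:ℤ) + 1)).subset
    rintro i ⟨hi, hti⟩
    refine ⟨(i - 1).toNat, ?_, ?_⟩
    · show η (((i - 1).toNat : ℕ) + 1) = false
      rw [Int.toNat_of_nonneg (by linarith), sub_add_cancel]
      exact hti
    · show (((i - 1).toNat : ℕ) : ℤ) + 1 = i
      rw [Int.toNat_of_nonneg (by linarith)]
      ring
  -- complement of the target is contained in the union of the two null sets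
  set S : Set (ℤ → Bool) := {η : ℤ → Bool |
      {i : ℤ | i ≤ 0 ∧ η i = true}.Finite ∧ {i : ℤ | 1 ≤ i ∧ η i = false}.Finite} with hS
  have hsub : Sᶜ ⊆ {η : ℤ → Bool | ∃ᶠ n : ℕ in Filter.atTop, η (-(n:ℤ)) = true} ∪
      {η : ℤ → Bool | ∃ᶠ n : ℕ in Filter.atTop, η ((n:ℤ) + 1) = false} := by
    intro η hη
    simp only [hS, Set.mem_compl_iff, Set.mem_setOf_eq, not_and_or] at hη
    rcases hη with h | h
    · left
      rw [Set.mem_setOf_eq, Nat.frequently_atTop_iff_infinite]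
      intro hcon
      exact h (himgL η hcon)
    · right
      rw [Set.mem_setOf_eq, Nat.frequently_atTop_iff_infinite]
      intro hcon
      exact h (himgR η hcon)
  have h0 : P Sᶜ = 0 := measure_mono_null hsub (measure_union_null hL hR)
  have h1 : (1:ENNReal) ≤ P S := by
    have hu : P (S ∪ Sᶜ) ≤ P S + P Sᶜ := measure_union_le S Sᶜ
    rw [Set.union_compl_self, measure_univ, h0, add_zero] at hu
    exact hu
  exact le_antisymm prob_le_one h1
end

section
/- Shift formula for the blocking weight (ASEP case of Lemma 5.2): for every η ∈ H and every j ∈ ℤ, w^c(τ^j η) = (q/p)^{(j² − j)/2 − N(η)·j} · e^{c·j} · w^c(η). -/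
open Function Set

namespace ASEPAux

noncomputable def gg (p c : ℝ) (i : ℤ) : ℝ := Real.exp c * (p / (1 - p)) ^ i

def base : ℤ → ℕ := fun i => if 1 ≤ i then 1 else 0

noncomputable def Rf (p c : ℝ) (η : ℤ → ℕ) (i : ℤ) : ℝ :=
  if i ≤ 0 then (if η i = 1 then gg p c i else 1)
  else (if η i = 0 then (gg p c i)⁻¹ else 1)

variable {p c : ℝ}

lemma hr0 (hp : 1 / 2 < p) (hp1 : p < 1) : 0 < p / (1 - p) :=
  div_pos (by linarith) (by linarith)

lemma hr1 (hp : 1 / 2 < p) (hp1 : p < 1) : 1 < p / (1 - p) :=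
  (one_lt_div (by linarith)).2 (by linarith)

lemma gg_pos (hp : 1 / 2 < p) (hp1 : p < 1) (i : ℤ) : 0 < gg p c i :=
  mul_pos (Real.exp_pos c) (zpow_pos (hr0 hp hp1) i)

lemma one_add_gg_pos (hp : 1 / 2 < p) (hp1 : p < 1) (i : ℤ) : 0 < 1 + gg p c i := by
  have := gg_pos (c := c) hp hp1 i; linarith

lemma rho_def (i : ℤ) : rho p c i = gg p c i / (1 + gg p c i) := rfl

lemma one_sub_rho (hp : 1 / 2 < p) (hp1 : p < 1) (i : ℤ) :
    1 - rho p c i = 1 / (1 + gg p c i) := by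
  have h := one_add_gg_pos (c := c) hp hp1 i
  rw [rho_def]; field_simp; ring

lemma rho_pos (hp : 1 / 2 < p) (hp1 : p < 1) (i : ℤ) : 0 < rho p c i :=
  div_pos (gg_pos hp hp1 i) (one_add_gg_pos hp hp1 i)

lemma rho_lt_one (hp : 1 / 2 < p) (hp1 : p < 1) (i : ℤ) : rho p c i < 1 := by
  rw [rho_def]
  have := gg_pos (c := c) hp hp1 i
  exact (div_lt_one (one_add_gg_pos hp hp1 i)).2 (by linarith)

lemma wFactor_pos (hp : 1 / 2 < p) (hp1 : p < 1) (η : ℤ → ℕ) (i : ℤ) :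
    0 < wFactor p c η i := by
  unfold wFactor
  split
  · exact rho_pos hp hp1 i
  · have := rho_lt_one (c := c) hp hp1 i; linarith

lemma wFactor_le_one (hp : 1 / 2 < p) (hp1 : p < 1) (η : ℤ → ℕ) (i : ℤ) :
    wFactor p c η i ≤ 1 := by
  unfold wFactor
  split
  · exact (rho_lt_one hp hp1 i).le
  · have := rho_pos (c := c) hp hp1 i; linarith

lemma gg_succ (hp : 1 / 2 < p) (hp1 : p < 1) (i : ℤ) :
    gg p c (i + 1) = gg p c i * (p / (1 - p)) := by
  unfold gg
  rw [zpow_add_one₀ (ne_of_gt (hr0 hp hp1))]; ring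

lemma wFactor_base_le (hp : 1 / 2 < p) (hp1 : p < 1) {i : ℤ} (h : i ≤ 0) :
    wFactor p c base i = 1 / (1 + gg p c i) := by
  have hbase : base i = 0 := by simp only [base, if_neg (by omega : ¬ (1:ℤ) ≤ i)]
  rw [← one_sub_rho hp hp1]
  simp [wFactor, hbase]

lemma wFactor_base_ge (hp : 1 / 2 < p) (hp1 : p < 1) {i : ℤ} (h : 1 ≤ i) :
    wFactor p c base i = gg p c i / (1 + gg p c i) := by
  have hbase : base i = 1 := by simp only [base, if_pos h]
  rw [← rho_def]
  simp [wFactor, hbase]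

lemma wFactor_split (hp : 1 / 2 < p) (hp1 : p < 1) {η : ℤ → ℕ} (i : ℤ) (hb : η i ≤ 1) :
    wFactor p c η i = Rf p c η i * wFactor p c base i := by
  have hg := gg_pos (c := c) hp hp1 i
  have h1g := one_add_gg_pos (c := c) hp hp1 i
  rcases le_or_gt i 0 with h | h
  · rcases Nat.le_one_iff_eq_zero_or_eq_one.mp hb with h0 | h0
    · rw [show wFactor p c η i = 1 - rho p c i from by simp [wFactor, h0],
        show Rf p c η i = 1 from by simp [Rf, h, h0],
        wFactor_base_le hp hp1 h, one_sub_rho hp hp1, one_mul]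
    · rw [show wFactor p c η i = rho p c i from by simp [wFactor, h0],
        show Rf p c η i = gg p c i from by simp [Rf, h, h0],
        wFactor_base_le hp hp1 h, rho_def, mul_one_div]
  · rcases Nat.le_one_iff_eq_zero_or_eq_one.mp hb with h0 | h0
    · rw [show wFactor p c η i = 1 - rho p c i from by simp [wFactor, h0],
        show Rf p c η i = (gg p c i)⁻¹ from by simp [Rf, not_le.2 h, h0],
        wFactor_base_ge hp hp1 h, one_sub_rho hp hp1]
      field_simp
    · rw [show wFactor p c η i = rho p c i from by simp [wFactor, h0],
        show Rf p c η i = 1 from by simp [Rf, not_le.2 h, h0],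
        wFactor_base_ge hp hp1 h, rho_def, one_mul]

lemma multipliable_base (hp : 1 / 2 < p) (hp1 : p < 1) :
    Multipliable (wFactor p c base) := by
  have hpos : ∀ i, 0 < wFactor p c base i := wFactor_pos hp hp1 base
  have hA0 : 0 < Real.exp c := Real.exp_pos c
  have hr0' := hr0 hp hp1
  have hr1' := hr1 hp hp1
  set A := Real.exp c with hA
  set r := p / (1 - p) with hrdef
  have hβ0 : (0:ℝ) ≤ r⁻¹ := by positivity
  have hβ1 : r⁻¹ < 1 := inv_lt_one_of_one_lt₀ hr1'
  have hgeo : Summable (fun n : ℕ => r⁻¹ ^ n) := summable_geometric_of_lt_one hβ0 hβ1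
  have hgsum : Summable (fun i : ℤ => (A + A⁻¹) * r ^ (-|i|)) := by
    apply Summable.of_nat_of_neg_add_one
    · apply (hgeo.mul_left (A + A⁻¹)).congr
      intro n
      rw [Int.abs_natCast, zpow_neg, zpow_natCast, inv_pow]
    · apply ((hgeo.mul_left ((A + A⁻¹) * r⁻¹))).congr
      intro n
      have h1 : |(-((n:ℤ) + 1))| = (n:ℤ) + 1 := by rw [abs_neg, abs_of_nonneg (by omega)]
      rw [h1]
      have h2 : -((n:ℤ) + 1) = -((n + 1 : ℕ) : ℤ) := by push_cast; ring
      rw [show (-((n:ℤ)+1)) = -(((n+1):ℕ):ℤ) by push_cast; ring] at *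
      rw [show (r:ℝ) ^ (-(((n+1):ℕ):ℤ)) = r⁻¹ ^ (n+1) by
        rw [zpow_neg, zpow_natCast, inv_pow]]
      rw [pow_succ]
      ring
  have hlog : Summable fun i : ℤ => Real.log (wFactor p c base i) := by
    rw [← summable_neg_iff]
    apply hgsum.of_nonneg_of_le
    · intro i
      have := Real.log_nonpos (hpos i).le (wFactor_le_one hp hp1 base i)
      linarith
    · intro i
      have h1g := one_add_gg_pos (c := c) hp hp1 i
      have hgp := gg_pos (c := c) hp hp1 i
      have hzp : (0:ℝ) < r ^ i := zpow_pos hr0' i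
      have hggdef : gg p c i = A * r ^ i := rfl
      rcases le_or_gt i 0 with h | h
      · have hf : wFactor p c base i = 1 / (1 + gg p c i) := wFactor_base_le hp hp1 h
        rw [hf, one_div, Real.log_inv, neg_neg]
        have hlog2 := Real.log_le_sub_one_of_pos h1g
        have habs : r ^ (-|i|) = r ^ i := by rw [abs_of_nonpos h, neg_neg]
        rw [habs]
        have hAinv : 0 < A⁻¹ * r ^ i := by positivity
        rw [hggdef] at hlog2 ⊢
        nlinarith
      · have hf : wFactor p c base i = gg p c i / (1 + gg p c i) := wFactor_base_ge hp hp1 h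
        rw [hf, ← Real.log_inv, inv_div]
        have hdiv : (1 + gg p c i) / gg p c i = 1 + (gg p c i)⁻¹ := by
          rw [add_div, div_self (ne_of_gt hgp), one_div, add_comm]
        rw [hdiv]
        have hinvpos : 0 < 1 + (gg p c i)⁻¹ := by positivity
        have hlog2 := Real.log_le_sub_one_of_pos hinvpos
        have habs : r ^ (-|i|) = r ^ (-i) := by rw [abs_of_pos h]
        rw [habs]
        have hinv : (gg p c i)⁻¹ = A⁻¹ * r ^ (-i) := by
          rw [hggdef, mul_inv, zpow_neg]
        have hAri : 0 < A * r ^ (-i) := by positivity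
        rw [hinv] at hlog2 ⊢
        nlinarith
  exact Real.multipliable_of_summable_log hpos hlog

lemma Rf_support {η : ℤ → ℕ} (hη : memH η) : (mulSupport (Rf p c η)).Finite := by
  apply (hη.2.1.union hη.2.2).subset
  intro i hi
  rw [mem_mulSupport] at hi
  by_contra hcon
  simp only [Set.mem_union, mem_setOf_eq, not_or, not_and_or] at hcon
  apply hi
  unfold Rf
  rcases le_or_gt i 0 with h | h
  · rw [if_pos h, if_neg (by rcases hcon.1 with h' | h' <;> [omega; exact h'])]
  · rw [if_neg (by omega), if_neg (by rcases hcon.2 with h' | h' <;> [omega; exact h'])]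

lemma wBlock_eq (hp : 1 / 2 < p) (hp1 : p < 1) {η : ℤ → ℕ} (hη : memH η) :
    wBlock p c η = (∏ᶠ i, Rf p c η i) * wBlock p c base := by
  classical
  have hfin := Rf_support (p := p) (c := c) hη
  have hmul : Multipliable (Rf p c η) := by
    apply multipliable_of_ne_finset_one (s := hfin.toFinset)
    intro b hb
    simpa [mem_mulSupport, not_not] using (fun h => hb (hfin.mem_toFinset.2 h))
  have htp : ∏' i, Rf p c η i = ∏ᶠ i, Rf p c η i := by
    rw [tprod_eq_prod' (s := hfin.toFinset) (by simp),
      finprod_eq_prod_of_mulSupport_subset _ (s := hfin.toFinset) (by simp)]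
  unfold wBlock
  calc (∏' i, wFactor p c η i) = ∏' i, (Rf p c η i * wFactor p c base i) :=
      tprod_congr fun i => wFactor_split hp hp1 i (hη.1 i)
    _ = (∏' i, Rf p c η i) * ∏' i, wFactor p c base i :=
      Multipliable.tprod_mul hmul (multipliable_base hp hp1)
    _ = _ := by rw [htp]

lemma finprod_mem_pow (b : ℝ) (f : ℤ → ℕ) (s : Set ℤ) (h : (s ∩ support f).Finite) :
    ∏ᶠ i ∈ s, b ^ f i = b ^ (∑ᶠ i ∈ s, f i) := by
  classical
  have h2 : s ∩ mulSupport (fun i => b ^ f i) = ↑h.toFinset ∩ mulSupport (fun i => b ^ f i) := by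
    ext i
    simp only [Set.Finite.coe_toFinset, mem_inter_iff, mem_mulSupport, mem_support]
    constructor
    · rintro ⟨hi, hne⟩
      refine ⟨⟨hi, fun h0 => hne (by rw [h0, pow_zero])⟩, hne⟩
    · rintro ⟨⟨hi, _⟩, hne⟩; exact ⟨hi, hne⟩
  rw [finprod_mem_eq_prod_of_inter_mulSupport_eq _ h2, finsum_mem_eq_sum _ h,
    Finset.prod_pow_eq_pow_sum]

lemma finprod_Rf_tau (hp : 1 / 2 < p) (hp1 : p < 1) {η : ℤ → ℕ} (hη : memH η) :
    ∏ᶠ i, Rf p c (fun k => η (k + 1)) i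
      = Real.exp c * (p / (1 - p)) ^ exN η * ∏ᶠ i, Rf p c η i := by
  classical
  have hA0 := Real.exp_pos c
  have hr0' := hr0 hp hp1
  set r := p / (1 - p) with hrdef
  set A := Real.exp c with hAdef
  set E1 : ℤ → ℝ := fun k => if k = 1 then A else 1 with hE1
  set E2 : ℤ → ℝ := fun k => if k ≤ 0 ∧ η k = 1 then r⁻¹ else 1 with hE2
  set E3 : ℤ → ℝ := fun k => if 1 ≤ k ∧ η k = 0 then r else 1 with hE3
  have m1 : (mulSupport E1).Finite := by
    apply (Set.finite_singleton (1 : ℤ)).subset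
    intro k hk
    rw [mem_mulSupport] at hk
    rw [mem_singleton_iff]
    by_contra hc
    exact hk (if_neg hc)
  have m2 : (mulSupport E2).Finite := by
    apply hη.2.1.subset
    intro k hk
    rw [mem_mulSupport] at hk
    rw [mem_setOf_eq]
    by_contra hc
    exact hk (if_neg hc)
  have m3 : (mulSupport E3).Finite := by
    apply hη.2.2.subset
    intro k hk
    rw [mem_mulSupport] at hk
    rw [mem_setOf_eq]
    by_contra hc
    exact hk (if_neg hc)
  have mR : (mulSupport (Rf p c η)).Finite := Rf_support hη
  have hg0 : gg p c 0 = A := by simp [gg, hAdef]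
  have key : ∀ i : ℤ, Rf p c (fun k => η (k + 1)) i
      = (fun k => E1 k * E2 k * E3 k * Rf p c η k) ((Equiv.addRight (1:ℤ)) i) := by
    intro i
    have hb := hη.1 (i + 1)
    have hgs : gg p c (i + 1) = gg p c i * r := gg_succ hp hp1 i
    have hgp := gg_pos (c := c) hp hp1 i
    have hrne : r ≠ 0 := ne_of_gt hr0'
    have hgne : gg p c i ≠ 0 := ne_of_gt hgp
    rw [show (Equiv.addRight (1:ℤ)) i = i + 1 from rfl]
    simp only [Equiv.coe_addRight, Rf, hE1, hE2, hE3]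
    rcases lt_trichotomy i 0 with h | h | h
    · rw [if_pos (le_of_lt h), if_pos (by omega : i + 1 ≤ 0),
        if_neg (by omega : ¬ i + 1 = 1),
        if_neg (fun hh => absurd hh.1 (by omega) : ¬ (1 ≤ i + 1 ∧ η (i + 1) = 0))]
      rcases eq_or_ne (η (i + 1)) 1 with h5 | h5
      · rw [if_pos h5, if_pos ⟨by omega, h5⟩, if_pos h5, hgs]
        field_simp
      · rw [if_neg h5, if_neg (fun hh => h5 hh.2), if_neg h5]
        ring
    · subst h
      rw [if_pos (le_refl (0:ℤ)), if_neg (by omega : ¬ (0:ℤ) + 1 ≤ 0),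
        if_pos (by omega : (0:ℤ) + 1 = 1),
        if_neg (fun hh => absurd hh.1 (by omega) : ¬ ((0:ℤ) + 1 ≤ 0 ∧ η (0 + 1) = 1))]
      rcases Nat.le_one_iff_eq_zero_or_eq_one.mp hb with h5 | h5
      · rw [if_neg (fun hh => by omega : ¬ η (0 + 1) = 1), if_pos ⟨by omega, h5⟩,
          if_pos h5, hgs, hg0]
        field_simp
      · rw [if_pos h5, if_neg (fun hh => absurd hh.2 (by omega) : ¬ ((1:ℤ) ≤ 0 + 1 ∧ η (0 + 1) = 0)),
          if_neg (fun hh => by omega : ¬ η (0 + 1) = 0), hg0]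
        ring
    · rw [if_neg (by omega : ¬ i ≤ 0), if_neg (by omega : ¬ i + 1 ≤ 0),
        if_neg (by omega : ¬ i + 1 = 1),
        if_neg (fun hh => absurd hh.1 (by omega) : ¬ (i + 1 ≤ 0 ∧ η (i + 1) = 1))]
      rcases eq_or_ne (η (i + 1)) 0 with h5 | h5
      · rw [if_pos h5, if_pos ⟨by omega, h5⟩, if_pos h5, hgs, mul_inv]
        field_simp
      · rw [if_neg h5, if_neg (fun hh => h5 hh.2), if_neg h5]
        ring
  calc ∏ᶠ i, Rf p c (fun k => η (k + 1)) i
      = ∏ᶠ i, (fun k => E1 k * E2 k * E3 k * Rf p c η k) ((Equiv.addRight (1:ℤ)) i) :=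
        finprod_congr key
    _ = ∏ᶠ k, (E1 k * E2 k * E3 k * Rf p c η k) :=
        finprod_comp_equiv (Equiv.addRight (1:ℤ)) (f := fun k => E1 k * E2 k * E3 k * Rf p c η k)
    _ = A * r ^ exN η * ∏ᶠ i, Rf p c η i := by
        have s12 : (mulSupport fun k => E1 k * E2 k).Finite :=
          (m1.union m2).subset (mulSupport_mul E1 E2)
        have s123 : (mulSupport fun k => E1 k * E2 k * E3 k).Finite :=
          (s12.union m3).subset (mulSupport_mul _ E3)
        rw [finprod_mul_distrib s123 mR, finprod_mul_distrib s12 m3,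
          finprod_mul_distrib m1 m2]
        have e1 : (∏ᶠ k, E1 k) = A := by
          rw [finprod_eq_single E1 1 (fun x hx => by simp [hE1, hx])]
          simp [hE1]
        have e2 : (∏ᶠ k, E2 k) = r⁻¹ ^ exNp η := by
          have hrw : ∀ k, E2 k = Set.mulIndicator {m : ℤ | m ≤ 0} (fun m => r⁻¹ ^ η m) k := by
            intro k
            by_cases hk : k ≤ 0
            · rcases Nat.le_one_iff_eq_zero_or_eq_one.mp (hη.1 k) with h0 | h0 <;>
                simp [hE2, Set.mulIndicator, hk, h0]
            · simp [hE2, Set.mulIndicator, hk]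
          rw [finprod_congr hrw, ← finprod_mem_def]
          have hsupp : ({m : ℤ | m ≤ 0} ∩ support η).Finite := by
            apply hη.2.1.subset
            rintro k ⟨hk, hs⟩
            rw [mem_support] at hs
            exact ⟨hk, by have := hη.1 k; omega⟩
          simp only [exNp]
          exact finprod_mem_pow _ _ _ hsupp
        have e3 : (∏ᶠ k, E3 k) = r ^ exNh η := by
          have hrw : ∀ k, E3 k = Set.mulIndicator {m : ℤ | 1 ≤ m} (fun m => r ^ (1 - η m)) k := by
            intro k
            by_cases hk : (1:ℤ) ≤ k
            · rcases Nat.le_one_iff_eq_zero_or_eq_one.mp (hη.1 k) with h0 | h0 <;>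
                simp [hE3, Set.mulIndicator, hk, h0]
            · simp [hE3, Set.mulIndicator, hk]
          rw [finprod_congr hrw, ← finprod_mem_def]
          have hsupp : ({m : ℤ | 1 ≤ m} ∩ support fun m => 1 - η m).Finite := by
            apply hη.2.2.subset
            rintro k ⟨hk, hs⟩
            rw [mem_support] at hs
            exact ⟨hk, by have := hη.1 k; omega⟩
          simp only [exNh]
          exact finprod_mem_pow _ _ _ hsupp
        rw [e1, e2, e3]
        simp only [exN]
        rw [zpow_sub₀ (ne_of_gt hr0'), zpow_natCast, zpow_natCast, inv_pow,
          div_eq_mul_inv]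
        ring

lemma memH_shift {η : ℤ → ℕ} (hη : memH η) (j : ℤ) : memH (fun i => η (i + j)) := by
  obtain ⟨h1, h2, h3⟩ := hη
  refine ⟨fun m => h1 _, ?_, ?_⟩
  · have hsub : {m : ℤ | m ≤ 0 ∧ η (m + j) = 1}
        ⊆ (fun m : ℤ => m + j) ⁻¹' ({k : ℤ | k ≤ 0 ∧ η k = 1} ∪ Set.Icc 1 j) := by
      rintro m ⟨hm, hv⟩
      simp only [mem_preimage, Set.mem_union, mem_setOf_eq, Set.mem_Icc]
      rcases le_or_gt (m + j) 0 with h | h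
      · exact Or.inl ⟨h, hv⟩
      · exact Or.inr ⟨by omega, by omega⟩
    exact ((h2.union (Set.finite_Icc 1 j)).preimage
      ((add_left_injective j).injOn)).subset hsub
  · have hsub : {m : ℤ | 1 ≤ m ∧ η (m + j) = 0}
        ⊆ (fun m : ℤ => m + j) ⁻¹' ({k : ℤ | 1 ≤ k ∧ η k = 0} ∪ Set.Icc (1 + j) 0) := by
      rintro m ⟨hm, hv⟩
      simp only [mem_preimage, Set.mem_union, mem_setOf_eq, Set.mem_Icc]
      rcases le_or_gt 1 (m + j) with h | h
      · exact Or.inl ⟨h, hv⟩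
      · exact Or.inr ⟨by omega, by omega⟩
    exact ((h3.union (Set.finite_Icc (1 + j) 0)).preimage
      ((add_left_injective j).injOn)).subset hsub

lemma exNp_tau {η : ℤ → ℕ} (hη : memH η) :
    exNp (fun k => η (k + 1)) = exNp η + η 1 := by
  classical
  have hinj : Set.InjOn (fun m : ℤ => m + 1) {m : ℤ | m ≤ 0} :=
    (add_left_injective (1:ℤ)).injOn
  have himg : (fun m : ℤ => m + 1) '' {m : ℤ | m ≤ 0} = {k : ℤ | k ≤ 1} := by
    ext k
    simp only [Set.mem_image, mem_setOf_eq]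
    constructor
    · rintro ⟨m, hm, rfl⟩; omega
    · intro h; exact ⟨k - 1, by omega, by ring⟩
  have h1 : exNp (fun k => η (k + 1)) = ∑ᶠ k ∈ {k : ℤ | k ≤ 1}, η k := by
    simp only [exNp]
    rw [← himg, finsum_mem_image hinj]
  have hsplit : {k : ℤ | k ≤ 1} = {k : ℤ | k ≤ 0} ∪ {(1:ℤ)} := by
    ext k; simp only [Set.mem_union, mem_setOf_eq, mem_singleton_iff]; omega
  have hfin1 : ({k : ℤ | k ≤ 0} ∩ support η).Finite := by
    apply hη.2.1.subset
    rintro k ⟨hk, hs⟩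
    rw [mem_support] at hs
    exact ⟨hk, by have := hη.1 k; omega⟩
  have hfin2 : (({(1:ℤ)} : Set ℤ) ∩ support η).Finite :=
    (Set.finite_singleton 1).inter_of_left _
  have hdisj : Disjoint {k : ℤ | k ≤ 0} ({(1:ℤ)} : Set ℤ) := by
    rw [Set.disjoint_singleton_right]
    simp only [mem_setOf_eq]; omega
  rw [h1, hsplit, finsum_mem_union' hdisj hfin1 hfin2, finsum_mem_singleton]
  rfl

lemma exNh_tau {η : ℤ → ℕ} (hη : memH η) :
    exNh η = (1 - η 1) + exNh (fun k => η (k + 1)) := by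
  classical
  have hinj : Set.InjOn (fun m : ℤ => m + 1) {m : ℤ | 1 ≤ m} :=
    (add_left_injective (1:ℤ)).injOn
  have himg : (fun m : ℤ => m + 1) '' {m : ℤ | 1 ≤ m} = {k : ℤ | 2 ≤ k} := by
    ext k
    simp only [Set.mem_image, mem_setOf_eq]
    constructor
    · rintro ⟨m, hm, rfl⟩; omega
    · intro h; exact ⟨k - 1, by omega, by ring⟩
  have h1 : exNh (fun k => η (k + 1)) = ∑ᶠ k ∈ {k : ℤ | 2 ≤ k}, (1 - η k) := by
    simp only [exNh]
    rw [← himg, finsum_mem_image hinj]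
  have hsplit : {k : ℤ | 1 ≤ k} = ({(1:ℤ)} : Set ℤ) ∪ {k : ℤ | 2 ≤ k} := by
    ext k; simp only [Set.mem_union, mem_setOf_eq, mem_singleton_iff]; omega
  have hfin1 : (({(1:ℤ)} : Set ℤ) ∩ support fun m => 1 - η m).Finite :=
    (Set.finite_singleton 1).inter_of_left _
  have hfin2 : ({k : ℤ | 2 ≤ k} ∩ support fun m => 1 - η m).Finite := by
    apply hη.2.2.subset
    rintro k ⟨hk, hs⟩
    have hk' : (2:ℤ) ≤ k := hk
    have hs' : 1 - η k ≠ 0 := hs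
    have h5 := hη.1 k
    exact ⟨by omega, by omega⟩
  have hdisj : Disjoint ({(1:ℤ)} : Set ℤ) {k : ℤ | 2 ≤ k} := by
    rw [Set.disjoint_singleton_left]
    simp only [mem_setOf_eq]; omega
  rw [exNh, hsplit, finsum_mem_union' hdisj hfin1 hfin2, finsum_mem_singleton, h1]

lemma exN_tau {η : ℤ → ℕ} (hη : memH η) :
    exN (fun k => η (k + 1)) = exN η - 1 := by
  have h1 := exNp_tau hη
  have h2 := exNh_tau hη
  have h3 : η 1 ≤ 1 := hη.1 1
  simp only [exN]
  omega

lemma wBlock_tau (hp : 1 / 2 < p) (hp1 : p < 1) {η : ℤ → ℕ} (hη : memH η) :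
    wBlock p c (fun k => η (k + 1))
      = Real.exp c * (p / (1 - p)) ^ exN η * wBlock p c η := by
  have hτ : memH (fun k => η (k + 1)) := memH_shift hη 1
  rw [wBlock_eq hp hp1 hτ, wBlock_eq hp hp1 hη, finprod_Rf_tau hp hp1 hη]
  ring

lemma half_sq (j : ℤ) : 2 * ((j ^ 2 - j) / 2) = j ^ 2 - j := by
  obtain ⟨k, hk⟩ := Int.even_mul_succ_self (j - 1)
  have h : j ^ 2 - j = 2 * k := by linear_combination hk
  omega

end ASEPAux

/-- Shift formula for the blocking weight (ASEP case of Lemma 5.2): for `η ∈ H` and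
`j ∈ ℤ`, `w^c(τ^j η) = (q/p)^{(j² - j)/2 - N(η)·j} · e^{c·j} · w^c(η)`, where
`(τ^j η)_i = η_{i+j}`. -/
theorem wBlock_shift (p c : ℝ) (hp : 1 / 2 < p) (hp1 : p < 1)
    (η : ℤ → ℕ) (hη : memH η) (j : ℤ) :
    wBlock p c (fun i => η (i + j)) =
      ((1 - p) / p) ^ ((j ^ 2 - j) / 2 - exN η * j) * Real.exp (c * j) * wBlock p c η := by
  have hp0 : (0:ℝ) < p := by linarith
  have hq0 : (0:ℝ) < 1 - p := by linarith
  have hs0 : (0:ℝ) < (1 - p) / p := div_pos hq0 hp0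
  have hsne : ((1 - p) / p : ℝ) ≠ 0 := ne_of_gt hs0
  have hrs : ∀ n : ℤ, (p / (1 - p)) ^ n = ((1 - p) / p) ^ (-n) := by
    intro n
    rw [zpow_neg, ← inv_zpow, inv_div]
  induction j using Int.induction_on generalizing η hη with
  | zero =>
    have h0 : (fun i : ℤ => η (i + 0)) = η := funext fun i => by rw [add_zero]
    rw [h0]
    norm_num
  | succ n ih =>
    have hτ : memH (fun k => η (k + 1)) := ASEPAux.memH_shift hη 1
    have h1 : (fun i : ℤ => η (i + ((n:ℤ) + 1))) = (fun i : ℤ => η (i + (n:ℤ) + 1)) :=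
      funext fun x => congrArg η (by ring)
    have hexp : (((n:ℤ) + 1) ^ 2 - ((n:ℤ) + 1)) / 2 - exN η * ((n:ℤ) + 1)
        = (((n:ℤ) ^ 2 - (n:ℤ)) / 2 - (exN η - 1) * (n:ℤ)) + (- exN η) := by
      have e1 := ASEPAux.half_sq (n:ℤ)
      have e2 := ASEPAux.half_sq ((n:ℤ) + 1)
      have e3 : ((n:ℤ) + 1) ^ 2 = (n:ℤ) ^ 2 + 2 * (n:ℤ) + 1 := by ring
      have hb : (((n:ℤ) + 1) ^ 2 - ((n:ℤ) + 1)) / 2 = ((n:ℤ) ^ 2 - (n:ℤ)) / 2 + (n:ℤ) := by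
        linarith
      linear_combination hb
    rw [h1, ih (fun k => η (k + 1)) hτ, ASEPAux.wBlock_tau hp hp1 hη,
      ASEPAux.exN_tau hη, hrs (exN η), hexp, zpow_add₀ hsne]
    push_cast
    rw [show c * ((n:ℝ) + 1) = c * (n:ℝ) + c by ring, Real.exp_add]
    ring
  | pred n ih =>
    have hσ : memH (fun k : ℤ => η (k - 1)) := by
      have h := ASEPAux.memH_shift hη (-1)
      have he : (fun i : ℤ => η (i + (-1))) = (fun k : ℤ => η (k - 1)) :=
        funext fun i => congrArg η (by ring)
      rwa [he] at h
    have hτσ : (fun k : ℤ => (fun m : ℤ => η (m - 1)) (k + 1)) = η :=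
      funext fun k => by simp
    have h1 : (fun i : ℤ => η (i + (-(n:ℤ) - 1))) = (fun i : ℤ => η (i + -(n:ℤ) - 1)) :=
      funext fun x => congrArg η (by ring)
    have hstep := ASEPAux.wBlock_tau (c := c) hp hp1 hσ
    rw [hτσ] at hstep
    have hNσ : exN (fun k : ℤ => η (k - 1)) = exN η + 1 := by
      have h := ASEPAux.exN_tau hσ
      rw [hτσ] at h
      omega
    have hexp : ((-(n:ℤ)) ^ 2 - (-(n:ℤ))) / 2 - exN (fun k : ℤ => η (k - 1)) * (-(n:ℤ))
        = (((-(n:ℤ) - 1) ^ 2 - (-(n:ℤ) - 1)) / 2 - exN η * (-(n:ℤ) - 1))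
          + (- exN (fun k : ℤ => η (k - 1))) := by
      rw [hNσ]
      have e1 := ASEPAux.half_sq (-(n:ℤ))
      have e2 := ASEPAux.half_sq (-(n:ℤ) - 1)
      have e3 : (-(n:ℤ) - 1) ^ 2 = (-(n:ℤ)) ^ 2 + 2 * (n:ℤ) + 1 := by ring
      have hb : ((-(n:ℤ) - 1) ^ 2 - (-(n:ℤ) - 1)) / 2
          = ((-(n:ℤ)) ^ 2 - (-(n:ℤ))) / 2 + (n:ℤ) + 1 := by
        linarith
      linear_combination -hb
    have h2 : (fun i : ℤ => η (i + -(n:ℤ) - 1)) = (fun i : ℤ => (fun m : ℤ => η (m - 1)) (i + -(n:ℤ))) :=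
      funext fun x => rfl
    rw [h1, h2, ih (fun m : ℤ => η (m - 1)) hσ, hstep, hrs, hexp, zpow_add₀ hsne]
    push_cast
    rw [show c * (-(n:ℝ)) = c * (-(n:ℝ) - 1) + c by ring, Real.exp_add]
    ring
end

section
/- Shift recursion for the law of the conserved quantity (ASEP case of Corollary 5.4): for every j, n ∈ ℤ, the families (η ↦ w^c(η)) over H^{n−j} and over H^n are summable and ∑_{η ∈ H^{n−j}} w^c(η) = (q/p)^{(j² − j)/2 − n·j} · e^{c·j} · ∑_{η ∈ H^n} w^c(η). -/
set_option linter.unusedSectionVars false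

open Real

/-- Helper: `x_i = e^c (p/q)^i`, the odds ratio. -/
noncomputable def xv (p c : ℝ) (i : ℤ) : ℝ := Real.exp c * (p / (1 - p)) ^ i

section basic

variable {p c : ℝ} (hp : 1 / 2 < p) (hp1 : p < 1)
include hp hp1

lemma q_pos : 0 < 1 - p := by linarith
lemma p_pos : 0 < p := by linarith
lemma pq_pos : 0 < p / (1 - p) := div_pos (p_pos hp hp1) (q_pos hp hp1)
lemma r_pos : 0 < (1 - p) / p := div_pos (q_pos hp hp1) (p_pos hp hp1)
lemma r_lt_one : (1 - p) / p < 1 := by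
  rw [div_lt_one (p_pos hp hp1)]; linarith
lemma r_ne : (1 - p) / p ≠ 0 := ne_of_gt (r_pos hp hp1)

omit hp hp1 in
lemma pq_inv : (p / (1 - p))⁻¹ = (1 - p) / p := by rw [inv_div]

lemma xv_pos (i : ℤ) : 0 < xv p c i :=
  mul_pos (exp_pos c) (zpow_pos (pq_pos hp hp1) i)

lemma xv_ne (i : ℤ) : xv p c i ≠ 0 := ne_of_gt (xv_pos hp hp1 i)

lemma one_add_xv_pos (i : ℤ) : 0 < 1 + xv p c i := by
  have := xv_pos (c := c) hp hp1 i; linarith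

lemma one_add_xv_ne (i : ℤ) : 1 + xv p c i ≠ 0 := ne_of_gt (one_add_xv_pos hp hp1 i)

omit hp hp1 in
lemma rho_eq (i : ℤ) : rho p c i = xv p c i / (1 + xv p c i) := rfl

lemma one_sub_rho (i : ℤ) : 1 - rho p c i = (1 + xv p c i)⁻¹ := by
  have h := one_add_xv_ne (c := c) hp hp1 i
  rw [rho_eq]
  field_simp
  ring

lemma xv_sub_one (i : ℤ) : xv p c (i - 1) = (1 - p) / p * xv p c i := by
  unfold xv
  rw [zpow_sub_one₀ (ne_of_gt (pq_pos hp hp1)), pq_inv]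
  ring

omit hp hp1 in
lemma xv_one : xv p c 1 = Real.exp c * (p / (1 - p)) := by
  unfold xv; rw [zpow_one]

end basic

section decomp

/-- The ground-state factor. -/
noncomputable def baseF (p c : ℝ) (i : ℤ) : ℝ :=
  if i ≤ 0 then (1 + xv p c i)⁻¹ else xv p c i / (1 + xv p c i)

/-- The finite-support correction factor. -/
noncomputable def corrF (p c : ℝ) (η : ℤ → ℕ) (i : ℤ) : ℝ :=
  if i ≤ 0 then (if η i = 1 then xv p c i else 1)
  else (if η i = 1 then 1 else (xv p c i)⁻¹)

/-- A summable geometric majorant. -/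
noncomputable def majF (p c : ℝ) (i : ℤ) : ℝ :=
  if i ≤ 0 then xv p c i else (xv p c i)⁻¹

variable {p c : ℝ} (hp : 1 / 2 < p) (hp1 : p < 1)
include hp hp1

lemma majF_nonneg (i : ℤ) : 0 ≤ majF p c i := by
  unfold majF
  have := xv_pos (c := c) hp hp1 i
  split <;> positivity

lemma xv_natCast (n : ℕ) : xv p c (n : ℤ) = Real.exp c * ((p / (1 - p)) ^ n) := by
  unfold xv; rw [zpow_natCast]

lemma xv_neg_natCast (n : ℕ) : xv p c (-(n : ℤ)) = Real.exp c * (((1 - p) / p) ^ n) := by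
  unfold xv
  rw [zpow_neg, ← inv_zpow, pq_inv, zpow_natCast]

lemma summable_majF : Summable (majF p c) := by
  rw [summable_int_iff_summable_nat_and_neg]
  constructor
  · refine Summable.of_nonneg_of_le
      (f := fun n : ℕ => (Real.exp c + Real.exp (-c)) * ((1 - p) / p) ^ n)
      (fun n => majF_nonneg hp hp1 _) (fun n => ?_) ?_
    · have hpow : (0:ℝ) < ((1 - p) / p) ^ n := pow_pos (r_pos hp hp1) n
      unfold majF
      rcases Nat.eq_zero_or_pos n with h | h
      · subst h
        rw [if_pos (by norm_num : ((0:ℕ):ℤ) ≤ 0)]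
        have h1 : xv p c ((0:ℕ):ℤ) = Real.exp c := by unfold xv; norm_num
        rw [h1]
        have := Real.exp_pos (-c)
        simp only [pow_zero, mul_one]
        linarith
      · rw [if_neg (by exact_mod_cast Nat.pos_iff_ne_zero.mp h ∘ by omega)]
        have hxe : (xv p c (n:ℤ))⁻¹ = Real.exp (-c) * ((1 - p) / p) ^ n := by
          rw [xv_natCast hp hp1, mul_inv, ← Real.exp_neg, ← inv_pow, pq_inv]
        rw [hxe]
        have := Real.exp_pos c
        nlinarith
    · exact (summable_geometric_of_lt_one (le_of_lt (r_pos hp hp1)) (r_lt_one hp hp1)).mul_left _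
  · refine Summable.of_nonneg_of_le
      (f := fun n : ℕ => Real.exp c * ((1 - p) / p) ^ n)
      (fun n => majF_nonneg hp hp1 _) (fun n => ?_) ?_
    · unfold majF
      rw [if_pos (by omega : -(n:ℤ) ≤ 0), xv_neg_natCast hp hp1]
    · exact (summable_geometric_of_lt_one (le_of_lt (r_pos hp hp1)) (r_lt_one hp hp1)).mul_left _

lemma baseF_pos (i : ℤ) : 0 < baseF p c i := by
  unfold baseF
  have h1 := xv_pos (c := c) hp hp1 i
  have h2 := one_add_xv_pos (c := c) hp hp1 i
  split <;> positivity

lemma abs_log_baseF_le (i : ℤ) : |Real.log (baseF p c i)| ≤ majF p c i := by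
  have h1 := xv_pos (c := c) hp hp1 i
  have h2 := one_add_xv_pos (c := c) hp hp1 i
  unfold baseF majF
  split
  · rw [Real.log_inv, abs_neg, abs_of_nonneg (Real.log_nonneg (by linarith))]
    have := Real.log_le_sub_one_of_pos h2
    linarith
  · rw [Real.log_div (ne_of_gt h1) (ne_of_gt h2), abs_of_nonpos
      (by
        have : Real.log (xv p c i) ≤ Real.log (1 + xv p c i) :=
          Real.log_le_log (by linarith) (by linarith)
        linarith)]
    have h3 : Real.log ((1 + xv p c i) / xv p c i) ≤ (1 + xv p c i) / xv p c i - 1 :=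
      Real.log_le_sub_one_of_pos (by positivity)
    rw [Real.log_div (ne_of_gt h2) (ne_of_gt h1)] at h3
    have h4 : (1 + xv p c i) / xv p c i - 1 = (xv p c i)⁻¹ := by
      field_simp
      ring
    linarith [h3, h4 ▸ h3]

lemma multipliable_baseF : Multipliable (baseF p c) := by
  apply Real.multipliable_of_summable_log (fun i => baseF_pos hp hp1 i)
  apply Summable.of_abs
  exact (summable_majF hp hp1).of_nonneg_of_le (fun i => abs_nonneg _)
    (fun i => abs_log_baseF_le hp hp1 i)

omit hp hp1 in
lemma wFactor_eq_mul (η : ℤ → ℕ) (hp : 1 / 2 < p) (hp1 : p < 1) (i : ℤ) :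
    wFactor p c η i = baseF p c i * corrF p c η i := by
  have h1 := xv_ne (c := c) hp hp1 i
  have h2 := one_add_xv_ne (c := c) hp hp1 i
  unfold wFactor baseF corrF
  rcases le_or_gt i 0 with h | h
  · rw [if_pos h, if_pos h]
    by_cases he : η i = 1
    · rw [if_pos he, if_pos he, rho_eq]
      field_simp
    · rw [if_neg he, if_neg he, one_sub_rho hp hp1, mul_one]
  · rw [if_neg (not_le.mpr h), if_neg (not_le.mpr h)]
    by_cases he : η i = 1
    · rw [if_pos he, if_pos he, rho_eq, mul_one]
    · rw [if_neg he, if_neg he, one_sub_rho hp hp1]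
      field_simp

end decomp

section structure1

/-- The finite product part of the weight: over particles at nonpositive sites and
holes at positive sites. -/
noncomputable def Fw (p c : ℝ) (η : ℤ → ℕ) : ℝ :=
  (∏ᶠ i ∈ {m : ℤ | m ≤ 0 ∧ η m = 1}, xv p c i) *
    ∏ᶠ i ∈ {m : ℤ | 1 ≤ m ∧ η m = 0}, (xv p c i)⁻¹

variable {p c : ℝ} (hp : 1 / 2 < p) (hp1 : p < 1) {η : ℤ → ℕ}
include hp hp1

omit hp hp1 in
lemma Fw_eq_prod (hη : memH η) :
    Fw p c η = (∏ i ∈ hη.2.1.toFinset, xv p c i) * ∏ i ∈ hη.2.2.toFinset, (xv p c i)⁻¹ := by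
  unfold Fw
  rw [finprod_mem_eq_finite_toFinset_prod _ hη.2.1, finprod_mem_eq_finite_toFinset_prod _ hη.2.2]

omit hp hp1 in
lemma corrF_mulSupport (hη : memH η) :
    Function.mulSupport (corrF p c η) ⊆ ↑(hη.2.1.toFinset ∪ hη.2.2.toFinset) := by
  intro i hi
  simp only [Finset.coe_union, Set.mem_union, Finset.mem_coe, Set.Finite.mem_toFinset,
    Set.mem_setOf_eq]
  by_contra hcon
  push_neg at hcon
  apply hi
  unfold corrF
  rcases le_or_gt i 0 with h | h
  · rw [if_pos h, if_neg (fun he => (hcon.1 h) he)]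
  · have h1 : 1 ≤ i := h
    have hne : η i ≠ 0 := fun he => hcon.2 h1 he
    have : η i = 1 := by have := hη.1 i; omega
    rw [if_neg (not_le.mpr h), if_pos this]

omit hp hp1 in
lemma tprod_corrF (hη : memH η) : ∏' i : ℤ, corrF p c η i = Fw p c η := by
  rw [tprod_eq_prod' (corrF_mulSupport hη), Fw_eq_prod hη]
  have hdisj : Disjoint hη.2.1.toFinset hη.2.2.toFinset := by
    rw [Finset.disjoint_left]
    intro a ha hb
    simp only [Set.Finite.mem_toFinset, Set.mem_setOf_eq] at ha hb
    omega
  rw [Finset.prod_union hdisj]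
  congr 1
  · apply Finset.prod_congr rfl
    intro i hi
    simp only [Set.Finite.mem_toFinset, Set.mem_setOf_eq] at hi
    unfold corrF
    rw [if_pos hi.1, if_pos hi.2]
  · apply Finset.prod_congr rfl
    intro i hi
    simp only [Set.Finite.mem_toFinset, Set.mem_setOf_eq] at hi
    unfold corrF
    rw [if_neg (by omega : ¬ i ≤ 0), if_neg (by omega : ¬ η i = 1)]

omit hp hp1 in
lemma multipliable_corrF (hη : memH η) : Multipliable (corrF p c η) :=
  multipliable_of_finite_mulSupport
    (Set.Finite.subset (Finset.finite_toSet _) (corrF_mulSupport hη))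

lemma wBlock_eq (hη : memH η) :
    wBlock p c η = (∏' i : ℤ, baseF p c i) * Fw p c η := by
  unfold wBlock
  rw [tprod_congr (fun i => wFactor_eq_mul (η := η) hp hp1 i),
    Multipliable.tprod_mul (multipliable_baseF hp hp1) (multipliable_corrF hη), tprod_corrF hη]

omit hp hp1 in
lemma exNp_eq (hη : memH η) : exNp η = hη.2.1.toFinset.card := by
  unfold exNp
  rw [finsum_mem_eq_sum_of_inter_support_eq (fun m => η m) (t := hη.2.1.toFinset)]
  · rw [Finset.card_eq_sum_ones]
    apply Finset.sum_congr rfl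
    intro i hi
    simp only [Set.Finite.mem_toFinset, Set.mem_setOf_eq] at hi
    exact hi.2
  · ext m
    simp only [Set.mem_inter_iff, Set.mem_setOf_eq, Function.mem_support, Finset.coe_sort_coe,
      Finset.mem_coe, Set.Finite.mem_toFinset]
    constructor
    · rintro ⟨h1, h2⟩
      have := hη.1 m
      exact ⟨⟨h1, by omega⟩, h2⟩
    · rintro ⟨⟨h1, h2⟩, h3⟩
      exact ⟨h1, h3⟩

omit hp hp1 in
lemma exNh_eq (hη : memH η) : exNh η = hη.2.2.toFinset.card := by
  unfold exNh
  rw [finsum_mem_eq_sum_of_inter_support_eq (fun m => 1 - η m) (t := hη.2.2.toFinset)]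
  · rw [Finset.card_eq_sum_ones]
    apply Finset.sum_congr rfl
    intro i hi
    simp only [Set.Finite.mem_toFinset, Set.mem_setOf_eq] at hi
    omega
  · ext m
    simp only [Set.mem_inter_iff, Set.mem_setOf_eq, Function.mem_support, Finset.coe_sort_coe,
      Finset.mem_coe, Set.Finite.mem_toFinset]
    constructor
    · rintro ⟨h1, h2⟩
      exact ⟨⟨h1, by omega⟩, h2⟩
    · rintro ⟨⟨h1, h2⟩, h3⟩
      exact ⟨h1, h3⟩

omit hp hp1 in
lemma exN_eq (hη : memH η) :
    exN η = (hη.2.2.toFinset.card : ℤ) - (hη.2.1.toFinset.card : ℤ) := by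
  unfold exN
  rw [exNp_eq hη, exNh_eq hη]

end structure1

section summability

variable {p c : ℝ} (hp : 1 / 2 < p) (hp1 : p < 1)
include hp hp1

omit hp hp1 in
lemma config_eq_of_finsets (x y : {η : ℤ → ℕ // memH η})
    (hA : x.2.2.1.toFinset = y.2.2.1.toFinset) (hB : x.2.2.2.toFinset = y.2.2.2.toFinset) :
    x = y := by
  obtain ⟨η, hη⟩ := x
  obtain ⟨η', hη'⟩ := y
  apply Subtype.ext
  funext m
  show η m = η' m
  have h1 := hη.1 m
  have h1' := hη'.1 m
  have hmA := Finset.ext_iff.mp hA m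
  have hmB := Finset.ext_iff.mp hB m
  simp only [Set.Finite.mem_toFinset, Set.mem_setOf_eq] at hmA hmB
  rcases le_or_gt m 0 with h | h
  · have h2 : ¬ (1 ≤ m) := by omega
    simp only [h, true_and, h2, false_and, iff_false] at hmA
    omega
  · have h2 : ¬ (m ≤ 0) := by omega
    have h3 : 1 ≤ m := by omega
    simp only [h2, false_and, h3, true_and] at hmB
    omega

lemma Fw_nonneg {η : ℤ → ℕ} (hη : memH η) : 0 ≤ Fw p c η := by
  rw [Fw_eq_prod hη]
  apply mul_nonneg
  · exact Finset.prod_nonneg (fun i _ => le_of_lt (xv_pos hp hp1 i))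
  · exact Finset.prod_nonneg (fun i _ => inv_nonneg.mpr (le_of_lt (xv_pos hp hp1 i)))

lemma powerset_sum_le (U : Finset ℤ) (f : ℤ → ℝ) (hf : ∀ i ∈ U, 0 ≤ f i)
    (hmaj : ∀ i ∈ U, f i ≤ majF p c i) :
    ∑ s ∈ U.powerset, ∏ i ∈ s, f i ≤ Real.exp (∑' i : ℤ, majF p c i) := by
  have h1 : ∑ s ∈ U.powerset, ∏ i ∈ s, f i = ∏ i ∈ U, (f i + 1) := by
    rw [Finset.prod_add]
    apply Finset.sum_congr rfl
    intro s _
    simp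
  rw [h1]
  calc ∏ i ∈ U, (f i + 1) ≤ ∏ i ∈ U, Real.exp (f i) := by
        apply Finset.prod_le_prod
        · intro i hi
          have := hf i hi; linarith
        · intro i hi
          exact Real.add_one_le_exp (f i)
    _ = Real.exp (∑ i ∈ U, f i) := (Real.exp_sum U f).symm
    _ ≤ Real.exp (∑' i : ℤ, majF p c i) := by
        apply Real.exp_le_exp.mpr
        calc ∑ i ∈ U, f i ≤ ∑ i ∈ U, majF p c i := Finset.sum_le_sum hmaj
          _ ≤ ∑' i : ℤ, majF p c i :=
            Summable.sum_le_tsum U (fun i _ => majF_nonneg hp hp1 i) (summable_majF hp hp1)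

lemma summable_Fw : Summable (fun x : {η : ℤ → ℕ // memH η} => Fw p c x.1) := by
  set T : ℝ := Real.exp (∑' i : ℤ, majF p c i) with hT
  apply summable_of_sum_le (c := T * T) (fun x => Fw_nonneg hp hp1 x.2)
  intro u
  classical
  set G : Finset ℤ × Finset ℤ → ℝ :=
    fun y => (∏ i ∈ y.1, xv p c i) * ∏ i ∈ y.2, (xv p c i)⁻¹ with hG
  set e : {η : ℤ → ℕ // memH η} → Finset ℤ × Finset ℤ :=
    fun x => (x.2.2.1.toFinset, x.2.2.2.toFinset) with he
  have hstep1 : ∑ x ∈ u, Fw p c x.1 = ∑ y ∈ u.image e, G y := by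
    rw [Finset.sum_image (fun x _ y _ hxy => config_eq_of_finsets x y
      (congrArg Prod.fst hxy) (congrArg Prod.snd hxy))]
    apply Finset.sum_congr rfl
    intro x _
    exact Fw_eq_prod x.2
  set U1 : Finset ℤ := u.sup (fun x => x.2.2.1.toFinset) with hU1
  set U2 : Finset ℤ := u.sup (fun x => x.2.2.2.toFinset) with hU2
  have hsub : u.image e ⊆ U1.powerset ×ˢ U2.powerset := by
    intro y hy
    rw [Finset.mem_image] at hy
    obtain ⟨x, hx, rfl⟩ := hy
    rw [Finset.mem_product, Finset.mem_powerset, Finset.mem_powerset]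
    exact ⟨Finset.le_sup (f := fun x : {η : ℤ → ℕ // memH η} => x.2.2.1.toFinset) hx,
      Finset.le_sup (f := fun x : {η : ℤ → ℕ // memH η} => x.2.2.2.toFinset) hx⟩
  have hGnonneg : ∀ y : Finset ℤ × Finset ℤ, 0 ≤ G y := by
    intro y
    apply mul_nonneg
    · exact Finset.prod_nonneg (fun i _ => le_of_lt (xv_pos hp hp1 i))
    · exact Finset.prod_nonneg (fun i _ => inv_nonneg.mpr (le_of_lt (xv_pos hp hp1 i)))
  have hstep2 : ∑ y ∈ u.image e, G y ≤ ∑ y ∈ U1.powerset ×ˢ U2.powerset, G y :=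
    Finset.sum_le_sum_of_subset_of_nonneg hsub (fun y _ _ => hGnonneg y)
  have hstep3 : ∑ y ∈ U1.powerset ×ˢ U2.powerset, G y =
      (∑ s ∈ U1.powerset, ∏ i ∈ s, xv p c i) *
        ∑ t ∈ U2.powerset, ∏ i ∈ t, (xv p c i)⁻¹ := by
    rw [Finset.sum_mul_sum, Finset.sum_product]
  have hU1le : ∀ i ∈ U1, i ≤ 0 := by
    intro i hi
    rw [hU1, Finset.mem_sup] at hi
    obtain ⟨x, _, hx⟩ := hi
    rw [Set.Finite.mem_toFinset] at hx
    exact hx.1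
  have hU2ge : ∀ i ∈ U2, 1 ≤ i := by
    intro i hi
    rw [hU2, Finset.mem_sup] at hi
    obtain ⟨x, _, hx⟩ := hi
    rw [Set.Finite.mem_toFinset] at hx
    exact hx.1
  have hb1 : ∑ s ∈ U1.powerset, ∏ i ∈ s, xv p c i ≤ T := by
    apply powerset_sum_le hp hp1 U1 _ (fun i _ => le_of_lt (xv_pos hp hp1 i))
    intro i hi
    unfold majF
    rw [if_pos (hU1le i hi)]
  have hb2 : ∑ t ∈ U2.powerset, ∏ i ∈ t, (xv p c i)⁻¹ ≤ T := by
    apply powerset_sum_le hp hp1 U2 _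
      (fun i _ => inv_nonneg.mpr (le_of_lt (xv_pos hp hp1 i)))
    intro i hi
    unfold majF
    rw [if_neg (by have := hU2ge i hi; omega)]
  have hb1' : (0:ℝ) ≤ ∑ s ∈ U1.powerset, ∏ i ∈ s, xv p c i := by
    apply Finset.sum_nonneg
    intro s _
    exact Finset.prod_nonneg (fun i _ => le_of_lt (xv_pos hp hp1 i))
  have hTnonneg : (0:ℝ) ≤ T := le_of_lt (Real.exp_pos _)
  calc ∑ x ∈ u, Fw p c x.1 = ∑ y ∈ u.image e, G y := hstep1
    _ ≤ ∑ y ∈ U1.powerset ×ˢ U2.powerset, G y := hstep2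
    _ = _ := hstep3
    _ ≤ T * T := by
        apply mul_le_mul hb1 hb2 _ hTnonneg
        apply Finset.sum_nonneg
        intro t _
        exact Finset.prod_nonneg (fun i _ => inv_nonneg.mpr (le_of_lt (xv_pos hp hp1 i)))

lemma summable_Fw_level (n : ℤ) :
    Summable (fun x : {η : ℤ → ℕ // memH η ∧ exN η = n} => Fw p c x.1) := by
  have h := (summable_Fw (p := p) (c := c) hp hp1).comp_injective
    (i := fun x : {η : ℤ → ℕ // memH η ∧ exN η = n} => (⟨x.1, x.2.1⟩ : {η : ℤ → ℕ // memH η}))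
    (fun x y hxy => by
      apply Subtype.ext
      have := congrArg (fun z : {η : ℤ → ℕ // memH η} => z.1) hxy
      exact this)
  exact h

lemma summable_wBlock_level (n : ℤ) :
    Summable (fun x : {η : ℤ → ℕ // memH η ∧ exN η = n} => wBlock p c x.1) := by
  apply Summable.congr (((summable_Fw_level hp hp1 n).mul_left (∏' i : ℤ, baseF p c i)))
  intro x
  exact (wBlock_eq hp hp1 x.2.1).symm

lemma tsum_wBlock_level (n : ℤ) :
    ∑' x : {η : ℤ → ℕ // memH η ∧ exN η = n}, wBlock p c x.1 =
      (∏' i : ℤ, baseF p c i) * ∑' x : {η : ℤ → ℕ // memH η ∧ exN η = n}, Fw p c x.1 := by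
  rw [← tsum_mul_left]
  apply tsum_congr
  intro x
  exact wBlock_eq hp hp1 x.2.1

end summability

section shift

/-- Shift of a configuration by `j`. -/
def shf (j : ℤ) (η : ℤ → ℕ) : ℤ → ℕ := fun i => η (i + j)

lemma shf_shf (a b : ℤ) (η : ℤ → ℕ) : shf a (shf b η) = shf (a + b) η := by
  funext i
  show η (i + a + b) = η (i + (a + b))
  ring_nf

lemma shf_zero (η : ℤ → ℕ) : shf 0 η = η := by
  funext i
  show η (i + 0) = η i
  rw [add_zero]

lemma finite_strip {η : ℤ → ℕ} (hη : memH η) (j : ℤ) :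
    {m : ℤ | m ≤ j ∧ η m = 1}.Finite := by
  apply Set.Finite.subset (Set.Finite.union hη.2.1 (Set.finite_Icc 1 j))
  intro m hm
  simp only [Set.mem_setOf_eq] at hm
  rcases le_or_gt m 0 with h | h
  · exact Or.inl ⟨h, hm.2⟩
  · exact Or.inr (Set.mem_Icc.mpr ⟨by omega, hm.1⟩)

lemma finite_strip' {η : ℤ → ℕ} (hη : memH η) (j : ℤ) :
    {m : ℤ | j ≤ m ∧ η m = 0}.Finite := by
  apply Set.Finite.subset (Set.Finite.union hη.2.2 (Set.finite_Icc j 0))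
  intro m hm
  simp only [Set.mem_setOf_eq] at hm
  rcases le_or_gt m 0 with h | h
  · exact Or.inr (Set.mem_Icc.mpr ⟨hm.1, h⟩)
  · exact Or.inl ⟨by omega, hm.2⟩

lemma shfA_eq (η : ℤ → ℕ) (j : ℤ) :
    {m : ℤ | m ≤ 0 ∧ shf j η m = 1} = (fun m => m - j) '' {m : ℤ | m ≤ j ∧ η m = 1} := by
  ext m
  simp only [Set.mem_setOf_eq, Set.mem_image]
  constructor
  · rintro ⟨h1, h2⟩
    exact ⟨m + j, ⟨by omega, h2⟩, by omega⟩
  · rintro ⟨a, ⟨ha1, ha2⟩, rfl⟩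
    refine ⟨by omega, ?_⟩
    show η (a - j + j) = 1
    rwa [sub_add_cancel]

lemma shfB_eq (η : ℤ → ℕ) (j : ℤ) :
    {m : ℤ | 1 ≤ m ∧ shf j η m = 0} = (fun m => m - j) '' {m : ℤ | j + 1 ≤ m ∧ η m = 0} := by
  ext m
  simp only [Set.mem_setOf_eq, Set.mem_image]
  constructor
  · rintro ⟨h1, h2⟩
    exact ⟨m + j, ⟨by omega, h2⟩, by omega⟩
  · rintro ⟨a, ⟨ha1, ha2⟩, rfl⟩
    refine ⟨by omega, ?_⟩
    show η (a - j + j) = 0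
    rwa [sub_add_cancel]

lemma memH_shf {η : ℤ → ℕ} (hη : memH η) (j : ℤ) : memH (shf j η) := by
  refine ⟨fun m => hη.1 (m + j), ?_, ?_⟩
  · rw [shfA_eq]
    exact Set.Finite.image _ (finite_strip hη j)
  · rw [shfB_eq]
    exact Set.Finite.image _ (finite_strip' hη (j + 1))

end shift

section shift1

lemma subinj : Function.Injective (fun m : ℤ => m - 1) := fun a b h => by
  have h' : a - 1 = b - 1 := h
  omega

lemma prod_sub_one (S : Finset ℤ) (f : ℤ → ℝ) :
    ∏ i ∈ S.image (fun m => m - 1), f i = ∏ m ∈ S, f (m - 1) :=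
  Finset.prod_image (fun x _ y _ h => by omega)

variable {p c : ℝ} (hp : 1 / 2 < p) (hp1 : p < 1) {η : ℤ → ℕ}

lemma A'_eq_one (hη : memH η) (h1 : η 1 = 1) :
    (memH_shf hη 1).2.1.toFinset = (insert (1:ℤ) hη.2.1.toFinset).image (fun m => m - 1) := by
  ext m
  simp only [Set.Finite.mem_toFinset, Set.mem_setOf_eq, Finset.mem_image, Finset.mem_insert,
    Set.Finite.mem_toFinset, Set.mem_setOf_eq, shf]
  constructor
  · rintro ⟨hm, he⟩
    by_cases hm1 : m + 1 = 1
    · exact ⟨1, Or.inl rfl, by omega⟩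
    · exact ⟨m + 1, Or.inr ⟨by omega, he⟩, by omega⟩
  · rintro ⟨a, ha, rfl⟩
    rcases ha with rfl | ⟨ha1, ha2⟩
    · refine ⟨by omega, ?_⟩
      show η (1 - 1 + 1) = 1
      norm_num [h1]
    · refine ⟨by omega, ?_⟩
      show η (a - 1 + 1) = 1
      rwa [sub_add_cancel]

lemma A'_eq_zero (hη : memH η) (h1 : η 1 ≠ 1) :
    (memH_shf hη 1).2.1.toFinset = hη.2.1.toFinset.image (fun m => m - 1) := by
  ext m
  simp only [Set.Finite.mem_toFinset, Set.mem_setOf_eq, Finset.mem_image,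
    Set.Finite.mem_toFinset, Set.mem_setOf_eq, shf]
  constructor
  · rintro ⟨hm, he⟩
    refine ⟨m + 1, ⟨?_, he⟩, by omega⟩
    by_contra hcon
    have : m + 1 = 1 := by omega
    rw [this] at he
    exact h1 he
  · rintro ⟨a, ⟨ha1, ha2⟩, rfl⟩
    refine ⟨by omega, ?_⟩
    show η (a - 1 + 1) = 1
    rwa [sub_add_cancel]

lemma B'_eq_one (hη : memH η) (h1 : η 1 = 1) :
    (memH_shf hη 1).2.2.toFinset = hη.2.2.toFinset.image (fun m => m - 1) := by
  ext m
  simp only [Set.Finite.mem_toFinset, Set.mem_setOf_eq, Finset.mem_image,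
    Set.Finite.mem_toFinset, Set.mem_setOf_eq, shf]
  constructor
  · rintro ⟨hm, he⟩
    exact ⟨m + 1, ⟨by omega, he⟩, by omega⟩
  · rintro ⟨a, ⟨ha1, ha2⟩, rfl⟩
    have ha1' : 1 ≤ a - 1 := by
      rcases eq_or_lt_of_le ha1 with h | h
      · exfalso; rw [← h] at ha2; omega
      · omega
    refine ⟨ha1', ?_⟩
    show η (a - 1 + 1) = 0
    rwa [sub_add_cancel]

lemma B'_eq_zero (hη : memH η) (h1 : η 1 = 0) :
    (memH_shf hη 1).2.2.toFinset = (hη.2.2.toFinset.erase 1).image (fun m => m - 1) := by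
  ext m
  simp only [Set.Finite.mem_toFinset, Set.mem_setOf_eq, Finset.mem_image, Finset.mem_erase,
    Set.Finite.mem_toFinset, Set.mem_setOf_eq, shf]
  constructor
  · rintro ⟨hm, he⟩
    exact ⟨m + 1, ⟨by omega, by omega, he⟩, by omega⟩
  · rintro ⟨a, ⟨hane, ha1, ha2⟩, rfl⟩
    refine ⟨by omega, ?_⟩
    show η (a - 1 + 1) = 0
    rwa [sub_add_cancel]

lemma one_mem_B (hη : memH η) (h1 : η 1 = 0) : (1:ℤ) ∈ hη.2.2.toFinset := by
  simp only [Set.Finite.mem_toFinset, Set.mem_setOf_eq]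
  exact ⟨le_refl 1, h1⟩

lemma one_not_mem_A (hη : memH η) : (1:ℤ) ∉ hη.2.1.toFinset := by
  simp only [Set.Finite.mem_toFinset, Set.mem_setOf_eq]
  omega

lemma exN_shf1 (hη : memH η) : exN (shf 1 η) = exN η - 1 := by
  rw [exN_eq (memH_shf hη 1), exN_eq hη]
  by_cases h1 : η 1 = 1
  · rw [A'_eq_one hη h1, B'_eq_one hη h1, Finset.card_image_of_injective _ subinj,
      Finset.card_image_of_injective _ subinj, Finset.card_insert_of_notMem (one_not_mem_A hη)]
    push_cast
    ring
  · have h0 : η 1 = 0 := by have := hη.1 1; omega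
    rw [A'_eq_zero hη h1, B'_eq_zero hη h0, Finset.card_image_of_injective _ subinj,
      Finset.card_image_of_injective _ subinj, Finset.card_erase_of_mem (one_mem_B hη h0)]
    have hcard : 1 ≤ hη.2.2.toFinset.card := Finset.card_pos.mpr ⟨1, one_mem_B hη h0⟩
    omega

include hp hp1 in
lemma key1 (a b : ℕ) :
    Real.exp c * ((1 - p) / p) ^ (-((b:ℤ) - (a:ℤ))) =
      ((1 - p) / p) ^ (a + 1) * (Real.exp c * ((1 - p) / p)⁻¹) * (((1 - p) / p) ^ b)⁻¹ := by
  have hr := r_ne hp hp1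
  have h : ((1 - p) / p : ℝ) ^ (a + 1) * ((1 - p) / p)⁻¹ * (((1 - p) / p) ^ b)⁻¹ =
      ((1 - p) / p) ^ ((a:ℤ) - b) := by
    rw [← zpow_natCast ((1 - p) / p) (a + 1), ← zpow_natCast ((1 - p) / p) b, ← zpow_neg_one,
      ← zpow_neg, ← zpow_add₀ hr, ← zpow_add₀ hr]
    congr 1
    push_cast
    ring
  rw [neg_sub, ← h]
  ring

include hp hp1 in
lemma key2 (a b : ℕ) (hb : 1 ≤ b) :
    Real.exp c * ((1 - p) / p) ^ (-((b:ℤ) - (a:ℤ))) * (Real.exp c * ((1 - p) / p)⁻¹)⁻¹ =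
      ((1 - p) / p) ^ a * (((1 - p) / p) ^ (b - 1))⁻¹ := by
  have hr := r_ne hp hp1
  rw [neg_sub, mul_inv, inv_inv]
  have hexp : Real.exp c * (Real.exp c)⁻¹ = 1 := mul_inv_cancel₀ (Real.exp_ne_zero c)
  have h : ((1 - p) / p : ℝ) ^ a * (((1 - p) / p) ^ (b - 1))⁻¹ =
      ((1 - p) / p) ^ ((a:ℤ) - b) * ((1 - p) / p) := by
    rw [← zpow_natCast ((1 - p) / p) a, ← zpow_natCast ((1 - p) / p) (b - 1), ← zpow_neg,
      ← zpow_add₀ hr]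
    have hE : (a:ℤ) + -((b - 1 : ℕ):ℤ) = ((a:ℤ) - b) + 1 := by omega
    rw [hE, zpow_add₀ hr, zpow_one]
  rw [h]
  linear_combination (((1 - p) / p) ^ ((a:ℤ) - b) * ((1 - p) / p)) * hexp

include hp hp1 in
lemma Fw_shf1 (hη : memH η) :
    Fw p c (shf 1 η) = Real.exp c * ((1 - p) / p) ^ (-exN η) * Fw p c η := by
  have hr := r_ne hp hp1
  have hexN : exN η = (hη.2.2.toFinset.card : ℤ) - (hη.2.1.toFinset.card : ℤ) := exN_eq hη
  rw [Fw_eq_prod (memH_shf hη 1), Fw_eq_prod hη]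
  by_cases h1 : η 1 = 1
  · rw [A'_eq_one hη h1, B'_eq_one hη h1, prod_sub_one, prod_sub_one]
    have e1 : ∏ m ∈ insert (1:ℤ) hη.2.1.toFinset, xv p c (m - 1) =
        ((1 - p) / p) ^ (hη.2.1.toFinset.card + 1) *
          (xv p c 1 * ∏ m ∈ hη.2.1.toFinset, xv p c m) := by
      rw [Finset.prod_congr rfl (fun m _ => xv_sub_one hp hp1 m), Finset.prod_mul_distrib,
        Finset.prod_const, Finset.card_insert_of_notMem (one_not_mem_A hη),
        Finset.prod_insert (one_not_mem_A hη)]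
    have e2 : ∏ m ∈ hη.2.2.toFinset, (xv p c (m - 1))⁻¹ =
        (((1 - p) / p) ^ hη.2.2.toFinset.card)⁻¹ *
          ∏ m ∈ hη.2.2.toFinset, (xv p c m)⁻¹ := by
      rw [Finset.prod_congr rfl (fun m _ => by rw [xv_sub_one hp hp1 m, mul_inv]),
        Finset.prod_mul_distrib, Finset.prod_const, inv_pow]
    have hx1 : xv p c 1 = Real.exp c * ((1 - p) / p)⁻¹ := by
      rw [xv_one, inv_div]
    rw [e1, e2, hx1, hexN]
    have hk := key1 hp hp1 (c := c) hη.2.1.toFinset.card hη.2.2.toFinset.card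
    linear_combination
      (-((∏ m ∈ hη.2.1.toFinset, xv p c m) * ∏ m ∈ hη.2.2.toFinset, (xv p c m)⁻¹)) * hk
  · have h0 : η 1 = 0 := by have := hη.1 1; omega
    rw [A'_eq_zero hη h1, B'_eq_zero hη h0, prod_sub_one, prod_sub_one]
    have e1 : ∏ m ∈ hη.2.1.toFinset, xv p c (m - 1) =
        ((1 - p) / p) ^ hη.2.1.toFinset.card * ∏ m ∈ hη.2.1.toFinset, xv p c m := by
      rw [Finset.prod_congr rfl (fun m _ => xv_sub_one hp hp1 m), Finset.prod_mul_distrib,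
        Finset.prod_const]
    have e2 : ∏ m ∈ hη.2.2.toFinset.erase 1, (xv p c (m - 1))⁻¹ =
        (((1 - p) / p) ^ (hη.2.2.toFinset.card - 1))⁻¹ *
          ∏ m ∈ hη.2.2.toFinset.erase 1, (xv p c m)⁻¹ := by
      rw [Finset.prod_congr rfl (fun m _ => by rw [xv_sub_one hp hp1 m, mul_inv]),
        Finset.prod_mul_distrib, Finset.prod_const, inv_pow,
        Finset.card_erase_of_mem (one_mem_B hη h0)]
    have e3 : ∏ m ∈ hη.2.2.toFinset, (xv p c m)⁻¹ =
        (xv p c 1)⁻¹ * ∏ m ∈ hη.2.2.toFinset.erase 1, (xv p c m)⁻¹ :=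
      (Finset.mul_prod_erase _ _ (one_mem_B hη h0)).symm
    have hx1 : xv p c 1 = Real.exp c * ((1 - p) / p)⁻¹ := by
      rw [xv_one, inv_div]
    rw [e1, e2, e3, hx1, hexN]
    have hcard : 1 ≤ hη.2.2.toFinset.card := Finset.card_pos.mpr ⟨1, one_mem_B hη h0⟩
    have hk := key2 hp hp1 (c := c) hη.2.1.toFinset.card hη.2.2.toFinset.card hcard
    linear_combination
      (-((∏ m ∈ hη.2.1.toFinset, xv p c m) *
        ∏ m ∈ hη.2.2.toFinset.erase 1, (xv p c m)⁻¹)) * hk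

end shift1

section assemble

variable {p c : ℝ} (hp : 1 / 2 < p) (hp1 : p < 1)

/-- Shifting by one as an equivalence between levels. -/
noncomputable def levelEquiv (n : ℤ) :
    {η : ℤ → ℕ // memH η ∧ exN η = n} ≃ {η : ℤ → ℕ // memH η ∧ exN η = n - 1} where
  toFun x := ⟨shf 1 x.1, memH_shf x.2.1 1, by rw [exN_shf1 x.2.1, x.2.2]⟩
  invFun x := ⟨shf (-1) x.1, memH_shf x.2.1 (-1), by
    have h := exN_shf1 (memH_shf x.2.1 (-1))
    rw [shf_shf, (by norm_num : (1:ℤ) + -1 = 0), shf_zero] at h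
    have h2 := x.2.2
    omega⟩
  left_inv x := Subtype.ext (by
    show shf (-1) (shf 1 x.1) = x.1
    rw [shf_shf, (by norm_num : (-1:ℤ) + 1 = 0), shf_zero])
  right_inv x := Subtype.ext (by
    show shf 1 (shf (-1) x.1) = x.1
    rw [shf_shf, (by norm_num : (1:ℤ) + -1 = 0), shf_zero])

/-- The law of the conserved quantity. -/
noncomputable def Zf (p c : ℝ) (m : ℤ) : ℝ :=
  ∑' x : {η : ℤ → ℕ // memH η ∧ exN η = m}, wBlock p c x.1

include hp hp1 in
lemma Zf_rec (m : ℤ) :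
    Zf p c (m - 1) = Real.exp c * ((1 - p) / p) ^ (-m) * Zf p c m := by
  unfold Zf
  rw [← Equiv.tsum_eq (levelEquiv m) (fun x => wBlock p c x.1)]
  have hstep : ∀ x : {η : ℤ → ℕ // memH η ∧ exN η = m},
      wBlock p c ((levelEquiv m x) : ℤ → ℕ) =
        (Real.exp c * ((1 - p) / p) ^ (-m)) * wBlock p c x.1 := by
    intro x
    show wBlock p c (shf 1 x.1) = _
    rw [wBlock_eq hp hp1 (memH_shf x.2.1 1), wBlock_eq hp hp1 x.2.1, Fw_shf1 hp hp1 x.2.1,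
      x.2.2]
    ring
  rw [tsum_congr hstep, tsum_mul_left]

include hp hp1 in
lemma Zf_shift (j n : ℤ) :
    Zf p c (n - j) =
      ((1 - p) / p) ^ ((j ^ 2 - j) / 2 - n * j) * Real.exp (c * j) * Zf p c n := by
  have hr := r_ne hp hp1
  induction j using Int.induction_on with
  | zero =>
      norm_num
  | succ i ih =>
      have hE : (((i:ℤ) + 1) ^ 2 - ((i:ℤ) + 1)) / 2 - n * ((i:ℤ) + 1) =
          (((i:ℤ) ^ 2 - i) / 2 - n * i) + ((i:ℤ) - n) := by
        have h1 : ((i:ℤ) + 1) ^ 2 - ((i:ℤ) + 1) = ((i:ℤ) ^ 2 - i) + 2 * i := by ring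
        have h2 : (2:ℤ) ∣ ((i:ℤ) ^ 2 - i) := by
          have h3 : (i:ℤ) ^ 2 - i = (i - 1) * ((i - 1) + 1) := by ring
          rw [h3]
          exact (Int.even_mul_succ_self ((i:ℤ) - 1)).two_dvd
        have h4 : n * ((i:ℤ) + 1) = n * i + n := by ring
        have key : ∀ A u : ℤ, 2 ∣ A →
            (A + 2 * i) / 2 - (u + n) = (A / 2 - u) + ((i:ℤ) - n) := by
          intro A u hA
          omega
        rw [h1, h4, key _ _ h2]
      have hrec := Zf_rec (c := c) hp hp1 (n - i)
      have hstep : n - ((i:ℤ) + 1) = (n - i) - 1 := by ring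
      rw [hstep, hrec, ih, hE]
      rw [zpow_add₀ hr (((i:ℤ) ^ 2 - i) / 2 - n * i) ((i:ℤ) - n),
        show -(n - (i:ℤ)) = (i:ℤ) - n from by ring]
      push_cast
      rw [show c * ((i:ℝ) + 1) = c * (i:ℝ) + c from by ring, Real.exp_add]
      ring
  | pred i ih =>
      have hE : ((-(i:ℤ) - 1) ^ 2 - (-(i:ℤ) - 1)) / 2 - n * (-(i:ℤ) - 1) =
          (((-(i:ℤ)) ^ 2 - (-(i:ℤ))) / 2 - n * (-(i:ℤ))) + (n - (-(i:ℤ)) + 1) := by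
        have h1 : (-(i:ℤ) - 1) ^ 2 - (-(i:ℤ) - 1) = ((-(i:ℤ)) ^ 2 - (-(i:ℤ))) + 2 * (-(-(i:ℤ)) + 1) := by
          ring
        have h2 : (2:ℤ) ∣ ((-(i:ℤ)) ^ 2 - (-(i:ℤ))) := by
          have h3 : (-(i:ℤ)) ^ 2 - (-(i:ℤ)) = (-(i:ℤ) - 1) * ((-(i:ℤ) - 1) + 1) := by ring
          rw [h3]
          exact (Int.even_mul_succ_self (-(i:ℤ) - 1)).two_dvd
        have h4 : n * (-(i:ℤ) - 1) = n * (-(i:ℤ)) - n := by ring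
        have key : ∀ A u : ℤ, 2 ∣ A →
            (A + 2 * (-(-(i:ℤ)) + 1)) / 2 - (u - n) = (A / 2 - u) + (n - (-(i:ℤ)) + 1) := by
          intro A u hA
          omega
        rw [h1, h4, key _ _ h2]
      have hrec := Zf_rec (c := c) hp hp1 (n - (-(i:ℤ)) + 1)
      rw [show n - (-(i:ℤ)) + 1 - 1 = n - (-(i:ℤ)) from by ring] at hrec
      have hK : Real.exp c * ((1 - p) / p) ^ (-(n - (-(i:ℤ)) + 1)) ≠ 0 :=
        mul_ne_zero (Real.exp_ne_zero c) (zpow_ne_zero _ hr)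
      have hZ : Zf p c (n - (-(i:ℤ)) + 1) =
          (Real.exp c * ((1 - p) / p) ^ (-(n - (-(i:ℤ)) + 1)))⁻¹ * Zf p c (n - (-(i:ℤ))) := by
        rw [hrec, ← mul_assoc, inv_mul_cancel₀ hK, one_mul]
      rw [show n - (-(i:ℤ) - 1) = n - (-(i:ℤ)) + 1 from by ring, hZ, ih, hE]
      rw [zpow_add₀ hr, mul_inv, ← Real.exp_neg, zpow_neg, inv_inv]
      push_cast
      rw [show c * (-(i:ℝ) - 1) = c * (-(i:ℝ)) + (-c) from by ring, Real.exp_add]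
      ring
end assemble

/-- Shift recursion for the law of the conserved quantity (ASEP case of Corollary 5.4):
for every `j, n ∈ ℤ`, the blocking weights are summable over `H^{n-j}` and over `H^n`, and
`∑_{η ∈ H^{n-j}} w^c(η) = (q/p)^{(j² - j)/2 - n·j} · e^{c·j} · ∑_{η ∈ H^n} w^c(η)`. -/
theorem wBlock_sum_shift (p c : ℝ) (hp : 1 / 2 < p) (hp1 : p < 1) (j n : ℤ) :
    Summable (fun η : {η : ℤ → ℕ // memH η ∧ exN η = n - j} => wBlock p c η.1) ∧
    Summable (fun η : {η : ℤ → ℕ // memH η ∧ exN η = n} => wBlock p c η.1) ∧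
    ∑' η : {η : ℤ → ℕ // memH η ∧ exN η = n - j}, wBlock p c η.1 =
      ((1 - p) / p) ^ ((j ^ 2 - j) / 2 - n * j) * Real.exp (c * j) *
        ∑' η : {η : ℤ → ℕ // memH η ∧ exN η = n}, wBlock p c η.1 := by
  exact ⟨summable_wBlock_level hp hp1 (n - j), summable_wBlock_level hp hp1 n,
    Zf_shift hp hp1 j n⟩
end

section
/- Well-definedness and c-independence of the conditioned blocking measure (Lemma 3.3): for every c ∈ ℝ and n ∈ ℤ the sum ∑_{z : N(z) = n} μ^c(z) is finite and strictly positive, and the conditional weight is independent of c: for any two reals c and c′ and any z with N(z) = n, μ^c(z) / ∑_{y : N(y) = n} μ^c(y) = μ^{c′}(z) / ∑_{y : N(y) = n} μ^{c′}(y). -/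
/- Configurations `z : ℤ → {ω^min, …, ω^max}` of a misanthrope-type process, with
`z_i = ω^min` for all but finitely many `i ≤ 0` and `z_i = ω^max` for all but finitely
many `i ≥ 1`. -/

/-- Membership in the state space `Ω`. -/
def inOmegaGen (ωmin ωmax : ℤ) (z : ℤ → ℤ) : Prop :=
  (∀ i, ωmin ≤ z i ∧ z i ≤ ωmax) ∧
    {i : ℤ | i ≤ 0 ∧ z i ≠ ωmin}.Finite ∧ {i : ℤ | 1 ≤ i ∧ z i ≠ ωmax}.Finite

/-- The conserved quantity `N(z) = ∑_{i ≥ 1} (ω^max - z_i) - ∑_{i ≤ 0} (z_i - ω^min)`. -/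
noncomputable def Ngen (ωmin ωmax : ℤ) (z : ℤ → ℤ) : ℤ :=
  (∑ᶠ i ∈ {i : ℤ | 1 ≤ i}, (ωmax - z i)) - ∑ᶠ i ∈ {i : ℤ | i ≤ 0}, (z i - ωmin)

/-- The single-site marginal `μ^θ(x) = (e^{θx}/g(x)) / ∑_{y=ω^min}^{ω^max} e^{θy}/g(y)`. -/
noncomputable def muTheta (g : ℤ → ℝ) (ωmin ωmax : ℤ) (θ : ℝ) (x : ℤ) : ℝ :=
  (Real.exp (θ * x) / g x) / ∑ y ∈ Finset.Icc ωmin ωmax, Real.exp (θ * y) / g y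

/-- The product blocking weight `μ^c(z) = ∏_{i ∈ ℤ} μ^{θ_i}(z_i)` with
`θ_i = c + i · ln(p/q)`, `q = 1 - p`. -/
noncomputable def muC (g : ℤ → ℝ) (ωmin ωmax : ℤ) (p c : ℝ) (z : ℤ → ℤ) : ℝ :=
  ∏' i : ℤ, muTheta g ωmin ωmax (c + i * Real.log (p / (1 - p))) (z i)

namespace CBM

noncomputable def Zf (g : ℤ → ℝ) (ωmin ωmax : ℤ) (θ : ℝ) : ℝ :=
  ∑ y ∈ Finset.Icc ωmin ωmax, Real.exp (θ * y) / g y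

def zst (ωmin ωmax : ℤ) (i : ℤ) : ℤ := if 1 ≤ i then ωmax else ωmin

noncomputable def th (p c : ℝ) (i : ℤ) : ℝ := c + i * Real.log (p / (1 - p))

section
variable {g : ℤ → ℝ} {ωmin ωmax : ℤ}

lemma muTheta_def (θ : ℝ) (x : ℤ) :
    muTheta g ωmin ωmax θ x = (Real.exp (θ * x) / g x) / Zf g ωmin ωmax θ := rfl

variable (hω : ωmin ≤ ωmax) (hg : ∀ x ∈ Finset.Icc ωmin ωmax, 0 < g x)
include hω hg

lemma Zf_pos (θ : ℝ) : 0 < Zf g ωmin ωmax θ :=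
  Finset.sum_pos (fun y hy => div_pos (Real.exp_pos _) (hg y hy))
    ⟨ωmin, Finset.mem_Icc.2 ⟨le_rfl, hω⟩⟩

lemma muTheta_pos {θ : ℝ} {x : ℤ} (hx : x ∈ Finset.Icc ωmin ωmax) :
    0 < muTheta g ωmin ωmax θ x :=
  div_pos (div_pos (Real.exp_pos _) (hg x hx)) (Zf_pos hω hg θ)

lemma muTheta_le_one {θ : ℝ} {x : ℤ} (hx : x ∈ Finset.Icc ωmin ωmax) :
    muTheta g ωmin ωmax θ x ≤ 1 := by
  rw [muTheta_def, div_le_one (Zf_pos hω hg θ)]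
  exact Finset.single_le_sum (f := fun y : ℤ => Real.exp (θ * y) / g y)
    (fun y hy => (div_pos (Real.exp_pos _) (hg y hy)).le) hx

lemma sum_muTheta (θ : ℝ) : ∑ x ∈ Finset.Icc ωmin ωmax, muTheta g ωmin ωmax θ x = 1 := by
  simp only [muTheta_def]
  rw [← Finset.sum_div]
  exact div_self (Zf_pos hω hg θ).ne'

lemma muTheta_div (θ : ℝ) {x x' : ℤ} (hx : x ∈ Finset.Icc ωmin ωmax)
    (hx' : x' ∈ Finset.Icc ωmin ωmax) :
    muTheta g ωmin ωmax θ x / muTheta g ωmin ωmax θ x' =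
      Real.exp (θ * x - θ * x') * (g x' / g x) := by
  rw [muTheta_def, muTheta_def, Real.exp_sub]
  have h1 := (hg x hx).ne'
  have h2 := (hg x' hx').ne'
  have h3 := (Zf_pos hω hg θ).ne'
  have h4 := (Real.exp_pos (θ * x')).ne'
  field_simp

lemma neg_log_muTheta_le {θ : ℝ} {x : ℤ} (hx : x ∈ Finset.Icc ωmin ωmax) :
    -Real.log (muTheta g ωmin ωmax θ x) ≤
      ∑ y ∈ (Finset.Icc ωmin ωmax).erase x,
        Real.exp (θ * y - θ * x) * (g x / g y) := by
  have hAx : 0 < Real.exp (θ * x) / g x := div_pos (Real.exp_pos _) (hg x hx)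
  have hZ := Zf_pos hω hg (g := g) θ
  have h1 : -Real.log (muTheta g ωmin ωmax θ x) =
      Real.log (Zf g ωmin ωmax θ / (Real.exp (θ * x) / g x)) := by
    rw [muTheta_def, Real.log_div hAx.ne' hZ.ne', Real.log_div hZ.ne' hAx.ne']
    ring
  rw [h1]
  have h2 : Real.log (Zf g ωmin ωmax θ / (Real.exp (θ * x) / g x)) ≤
      Zf g ωmin ωmax θ / (Real.exp (θ * x) / g x) - 1 :=
    Real.log_le_sub_one_of_pos (div_pos hZ hAx)
  refine h2.trans (le_of_eq ?_)
  have h3 : Zf g ωmin ωmax θ / (Real.exp (θ * x) / g x) =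
      ∑ y ∈ Finset.Icc ωmin ωmax, (Real.exp (θ * y) / g y) / (Real.exp (θ * x) / g x) := by
    rw [Zf, Finset.sum_div]
  rw [h3, ← Finset.add_sum_erase _ _ hx, div_self hAx.ne']
  have h4 : ∀ y ∈ (Finset.Icc ωmin ωmax).erase x,
      (Real.exp (θ * y) / g y) / (Real.exp (θ * x) / g x) =
        Real.exp (θ * y - θ * x) * (g x / g y) := by
    intro y hy
    have hgy := (hg y (Finset.mem_of_mem_erase hy)).ne'
    have := Real.exp_ne_zero (θ * (x:ℝ))
    rw [Real.exp_sub]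
    field_simp
    try ring
    try simp
  rw [Finset.sum_congr rfl h4]
  ring

lemma zst_mem (i : ℤ) : zst ωmin ωmax i ∈ Finset.Icc ωmin ωmax := by
  unfold zst; split_ifs <;> simp [Finset.mem_Icc, hω]

omit hg in
lemma zst_inOmega : inOmegaGen ωmin ωmax (zst ωmin ωmax) := by
  refine ⟨fun i => ?_, ?_, ?_⟩
  · constructor <;> (unfold zst; split_ifs <;> simp [hω])
  · refine Set.Finite.subset Set.finite_empty fun i hi => ?_
    obtain ⟨h1, h2⟩ := hi
    rw [zst, if_neg (by omega)] at h2; exact h2 rfl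
  · refine Set.Finite.subset Set.finite_empty fun i hi => ?_
    obtain ⟨h1, h2⟩ := hi
    rw [zst, if_pos h1] at h2; exact h2 rfl

omit hω hg in
lemma diff_finite {z : ℤ → ℤ} (hz : inOmegaGen ωmin ωmax z) :
    {i : ℤ | z i ≠ zst ωmin ωmax i}.Finite := by
  apply (hz.2.1.union hz.2.2).subset
  intro i hi
  simp only [Set.mem_setOf_eq, Set.mem_union] at hi ⊢
  by_cases h : 1 ≤ i
  · right; exact ⟨h, by rwa [zst, if_pos h] at hi⟩
  · left; exact ⟨by omega, by rwa [zst, if_neg h] at hi⟩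

variable {p : ℝ} (hp : 1 / 2 < p) (hp1 : p < 1)
include hp hp1

omit hω hg in
lemma hL_pos : 0 < Real.log (p / (1 - p)) :=
  Real.log_pos ((one_lt_div (by linarith)).2 (by linarith))

lemma neg_log_mu_max {θ : ℝ} (hθ : 0 ≤ θ) :
    -Real.log (muTheta g ωmin ωmax θ ωmax) ≤
      (∑ y ∈ (Finset.Icc ωmin ωmax).erase ωmax, g ωmax / g y) * Real.exp (-θ) := by
  have hx : ωmax ∈ Finset.Icc ωmin ωmax := Finset.mem_Icc.2 ⟨hω, le_rfl⟩
  refine (neg_log_muTheta_le hω hg hx).trans ?_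
  rw [Finset.sum_mul]
  refine Finset.sum_le_sum fun y hy => ?_
  have hy' : y ∈ Finset.Icc ωmin ωmax := Finset.mem_of_mem_erase hy
  have hyx : y ≤ ωmax - 1 := by
    have h1 := (Finset.mem_Icc.1 hy').2
    have h2 := Finset.ne_of_mem_erase hy
    omega
  have hgpos : 0 ≤ g ωmax / g y := (div_pos (hg _ hx) (hg _ hy')).le
  have : Real.exp (θ * y - θ * ωmax) ≤ Real.exp (-θ) := by
    apply Real.exp_le_exp.2
    have : (y : ℝ) - ωmax ≤ -1 := by
      have : (y : ℝ) ≤ (ωmax : ℝ) - 1 := by exact_mod_cast hyx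
      linarith
    nlinarith
  calc Real.exp (θ * y - θ * ωmax) * (g ωmax / g y)
      ≤ Real.exp (-θ) * (g ωmax / g y) := by
        exact mul_le_mul_of_nonneg_right this hgpos
    _ = g ωmax / g y * Real.exp (-θ) := by ring

lemma neg_log_mu_min {θ : ℝ} (hθ : θ ≤ 0) :
    -Real.log (muTheta g ωmin ωmax θ ωmin) ≤
      (∑ y ∈ (Finset.Icc ωmin ωmax).erase ωmin, g ωmin / g y) * Real.exp θ := by
  have hx : ωmin ∈ Finset.Icc ωmin ωmax := Finset.mem_Icc.2 ⟨le_rfl, hω⟩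
  refine (neg_log_muTheta_le hω hg hx).trans ?_
  rw [Finset.sum_mul]
  refine Finset.sum_le_sum fun y hy => ?_
  have hy' : y ∈ Finset.Icc ωmin ωmax := Finset.mem_of_mem_erase hy
  have hyx : ωmin + 1 ≤ y := by
    have h1 := (Finset.mem_Icc.1 hy').1
    have h2 := Finset.ne_of_mem_erase hy
    omega
  have hgpos : 0 ≤ g ωmin / g y := (div_pos (hg _ hx) (hg _ hy')).le
  have : Real.exp (θ * y - θ * ωmin) ≤ Real.exp θ := by
    apply Real.exp_le_exp.2
    have : (1 : ℝ) ≤ (y : ℝ) - ωmin := by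
      have : (ωmin : ℝ) + 1 ≤ (y : ℝ) := by exact_mod_cast hyx
      linarith
    nlinarith
  calc Real.exp (θ * y - θ * ωmin) * (g ωmin / g y)
      ≤ Real.exp θ * (g ωmin / g y) := mul_le_mul_of_nonneg_right this hgpos
    _ = g ωmin / g y * Real.exp θ := by ring

lemma summable_log_mu (c : ℝ) {z : ℤ → ℤ} (hz : inOmegaGen ωmin ωmax z) :
    Summable fun i : ℤ => Real.log (muTheta g ωmin ωmax (th p c i) (z i)) := by
  classical
  set L := Real.log (p / (1 - p)) with hLdef
  have hL : 0 < L := hL_pos hp hp1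
  obtain ⟨m, hm⟩ := exists_nat_ge (|c| / L)
  have hmL : |c| ≤ (m : ℝ) * L := by
    rw [div_le_iff₀ hL] at hm; linarith
  set Kmx : ℝ := ∑ y ∈ (Finset.Icc ωmin ωmax).erase ωmax, g ωmax / g y with hKmx
  set Kmn : ℝ := ∑ y ∈ (Finset.Icc ωmin ωmax).erase ωmin, g ωmin / g y with hKmn
  have hKmx0 : 0 ≤ Kmx := Finset.sum_nonneg fun y hy =>
    (div_pos (hg _ (Finset.mem_Icc.2 ⟨hω, le_rfl⟩)) (hg _ (Finset.mem_of_mem_erase hy))).le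
  have hKmn0 : 0 ≤ Kmn := Finset.sum_nonneg fun y hy =>
    (div_pos (hg _ (Finset.mem_Icc.2 ⟨le_rfl, hω⟩)) (hg _ (Finset.mem_of_mem_erase hy))).le
  set C : ℝ := max (Kmx * Real.exp (-c)) (Kmn * Real.exp c) with hC
  have hC0 : 0 ≤ C := le_trans (mul_nonneg hKmx0 (Real.exp_pos _).le) (le_max_left _ _)
  set F : ℤ → ℝ := fun i => Real.log (muTheta g ωmin ωmax (th p c i) (z i)) with hF
  have hmem : ∀ i, z i ∈ Finset.Icc ωmin ωmax := fun i => Finset.mem_Icc.2 (hz.1 i)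
  have hFle : ∀ i, F i ≤ 0 := fun i =>
    Real.log_nonpos (muTheta_pos hω hg (hmem i)).le (muTheta_le_one hω hg (hmem i))
  set B : Finset ℤ := (diff_finite hz).toFinset ∪ Finset.Icc (-(m : ℤ)) (m : ℤ) with hB
  set G : ℤ → ℝ := fun i => if i ∈ B then 0 else -F i with hG
  set b : ℤ → ℝ := fun i => C * Real.exp (-|(i : ℝ)| * L) with hb
  have hGnn : ∀ i, 0 ≤ G i := by
    intro i
    simp only [hG]
    split_ifs
    · exact le_rfl
    · linarith [hFle i]
  have hGb : ∀ i, G i ≤ b i := by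
    intro i
    simp only [hG, hb]
    split_ifs with hiB
    · exact mul_nonneg hC0 (Real.exp_pos _).le
    · simp only [hB, Finset.mem_union, Set.Finite.mem_toFinset, Set.mem_setOf_eq,
        Finset.mem_Icc, not_or, not_and, not_le, not_not] at hiB
      obtain ⟨hiD, hiI⟩ := hiB
      have hiI' : (m : ℤ) < i ∨ i < -(m : ℤ) := by omega
      rcases hiI' with him | him
      · have h1i : 1 ≤ i := by omega
        have hzi : z i = ωmax := by
          rw [hiD]; unfold zst; rw [if_pos h1i]
        have hθ : 0 ≤ th p c i := by
          have hiR : (m : ℝ) ≤ (i : ℝ) := by exact_mod_cast him.le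
          have : (m : ℝ) * L ≤ (i : ℝ) * L := mul_le_mul_of_nonneg_right hiR hL.le
          have hc : -|c| ≤ c := neg_abs_le c
          simp only [th]; rw [← hLdef]; linarith
        have h1 : -F i ≤ Kmx * Real.exp (-(th p c i)) := by
          rw [hF]; simp only; rw [hzi]
          have := neg_log_mu_max hω hg hp hp1 (θ := th p c i) hθ
          rw [← hKmx] at this; linarith [this]
        refine h1.trans ?_
        have habs : |(i : ℝ)| = (i : ℝ) := abs_of_pos (by exact_mod_cast lt_of_lt_of_le (by omega : (0:ℤ) < 1) h1i)
        rw [habs]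
        have : -(th p c i) = -c + (-(i : ℝ) * L) := by simp only [th]; rw [← hLdef]; ring
        rw [this, Real.exp_add]
        calc Kmx * (Real.exp (-c) * Real.exp (-(i:ℝ) * L))
            = (Kmx * Real.exp (-c)) * Real.exp (-(i:ℝ) * L) := by ring
          _ ≤ C * Real.exp (-(i:ℝ) * L) :=
              mul_le_mul_of_nonneg_right (le_max_left _ _) (Real.exp_pos _).le
      · have h0i : ¬ (1 ≤ i) := by omega
        have hzi : z i = ωmin := by
          rw [hiD]; unfold zst; rw [if_neg h0i]
        have hθ : th p c i ≤ 0 := by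
          have hiR : (i : ℝ) ≤ -(m : ℝ) := by exact_mod_cast him.le
          have : (i : ℝ) * L ≤ -(m : ℝ) * L := mul_le_mul_of_nonneg_right hiR hL.le
          have hc : c ≤ |c| := le_abs_self c
          simp only [th]; rw [← hLdef]; nlinarith
        have h1 : -F i ≤ Kmn * Real.exp (th p c i) := by
          rw [hF]; simp only; rw [hzi]
          have := neg_log_mu_min hω hg hp hp1 (θ := th p c i) hθ
          rw [← hKmn] at this; linarith [this]
        refine h1.trans ?_
        have habs : |(i : ℝ)| = -(i : ℝ) := abs_of_neg (show (i:ℝ) < 0 by exact_mod_cast (show i < 0 by omega))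
        rw [habs]
        have : th p c i = c + ((i : ℝ) * L) := by simp only [th]; rfl
        rw [this, Real.exp_add]
        have heq : -(-(i:ℝ)) * L = (i:ℝ) * L := by ring
        rw [heq]
        calc Kmn * (Real.exp c * Real.exp ((i:ℝ) * L))
            = (Kmn * Real.exp c) * Real.exp ((i:ℝ) * L) := by ring
          _ ≤ C * Real.exp ((i:ℝ) * L) :=
              mul_le_mul_of_nonneg_right (le_max_right _ _) (Real.exp_pos _).le
  have hbs : Summable b := by
    have hgeo : Summable fun n : ℕ => C * Real.exp (-L) ^ n :=
      (summable_geometric_of_lt_one (Real.exp_pos _).le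
        ((Real.exp_lt_one_iff).2 (by linarith))).mul_left C
    apply Summable.of_nat_of_neg
    · apply hgeo.congr
      intro n
      simp only [hb]
      congr 1
      rw [← Real.exp_nat_mul]
      congr 1
      push_cast
      rw [abs_of_nonneg (by positivity)]
      ring
    · apply hgeo.congr
      intro n
      simp only [hb]
      congr 1
      rw [← Real.exp_nat_mul]
      congr 1
      push_cast
      rw [abs_neg, abs_of_nonneg (by positivity)]
      ring
  have hGs : Summable G := Summable.of_nonneg_of_le hGnn hGb hbs
  have hFG : Summable fun i => F i + G i := by
    apply summable_of_finite_support
    apply Set.Finite.subset B.finite_toSet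
    intro i hi
    simp only [Function.mem_support] at hi
    by_contra hiB
    apply hi
    rw [Finset.mem_coe] at hiB
    simp only [hG, if_neg hiB]
    ring
  have : Summable fun i => (F i + G i) - G i := hFG.sub hGs
  exact this.congr fun i => by ring

lemma muC_eq_exp (c : ℝ) {z : ℤ → ℤ} (hz : inOmegaGen ωmin ωmax z) :
    muC g ωmin ωmax p c z =
      Real.exp (∑' i : ℤ, Real.log (muTheta g ωmin ωmax (th p c i) (z i))) := by
  have hmem : ∀ i, z i ∈ Finset.Icc ωmin ωmax := fun i => Finset.mem_Icc.2 (hz.1 i)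
  have h := Real.rexp_tsum_eq_tprod
    (f := fun i => muTheta g ωmin ωmax (th p c i) (z i))
    (fun i => muTheta_pos hω hg (hmem i))
    (summable_log_mu hω hg hp hp1 c hz)
  exact h.symm

lemma muC_pos (c : ℝ) {z : ℤ → ℤ} (hz : inOmegaGen ωmin ωmax z) :
    0 < muC g ωmin ωmax p c z := by
  rw [muC_eq_exp hω hg hp hp1 c hz]; exact Real.exp_pos _

lemma muC_eq_prod_mul (c : ℝ) {z : ℤ → ℤ} (hz : inOmegaGen ωmin ωmax z) (s : Finset ℤ) :
    muC g ωmin ωmax p c z = (∏ i ∈ s, muTheta g ωmin ωmax (th p c i) (z i)) *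
      Real.exp (∑' i : {i : ℤ // i ∉ s}, Real.log (muTheta g ωmin ωmax (th p c i.1) (z i.1))) := by
  have hmem : ∀ i, z i ∈ Finset.Icc ωmin ωmax := fun i => Finset.mem_Icc.2 (hz.1 i)
  rw [muC_eq_exp hω hg hp hp1 c hz,
    ← (summable_log_mu hω hg hp hp1 c hz).sum_add_tsum_subtype_compl s, Real.exp_add]
  congr 1
  rw [Real.exp_sum]
  exact Finset.prod_congr rfl fun i _ => Real.exp_log (muTheta_pos hω hg (hmem i))

lemma muC_le_prod (c : ℝ) {z : ℤ → ℤ} (hz : inOmegaGen ωmin ωmax z) (s : Finset ℤ) :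
    muC g ωmin ωmax p c z ≤ ∏ i ∈ s, muTheta g ωmin ωmax (th p c i) (z i) := by
  have hmem : ∀ i, z i ∈ Finset.Icc ωmin ωmax := fun i => Finset.mem_Icc.2 (hz.1 i)
  rw [muC_eq_prod_mul hω hg hp hp1 c hz s]
  have h1 : Real.exp (∑' i : {i : ℤ // i ∉ s},
      Real.log (muTheta g ωmin ωmax (th p c i.1) (z i.1))) ≤ 1 := by
    rw [Real.exp_le_one_iff]
    exact tsum_nonpos fun i =>
      Real.log_nonpos (muTheta_pos hω hg (hmem i.1)).le (muTheta_le_one hω hg (hmem i.1))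
  exact mul_le_of_le_one_right
    (Finset.prod_nonneg fun i _ => (muTheta_pos hω hg (hmem i)).le) h1

lemma summable_muC (c : ℝ) (n : ℤ) :
    Summable (fun z : {z : ℤ → ℤ // inOmegaGen ωmin ωmax z ∧ Ngen ωmin ωmax z = n} =>
      muC g ωmin ωmax p c z.1) := by
  classical
  apply summable_of_sum_le (c := 1)
  · intro z
    exact (muC_pos hω hg hp hp1 c z.2.1).le
  · intro u
    set s : Finset ℤ := u.biUnion (fun z => (diff_finite z.2.1).toFinset) with hs
    have hoff : ∀ z ∈ u, ∀ i, i ∉ s → z.1 i = zst ωmin ωmax i := by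
      intro z hzu i his
      by_contra hne
      exact his (Finset.mem_biUnion.2 ⟨z, hzu, (diff_finite z.2.1).mem_toFinset.2 hne⟩)
    have step1 : ∑ z ∈ u, muC g ωmin ωmax p c z.1 ≤
        ∑ z ∈ u, ∏ i ∈ s, muTheta g ωmin ωmax (th p c i) (z.1 i) :=
      Finset.sum_le_sum fun z _ => muC_le_prod hω hg hp hp1 c z.2.1 s
    refine step1.trans ?_
    set t : Finset ℤ := Finset.Icc ωmin ωmax with ht
    set e : {z : ℤ → ℤ // inOmegaGen ωmin ωmax z ∧ Ngen ωmin ωmax z = n} →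
        (∀ i ∈ s, ℤ) := fun z => fun i _ => z.1 i with he
    have hinj : ∀ z₁ ∈ u, ∀ z₂ ∈ u, e z₁ = e z₂ → z₁ = z₂ := by
      intro z₁ h₁ z₂ h₂ heq
      apply Subtype.ext
      funext i
      by_cases his : i ∈ s
      · exact congrFun (congrFun heq i) his
      · rw [hoff z₁ h₁ i his, hoff z₂ h₂ i his]
    have himg : u.image e ⊆ s.pi (fun _ => t) := by
      intro φ hφ
      obtain ⟨z, hzu, rfl⟩ := Finset.mem_image.1 hφ
      rw [Finset.mem_pi]
      intro i hi
      exact Finset.mem_Icc.2 (z.2.1.1 i)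
    have step2 : ∑ z ∈ u, ∏ i ∈ s, muTheta g ωmin ωmax (th p c i) (z.1 i) =
        ∑ φ ∈ u.image e, ∏ i ∈ s.attach, muTheta g ωmin ωmax (th p c i.1) (φ i.1 i.2) := by
      rw [Finset.sum_image hinj]
      refine Finset.sum_congr rfl fun z _ => ?_
      rw [← Finset.prod_attach s (fun i => muTheta g ωmin ωmax (th p c i) (z.1 i))]
    rw [step2]
    have step3 : ∑ φ ∈ u.image e, ∏ i ∈ s.attach, muTheta g ωmin ωmax (th p c i.1) (φ i.1 i.2) ≤
        ∑ φ ∈ s.pi (fun _ => t), ∏ i ∈ s.attach, muTheta g ωmin ωmax (th p c i.1) (φ i.1 i.2) := by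
      apply Finset.sum_le_sum_of_subset_of_nonneg himg
      intro φ hφ _
      apply Finset.prod_nonneg
      intro i _
      have : φ i.1 i.2 ∈ t := (Finset.mem_pi.1 hφ) i.1 i.2
      exact (muTheta_pos hω hg this).le
    refine step3.trans ?_
    rw [← Finset.prod_sum s (fun _ => t) (fun i x => muTheta g ωmin ωmax (th p c i) x)]
    rw [Finset.prod_congr rfl fun i _ => sum_muTheta hω hg (th p c i)]
    simp

omit hω hg hp hp1 in
lemma sum_sub_zst {z : ℤ → ℤ} (s : Finset ℤ)
    (hs : ∀ i ∉ s, z i = zst ωmin ωmax i) :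
    ∑ i ∈ s, (z i - zst ωmin ωmax i) = -Ngen ωmin ωmax z := by
  classical
  unfold Ngen
  have h1 : ∑ᶠ i ∈ {i : ℤ | 1 ≤ i}, (ωmax - z i) =
      ∑ i ∈ s.filter (fun i => 1 ≤ i), (ωmax - z i) := by
    apply finsum_mem_eq_sum_of_inter_support_eq
    ext i
    simp only [Set.mem_inter_iff, Set.mem_setOf_eq, Function.mem_support, Finset.coe_filter]
    constructor
    · rintro ⟨h1i, hsup⟩
      refine ⟨⟨?_, h1i⟩, hsup⟩
      by_contra his
      rw [hs i his, zst, if_pos h1i] at hsup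
      exact hsup (by ring)
    · rintro ⟨⟨_, h1i⟩, hsup⟩
      exact ⟨h1i, hsup⟩
  have h2 : ∑ᶠ i ∈ {i : ℤ | i ≤ 0}, (z i - ωmin) =
      ∑ i ∈ s.filter (fun i => ¬ 1 ≤ i), (z i - ωmin) := by
    apply finsum_mem_eq_sum_of_inter_support_eq
    ext i
    simp only [Set.mem_inter_iff, Set.mem_setOf_eq, Function.mem_support, Finset.coe_filter]
    constructor
    · rintro ⟨h1i, hsup⟩
      refine ⟨⟨?_, by omega⟩, hsup⟩
      by_contra his
      rw [hs i his, zst, if_neg (by omega)] at hsup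
      exact hsup (by ring)
    · rintro ⟨⟨_, h1i⟩, hsup⟩
      exact ⟨by omega, hsup⟩
  rw [h1, h2]
  rw [← Finset.sum_filter_add_sum_filter_not s (fun i => 1 ≤ i)
    (fun i => z i - zst ωmin ωmax i)]
  have e1 : ∑ i ∈ s.filter (fun i => 1 ≤ i), (z i - zst ωmin ωmax i) =
      ∑ i ∈ s.filter (fun i => 1 ≤ i), -(ωmax - z i) := by
    refine Finset.sum_congr rfl fun i hi => ?_
    have h1i : 1 ≤ i := (Finset.mem_filter.1 hi).2
    rw [zst, if_pos h1i]; ring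
  have e2 : ∑ i ∈ s.filter (fun i => ¬ 1 ≤ i), (z i - zst ωmin ωmax i) =
      ∑ i ∈ s.filter (fun i => ¬ 1 ≤ i), (z i - ωmin) := by
    refine Finset.sum_congr rfl fun i hi => ?_
    have h1i := (Finset.mem_filter.1 hi).2
    rw [zst, if_neg h1i]
  rw [e1, e2, Finset.sum_neg_distrib]
  ring

omit hg hp hp1 in
lemma exists_config (hlt : ωmin < ωmax) (n : ℤ) :
    ∃ z : ℤ → ℤ, inOmegaGen ωmin ωmax z ∧ Ngen ωmin ωmax z = n := by
  classical
  set d : ℤ := ωmax - ωmin with hd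
  have hd0 : 0 < d := by omega
  rcases le_or_gt 0 n with hn | hn
  · set k : ℤ := n / d with hk
    set r : ℤ := n % d with hr
    have hk0 : 0 ≤ k := Int.ediv_nonneg hn hd0.le
    have hr0 : 0 ≤ r := Int.emod_nonneg n hd0.ne'
    have hrd : r < d := Int.emod_lt_of_pos n hd0
    have hn' : d * k + r = n := Int.mul_ediv_add_emod n d
    set z : ℤ → ℤ := fun i => if 1 ≤ i ∧ i ≤ k then ωmin
      else if i = k + 1 then ωmax - r else zst ωmin ωmax i with hz
    have hzout : ∀ i ∉ Finset.Icc 1 (k+1), z i = zst ωmin ωmax i := by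
      intro i hi
      rw [Finset.mem_Icc] at hi
      simp only [hz]
      rw [if_neg (by omega), if_neg (by omega)]
    have hOm : inOmegaGen ωmin ωmax z := by
      refine ⟨fun i => ?_, ?_, ?_⟩
      · simp only [hz]; split_ifs with h1 h2
        · omega
        · omega
        · unfold zst; split_ifs <;> omega
      · refine Set.Finite.subset (Finset.Icc 1 (k+1)).finite_toSet fun i hi => ?_
        obtain ⟨h1, h2⟩ := hi
        by_contra his
        rw [hzout i his, zst, if_neg (by omega)] at h2
        exact h2 rfl
      · refine Set.Finite.subset (Finset.Icc 1 (k+1)).finite_toSet fun i hi => ?_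
        obtain ⟨h1, h2⟩ := hi
        by_contra his
        rw [hzout i his, zst, if_pos h1] at h2
        exact h2 rfl
    refine ⟨z, hOm, ?_⟩
    have hsum := sum_sub_zst (ωmin := ωmin) (ωmax := ωmax) (z := z) (Finset.Icc 1 (k+1)) hzout
    have hins : Finset.Icc 1 (k+1) = insert (k+1) (Finset.Icc 1 k) := by
      ext i; simp only [Finset.mem_Icc, Finset.mem_insert]; omega
    rw [hins, Finset.sum_insert (by simp only [Finset.mem_Icc]; omega)] at hsum
    have hv1 : z (k+1) - zst ωmin ωmax (k+1) = -r := by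
      simp only [hz, zst]
      split_ifs <;> omega
    have hv2 : ∑ i ∈ Finset.Icc 1 k, (z i - zst ωmin ωmax i) =
        ∑ i ∈ Finset.Icc 1 k, (ωmin - ωmax) := by
      refine Finset.sum_congr rfl fun i hi => ?_
      rw [Finset.mem_Icc] at hi
      simp only [hz]
      rw [if_pos ⟨hi.1, hi.2⟩, zst, if_pos hi.1]
    rw [hv1, hv2, Finset.sum_const, Int.card_Icc, nsmul_eq_mul,
      Int.toNat_of_nonneg (show (0:ℤ) ≤ k + 1 - 1 by omega)] at hsum
    rw [← hn']
    linear_combination hsum - k * hd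
  · set m : ℤ := -n with hm
    have hm0 : 0 < m := by omega
    set k : ℤ := m / d with hk
    set r : ℤ := m % d with hr
    have hk0 : 0 ≤ k := Int.ediv_nonneg hm0.le hd0.le
    have hr0 : 0 ≤ r := Int.emod_nonneg m hd0.ne'
    have hrd : r < d := Int.emod_lt_of_pos m hd0
    have hn' : d * k + r = m := Int.mul_ediv_add_emod m d
    set z : ℤ → ℤ := fun i => if -k+1 ≤ i ∧ i ≤ 0 then ωmax
      else if i = -k then ωmin + r else zst ωmin ωmax i with hz
    have hzout : ∀ i ∉ Finset.Icc (-k) 0, z i = zst ωmin ωmax i := by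
      intro i hi
      rw [Finset.mem_Icc] at hi
      simp only [hz]
      rw [if_neg (by omega), if_neg (by omega)]
    have hOm : inOmegaGen ωmin ωmax z := by
      refine ⟨fun i => ?_, ?_, ?_⟩
      · simp only [hz]; split_ifs with h1 h2
        · omega
        · omega
        · unfold zst; split_ifs <;> omega
      · refine Set.Finite.subset (Finset.Icc (-k) 0).finite_toSet fun i hi => ?_
        obtain ⟨h1, h2⟩ := hi
        by_contra his
        rw [hzout i his, zst, if_neg (by omega)] at h2
        exact h2 rfl
      · refine Set.Finite.subset (Finset.Icc (-k) 0).finite_toSet fun i hi => ?_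
        obtain ⟨h1, h2⟩ := hi
        by_contra his
        rw [hzout i his, zst, if_pos h1] at h2
        exact h2 rfl
    refine ⟨z, hOm, ?_⟩
    have hsum := sum_sub_zst (ωmin := ωmin) (ωmax := ωmax) (z := z) (Finset.Icc (-k) 0) hzout
    have hins : Finset.Icc (-k) 0 = insert (-k) (Finset.Icc (-k+1) 0) := by
      ext i; simp only [Finset.mem_Icc, Finset.mem_insert]; omega
    rw [hins, Finset.sum_insert (by simp only [Finset.mem_Icc]; omega)] at hsum
    have hv1 : z (-k) - zst ωmin ωmax (-k) = r := by
      simp only [hz, zst]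
      split_ifs <;> omega
    have hv2 : ∑ i ∈ Finset.Icc (-k+1) 0, (z i - zst ωmin ωmax i) =
        ∑ i ∈ Finset.Icc (-k+1) 0, (ωmax - ωmin) := by
      refine Finset.sum_congr rfl fun i hi => ?_
      rw [Finset.mem_Icc] at hi
      simp only [hz]
      rw [if_pos ⟨hi.1, hi.2⟩, zst, if_neg (by omega)]
    rw [hv1, hv2, Finset.sum_const, Int.card_Icc, nsmul_eq_mul,
      Int.toNat_of_nonneg (show (0:ℤ) ≤ 0 + 1 - (-k+1) by omega)] at hsum
    linear_combination hsum - hn' + k * hd - hm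

lemma muC_key (c c' : ℝ) {y : ℤ → ℤ} (hy : inOmegaGen ωmin ωmax y) :
    muC g ωmin ωmax p c y =
      (Real.exp ((c' - c) * (Ngen ωmin ωmax y : ℝ)) *
        (muC g ωmin ωmax p c (zst ωmin ωmax) / muC g ωmin ωmax p c' (zst ωmin ωmax))) *
      muC g ωmin ωmax p c' y := by
  classical
  set L : ℝ := Real.log (p / (1 - p)) with hL
  set s : Finset ℤ := (diff_finite hy).toFinset with hs
  have hoff : ∀ i ∉ s, y i = zst ωmin ωmax i := by
    intro i hi
    by_contra hne
    exact hi ((diff_finite hy).mem_toFinset.2 hne)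
  have hmem : ∀ i, y i ∈ Finset.Icc ωmin ωmax := fun i => Finset.mem_Icc.2 (hy.1 i)
  have hzstmem : ∀ i, zst ωmin ωmax i ∈ Finset.Icc ωmin ωmax := fun i => zst_mem hω hg i
  have hzst : inOmegaGen ωmin ωmax (zst ωmin ωmax) := zst_inOmega hω
  set W : ℝ := ∏ i ∈ s, (Real.exp (((i:ℝ) * L) * ((y i : ℝ) - (zst ωmin ωmax i : ℝ))) *
      (g (zst ωmin ωmax i) / g (y i))) with hW
  have hA : ∑ i ∈ s, ((y i : ℝ) - (zst ωmin ωmax i : ℝ)) = -(Ngen ωmin ωmax y : ℝ) := by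
    have h := sum_sub_zst (ωmin := ωmin) (ωmax := ωmax) (z := y) s hoff
    exact_mod_cast congrArg (fun t : ℤ => (t : ℝ)) h
  have key : ∀ cc : ℝ, muC g ωmin ωmax p cc y =
      muC g ωmin ωmax p cc (zst ωmin ωmax) *
        (Real.exp (cc * (-(Ngen ωmin ωmax y : ℝ))) * W) := by
    intro cc
    have h1 := muC_eq_prod_mul hω hg hp hp1 cc hy s
    have h2 := muC_eq_prod_mul hω hg hp hp1 cc hzst s
    have htail : (∑' i : {i : ℤ // i ∉ s},
          Real.log (muTheta g ωmin ωmax (th p cc i.1) (zst ωmin ωmax i.1)))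
        = ∑' i : {i : ℤ // i ∉ s},
          Real.log (muTheta g ωmin ωmax (th p cc i.1) (y i.1)) :=
      tsum_congr fun i => by rw [hoff i.1 i.2]
    rw [htail] at h2
    have e1 : ∀ i ∈ s, muTheta g ωmin ωmax (th p cc i) (y i) =
        (Real.exp (cc * ((y i : ℝ) - (zst ωmin ωmax i : ℝ))) *
          (Real.exp (((i:ℝ) * L) * ((y i : ℝ) - (zst ωmin ωmax i : ℝ))) *
            (g (zst ωmin ωmax i) / g (y i)))) *
          muTheta g ωmin ωmax (th p cc i) (zst ωmin ωmax i) := by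
      intro i _
      have hq := muTheta_pos hω hg (θ := th p cc i) (hzstmem i)
      have hdiv := muTheta_div hω hg (th p cc i) (hmem i) (hzstmem i)
      rw [← div_mul_cancel₀ (muTheta g ωmin ωmax (th p cc i) (y i)) hq.ne', hdiv]
      congr 1
      rw [← mul_assoc, ← Real.exp_add]
      congr 2
      simp only [th]
      rw [← hL]
      ring
    have hprod : ∏ i ∈ s, muTheta g ωmin ωmax (th p cc i) (y i) =
        Real.exp (cc * (-(Ngen ωmin ωmax y : ℝ))) * W *
          ∏ i ∈ s, muTheta g ωmin ωmax (th p cc i) (zst ωmin ωmax i) := by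
      rw [Finset.prod_congr rfl e1, Finset.prod_mul_distrib]
      congr 1
      rw [Finset.prod_mul_distrib, ← Real.exp_sum, ← Finset.mul_sum, hA, hW]
    rw [h1, h2, hprod]
    ring
  rw [key c, key c']
  have hZ' : 0 < muC g ωmin ωmax p c' (zst ωmin ωmax) := muC_pos hω hg hp hp1 c' hzst
  have hexp : Real.exp ((c' - c) * (Ngen ωmin ωmax y : ℝ)) *
      Real.exp (c' * (-(Ngen ωmin ωmax y : ℝ))) =
      Real.exp (c * (-(Ngen ωmin ωmax y : ℝ))) := by
    rw [← Real.exp_add]; congr 1; ring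
  rw [← hexp]
  field_simp

end
end CBM

/-- Well-definedness and `c`-independence of the conditioned blocking measure (Lemma 3.3):
for every `c ∈ ℝ` and `n ∈ ℤ` the sum `∑_{z : N(z) = n} μ^c(z)` is finite (the family is
summable) and strictly positive, and the conditional weight
`μ^c(z) / ∑_{y : N(y) = n} μ^c(y)` does not depend on `c`. -/
theorem conditioned_blocking_measure_well_defined (p : ℝ) (hp : 1 / 2 < p) (hp1 : p < 1)
    (ωmin ωmax : ℤ) (hω : ωmin < ωmax) (g : ℤ → ℝ)
    (hg : ∀ x ∈ Finset.Icc ωmin ωmax, 0 < g x) :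
    (∀ (c : ℝ) (n : ℤ),
      Summable (fun z : {z : ℤ → ℤ // inOmegaGen ωmin ωmax z ∧ Ngen ωmin ωmax z = n} =>
        muC g ωmin ωmax p c z.1) ∧
      0 < ∑' z : {z : ℤ → ℤ // inOmegaGen ωmin ωmax z ∧ Ngen ωmin ωmax z = n},
        muC g ωmin ωmax p c z.1) ∧
    (∀ (c c' : ℝ) (n : ℤ) (z : ℤ → ℤ), inOmegaGen ωmin ωmax z → Ngen ωmin ωmax z = n →
      muC g ωmin ωmax p c z /
          (∑' y : {y : ℤ → ℤ // inOmegaGen ωmin ωmax y ∧ Ngen ωmin ωmax y = n},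
            muC g ωmin ωmax p c y.1) =
        muC g ωmin ωmax p c' z /
          ∑' y : {y : ℤ → ℤ // inOmegaGen ωmin ωmax y ∧ Ngen ωmin ωmax y = n},
            muC g ωmin ωmax p c' y.1) := by
  have hω' : ωmin ≤ ωmax := hω.le
  constructor
  · intro c n
    refine ⟨CBM.summable_muC hω' hg hp hp1 c n, ?_⟩
    obtain ⟨z0, hz0, hN0⟩ := CBM.exists_config (ωmin := ωmin) (ωmax := ωmax) hω' hω n
    exact Summable.tsum_pos (CBM.summable_muC hω' hg hp hp1 c n)
      (fun z => (CBM.muC_pos hω' hg hp hp1 c z.2.1).le) ⟨z0, hz0, hN0⟩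
      (CBM.muC_pos hω' hg hp hp1 c hz0)
  · intro c c' n z hz hN
    have hzst : inOmegaGen ωmin ωmax (CBM.zst ωmin ωmax) := CBM.zst_inOmega hω'
    set R : ℝ := Real.exp ((c' - c) * (n : ℝ)) *
      (muC g ωmin ωmax p c (CBM.zst ωmin ωmax) /
        muC g ωmin ωmax p c' (CBM.zst ωmin ωmax)) with hR
    have hRpos : 0 < R := mul_pos (Real.exp_pos _)
      (div_pos (CBM.muC_pos hω' hg hp hp1 c hzst) (CBM.muC_pos hω' hg hp hp1 c' hzst))
    have hkey : ∀ (y : ℤ → ℤ), inOmegaGen ωmin ωmax y → Ngen ωmin ωmax y = n →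
        muC g ωmin ωmax p c y = R * muC g ωmin ωmax p c' y := by
      intro y hy hNy
      rw [CBM.muC_key hω' hg hp hp1 c c' hy, hNy, hR]
    have htsum : (∑' y : {y : ℤ → ℤ // inOmegaGen ωmin ωmax y ∧ Ngen ωmin ωmax y = n},
        muC g ωmin ωmax p c y.1) =
        R * ∑' y : {y : ℤ → ℤ // inOmegaGen ωmin ωmax y ∧ Ngen ωmin ωmax y = n},
          muC g ωmin ωmax p c' y.1 := by
      rw [← tsum_mul_left]
      exact tsum_congr fun y => hkey y.1 y.2.1 y.2.2
    rw [hkey z hz hN, htsum, mul_div_mul_left _ _ hRpos.ne']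
end

section
/- Shift invariance of the conditioned blocking measures (Corollary 5.5): for every n, j ∈ ℤ and every z ∈ Ω with N(z) = n, the shifted configuration τ^j z lies in Ω with N(τ^j z) = n − j(ω^max − ω^min), and ν^{n − j(ω^max − ω^min)}(τ^j z) = ν^n(z), where ν^m(y) := μ^c(y) / ∑_{x : N(x) = m} μ^c(x) for y with N(y) = m. -/
def zst (ωmin ωmax : ℤ) : ℤ → ℤ := fun i => if i ≤ 0 then ωmin else ωmax


lemma Ngen_eq_sum (ωmin ωmax : ℤ) (z : ℤ → ℤ) (T : Finset ℤ)
    (hT : ∀ i, zst ωmin ωmax i ≠ z i → i ∈ T) :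
    Ngen ωmin ωmax z = ∑ i ∈ T, (zst ωmin ωmax i - z i) := by
  have h1 : ∑ᶠ i ∈ {i : ℤ | 1 ≤ i}, (ωmax - z i)
      = ∑ i ∈ T.filter (fun i => 1 ≤ i), (ωmax - z i) := by
    apply finsum_mem_eq_sum_of_inter_support_eq
    ext i
    simp only [Set.mem_inter_iff, Set.mem_setOf_eq, Function.mem_support, ne_eq,
      Finset.coe_filter, Finset.mem_coe, Finset.mem_filter]
    constructor
    · rintro ⟨h1i, h2i⟩
      refine ⟨⟨hT i ?_, h1i⟩, h2i⟩
      simp only [zst, if_neg (by omega : ¬ i ≤ 0)]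
      omega
    · rintro ⟨⟨_, h1i⟩, h2i⟩; exact ⟨h1i, h2i⟩
  have h2 : ∑ᶠ i ∈ {i : ℤ | i ≤ 0}, (z i - ωmin)
      = ∑ i ∈ T.filter (fun i => ¬ 1 ≤ i), (z i - ωmin) := by
    apply finsum_mem_eq_sum_of_inter_support_eq
    ext i
    simp only [Set.mem_inter_iff, Set.mem_setOf_eq, Function.mem_support, ne_eq,
      Finset.coe_filter, Finset.mem_coe, Finset.mem_filter]
    constructor
    · rintro ⟨h1i, h2i⟩
      refine ⟨⟨hT i ?_, by omega⟩, h2i⟩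
      simp only [zst, if_pos h1i]
      omega
    · rintro ⟨⟨_, h1i⟩, h2i⟩; exact ⟨by omega, h2i⟩
  have e1 : ∑ i ∈ T.filter (fun i => 1 ≤ i), (ωmax - z i)
      = ∑ i ∈ T.filter (fun i => 1 ≤ i), (zst ωmin ωmax i - z i) := by
    refine Finset.sum_congr rfl fun i hi => ?_
    simp only [Finset.mem_filter] at hi
    simp [zst, if_neg (by omega : ¬ i ≤ 0)]
  have e2 : ∑ i ∈ T.filter (fun i => ¬ 1 ≤ i), (z i - ωmin)
      = -∑ i ∈ T.filter (fun i => ¬ 1 ≤ i), (zst ωmin ωmax i - z i) := by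
    rw [← Finset.sum_neg_distrib]
    refine Finset.sum_congr rfl fun i hi => ?_
    simp only [Finset.mem_filter] at hi
    simp [zst, if_pos (by omega : i ≤ 0)]
  have e3 := Finset.sum_filter_add_sum_filter_not T (fun i => 1 ≤ i)
    (fun i => zst ωmin ωmax i - z i)
  rw [Ngen, h1, h2, e1, e2, ← e3]
  ring

lemma sum_eq_of_support {M : Type*} [AddCommGroup M] (f : ℤ → M) (V W : Finset ℤ)
    (hV : ∀ k, f k ≠ 0 → k ∈ V) (hW : ∀ k, f k ≠ 0 → k ∈ W) :
    ∑ k ∈ V, f k = ∑ k ∈ W, f k := by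
  have h1 : ∑ k ∈ V, f k = ∑ k ∈ V ∪ W, f k :=
    Finset.sum_subset Finset.subset_union_left
      (fun x _ hx => by by_contra h; exact hx (hV x h))
  have h2 : ∑ k ∈ W, f k = ∑ k ∈ V ∪ W, f k :=
    Finset.sum_subset Finset.subset_union_right
      (fun x _ hx => by by_contra h; exact hx (hW x h))
  rw [h1, h2]

lemma zst_sum_shift (ωmin ωmax j : ℤ) (V : Finset ℤ)
    (hV : ∀ k, zst ωmin ωmax (k - j) ≠ zst ωmin ωmax k → k ∈ V) :
    ∑ k ∈ V, (zst ωmin ωmax (k - j) - zst ωmin ωmax k) = -(j * (ωmax - ωmin)) := by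
  set f : ℤ → ℤ := fun k => zst ωmin ωmax (k - j) - zst ωmin ωmax k with hf
  have hV' : ∀ k, f k ≠ 0 → k ∈ V := fun k hk => hV k (by simpa [hf, sub_ne_zero] using hk)
  have hsupp : ∀ k, f k ≠ 0 → (1 ≤ k ∧ k ≤ j) ∨ (j + 1 ≤ k ∧ k ≤ 0) := by
    intro k hk
    simp only [hf, zst, sub_ne_zero] at hk
    by_cases h1 : k - j ≤ 0 <;> by_cases h2 : k ≤ 0 <;>
      simp [h1, h2] at hk <;> omega
  by_cases hj : 0 ≤ j
  · have hW : ∀ k, f k ≠ 0 → k ∈ Finset.Icc 1 j := by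
      intro k hk; rcases hsupp k hk with h | h <;> (simp only [Finset.mem_Icc]; omega)
    rw [sum_eq_of_support f V (Finset.Icc 1 j) hV' hW]
    have hc : ∀ k ∈ Finset.Icc 1 j, f k = ωmin - ωmax := by
      intro k hk; simp only [Finset.mem_Icc] at hk
      simp only [hf, zst]
      rw [if_pos (by omega : k - j ≤ 0), if_neg (by omega : ¬ k ≤ 0)]
    rw [Finset.sum_congr rfl hc, Finset.sum_const, Int.card_Icc]
    have : ((j + 1 - 1).toNat : ℤ) = j := by omega
    rw [nsmul_eq_mul, this]; ring
  · have hW : ∀ k, f k ≠ 0 → k ∈ Finset.Icc (j+1) 0 := by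
      intro k hk; rcases hsupp k hk with h | h <;> (simp only [Finset.mem_Icc]; omega)
    rw [sum_eq_of_support f V (Finset.Icc (j+1) 0) hV' hW]
    have hc : ∀ k ∈ Finset.Icc (j+1) 0, f k = ωmax - ωmin := by
      intro k hk; simp only [Finset.mem_Icc] at hk
      simp only [hf, zst]
      rw [if_neg (by omega : ¬ k - j ≤ 0), if_pos (by omega : k ≤ 0)]
    rw [Finset.sum_congr rfl hc, Finset.sum_const, Int.card_Icc]
    have : ((0 + 1 - (j+1)).toNat : ℤ) = -j := by omega
    rw [nsmul_eq_mul, this]; ring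

lemma inOmegaGen_shift {ωmin ωmax : ℤ} {z : ℤ → ℤ} (hz : inOmegaGen ωmin ωmax z) (j : ℤ) :
    inOmegaGen ωmin ωmax (fun i => z (i + j)) := by
  obtain ⟨hb, hA, hB⟩ := hz
  refine ⟨fun i => hb (i + j), ?_, ?_⟩
  · apply Set.Finite.subset (((hA.union (Set.finite_Icc 1 j)).image (fun k => k - j)))
    rintro i ⟨hi0, hiz⟩
    refine ⟨i + j, ?_, by ring⟩
    by_cases h : i + j ≤ 0
    · exact Or.inl ⟨h, hiz⟩
    · exact Or.inr ⟨by omega, by omega⟩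
  · apply Set.Finite.subset (((hB.union (Set.finite_Icc (j+1) 0)).image (fun k => k - j)))
    rintro i ⟨hi0, hiz⟩
    refine ⟨i + j, ?_, by ring⟩
    by_cases h : 1 ≤ i + j
    · exact Or.inl ⟨h, hiz⟩
    · exact Or.inr ⟨by omega, by omega⟩

lemma diff_finite {ωmin ωmax : ℤ} {z : ℤ → ℤ} (hz : inOmegaGen ωmin ωmax z) :
    {i : ℤ | zst ωmin ωmax i ≠ z i}.Finite := by
  apply Set.Finite.subset (hz.2.1.union hz.2.2)
  intro i hi
  simp only [Set.mem_setOf_eq, zst] at hi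
  by_cases h : i ≤ 0
  · exact Or.inl ⟨h, fun he => hi (by rw [if_pos h, he])⟩
  · exact Or.inr ⟨by omega, fun he => hi (by rw [if_neg h, he])⟩

lemma Ngen_shift {ωmin ωmax : ℤ} {z : ℤ → ℤ} (hz : inOmegaGen ωmin ωmax z) (j : ℤ) :
    Ngen ωmin ωmax (fun i => z (i + j)) = Ngen ωmin ωmax z - j * (ωmax - ωmin) := by
  have hz' := inOmegaGen_shift hz j
  set T : Finset ℤ := (diff_finite hz).toFinset with hT
  set T' : Finset ℤ := (diff_finite hz').toFinset with hT'
  set S : Finset ℤ := T' ∪ T.image (fun k => k - j) ∪ Finset.Icc (1-j) 0 ∪ Finset.Icc 1 (-j)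
    with hS
  set W : Finset ℤ := S.image (fun i => i + j) with hW
  have h1 : Ngen ωmin ωmax (fun i => z (i + j)) = ∑ i ∈ S, (zst ωmin ωmax i - z (i + j)) := by
    apply Ngen_eq_sum
    intro i hi
    simp only [hS, Finset.mem_union]
    exact Or.inl (Or.inl (Or.inl (by simp [hT', Set.Finite.mem_toFinset]; exact hi)))
  have h2 : ∑ i ∈ S, (zst ωmin ωmax i - z (i + j))
      = ∑ k ∈ W, (zst ωmin ωmax (k - j) - z k) := by
    rw [hW, Finset.sum_image (by intro a _ b _ h; exact add_right_cancel h)]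
    refine Finset.sum_congr rfl fun i _ => by ring_nf
  have h3 : ∑ k ∈ W, (zst ωmin ωmax (k - j) - z k)
      = ∑ k ∈ W, (zst ωmin ωmax (k - j) - zst ωmin ωmax k)
        + ∑ k ∈ W, (zst ωmin ωmax k - z k) := by
    rw [← Finset.sum_add_distrib]
    exact Finset.sum_congr rfl fun k _ => by ring
  have h4 : ∑ k ∈ W, (zst ωmin ωmax (k - j) - zst ωmin ωmax k) = -(j * (ωmax - ωmin)) := by
    apply zst_sum_shift
    intro k hk
    have hcond : (k - j ≤ 0 ∧ ¬ k ≤ 0) ∨ (¬ k - j ≤ 0 ∧ k ≤ 0) := by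
      by_contra h
      push_neg at h
      apply hk
      show (if k - j ≤ 0 then ωmin else ωmax) = (if k ≤ 0 then ωmin else ωmax)
      rcases Classical.em (k - j ≤ 0) with a | a
      · have b := h.1 a; rw [if_pos a, if_pos b]
      · have b : ¬ k ≤ 0 := by have := h.2 (by omega); omega
        rw [if_neg a, if_neg b]
    have hmem : k - j ∈ S := by
      rw [hS]
      rcases hcond with ⟨a, b⟩ | ⟨a, b⟩
      · exact Finset.mem_union.mpr (Or.inl (Finset.mem_union.mpr (Or.inr
          (Finset.mem_Icc.mpr ⟨by omega, by omega⟩))))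
      · exact Finset.mem_union.mpr (Or.inr (Finset.mem_Icc.mpr ⟨by omega, by omega⟩))
    exact Finset.mem_image.mpr ⟨k - j, hmem, by ring⟩
  have h5 : Ngen ωmin ωmax z = ∑ k ∈ W, (zst ωmin ωmax k - z k) := by
    apply Ngen_eq_sum
    intro k hk
    refine Finset.mem_image.mpr ⟨k - j, ?_, by ring⟩
    rw [hS]
    refine Finset.mem_union.mpr (Or.inl (Finset.mem_union.mpr (Or.inl
      (Finset.mem_union.mpr (Or.inr (Finset.mem_image.mpr ⟨k, ?_, rfl⟩))))))
    simp only [hT, Set.Finite.mem_toFinset, Set.mem_setOf_eq]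
    exact hk
  rw [h1, h2, h3, h4, ← h5]
  ring


set_option linter.unusedSectionVars false

noncomputable def uaux (g : ℤ → ℝ) (ωmin ωmax : ℤ) (s : ℤ) (θ : ℝ) : ℝ :=
  ∑ y ∈ (Finset.Icc ωmin ωmax).erase s, (g s / g y) * Real.exp (θ * (y - s))

section analytic
variable {g : ℤ → ℝ} {ωmin ωmax : ℤ} (hω : ωmin ≤ ωmax)
  (hg : ∀ x ∈ Finset.Icc ωmin ωmax, 0 < g x)
include hω hg

lemma Zg_pos (θ : ℝ) : 0 < ∑ y ∈ Finset.Icc ωmin ωmax, Real.exp (θ * y) / g y :=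
  Finset.sum_pos (fun y hy => div_pos (Real.exp_pos _) (hg y hy))
    (Finset.nonempty_Icc.mpr hω)

lemma muTheta_pos {x : ℤ} (hx : x ∈ Finset.Icc ωmin ωmax) (θ : ℝ) :
    0 < muTheta g ωmin ωmax θ x :=
  div_pos (div_pos (Real.exp_pos _) (hg x hx)) (Zg_pos hω hg θ)

lemma uaux_nonneg {s : ℤ} (hs : s ∈ Finset.Icc ωmin ωmax) (θ : ℝ) :
    0 ≤ uaux g ωmin ωmax s θ :=
  Finset.sum_nonneg fun y hy => mul_nonneg
    (div_nonneg (hg s hs).le (hg y (Finset.mem_of_mem_erase hy)).le) (Real.exp_pos _).le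

lemma muTheta_inv {s : ℤ} (hs : s ∈ Finset.Icc ωmin ωmax) (θ : ℝ) :
    (muTheta g ωmin ωmax θ s)⁻¹ = 1 + uaux g ωmin ωmax s θ := by
  have hZ := Zg_pos hω hg θ
  have hgs := hg s hs
  have h1 : (muTheta g ωmin ωmax θ s)⁻¹
      = (∑ y ∈ Finset.Icc ωmin ωmax, Real.exp (θ * y) / g y) * (g s / Real.exp (θ * s)) := by
    rw [muTheta, inv_div, div_div_eq_mul_div, div_eq_mul_inv, mul_assoc, ← div_eq_mul_inv]
  rw [h1, Finset.sum_mul]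
  have h2 : ∀ y ∈ Finset.Icc ωmin ωmax,
      Real.exp (θ * y) / g y * (g s / Real.exp (θ * s))
        = (g s / g y) * Real.exp (θ * (y - s)) := by
    intro y _
    rw [mul_sub, Real.exp_sub]
    ring
  rw [Finset.sum_congr rfl h2, ← Finset.add_sum_erase _ _ hs, sub_self, mul_zero,
    Real.exp_zero, div_self hgs.ne', one_mul, uaux]

lemma abs_log_muTheta_le {s : ℤ} (hs : s ∈ Finset.Icc ωmin ωmax) (θ : ℝ) :
    |Real.log (muTheta g ωmin ωmax θ s)| ≤ uaux g ωmin ωmax s θ := by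
  have hu := uaux_nonneg hω hg hs θ
  have hmu := muTheta_pos hω hg hs θ
  have h1 : Real.log (muTheta g ωmin ωmax θ s) = -Real.log (1 + uaux g ωmin ωmax s θ) := by
    rw [← muTheta_inv hω hg hs θ, Real.log_inv, neg_neg]
  rw [h1, abs_neg, abs_of_nonneg (Real.log_nonneg (by linarith))]
  have := Real.log_le_sub_one_of_pos (x := 1 + uaux g ωmin ωmax s θ) (by linarith)
  linarith

end analytic

section decay
variable {g : ℤ → ℝ} {ωmin ωmax : ℤ} (hω : ωmin ≤ ωmax)
  (hg : ∀ x ∈ Finset.Icc ωmin ωmax, 0 < g x)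
include hω hg

lemma uaux_decay_max (c δ t : ℝ) (hδt : 0 ≤ t * δ) :
    uaux g ωmin ωmax ωmax (c + t * δ) ≤ uaux g ωmin ωmax ωmax c * Real.exp (-(t * δ)) := by
  rw [uaux, uaux, Finset.sum_mul]
  apply Finset.sum_le_sum
  intro y hy
  obtain ⟨hyne, hyIcc⟩ := Finset.mem_erase.mp hy
  have hyle : (y : ℝ) - ωmax ≤ -1 := by
    have := Finset.mem_Icc.mp hyIcc
    have : y ≤ ωmax - 1 := by omega
    have : (y : ℝ) ≤ (ωmax : ℝ) - 1 := by exact_mod_cast this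
    linarith
  have hmax : (ωmax : ℤ) ∈ Finset.Icc ωmin ωmax := Finset.mem_Icc.mpr ⟨hω, le_refl _⟩
  rw [mul_assoc, ← Real.exp_add]
  apply mul_le_mul_of_nonneg_left ?_ (div_nonneg (hg _ hmax).le (hg y hyIcc).le)
  apply Real.exp_le_exp.mpr
  nlinarith

lemma uaux_decay_min (c δ t : ℝ) (hδt : 0 ≤ t * δ) :
    uaux g ωmin ωmax ωmin (c - t * δ) ≤ uaux g ωmin ωmax ωmin c * Real.exp (-(t * δ)) := by
  rw [uaux, uaux, Finset.sum_mul]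
  apply Finset.sum_le_sum
  intro y hy
  obtain ⟨hyne, hyIcc⟩ := Finset.mem_erase.mp hy
  have hyge : (1 : ℝ) ≤ (y : ℝ) - ωmin := by
    have := Finset.mem_Icc.mp hyIcc
    have : ωmin + 1 ≤ y := by omega
    have : (ωmin : ℝ) + 1 ≤ (y : ℝ) := by exact_mod_cast this
    linarith
  have hmin : (ωmin : ℤ) ∈ Finset.Icc ωmin ωmax := Finset.mem_Icc.mpr ⟨le_refl _, hω⟩
  rw [mul_assoc, ← Real.exp_add]
  apply mul_le_mul_of_nonneg_left ?_ (div_nonneg (hg _ hmin).le (hg y hyIcc).le)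
  apply Real.exp_le_exp.mpr
  nlinarith

lemma ref_hasProd (δ c : ℝ) (hδ : 0 < δ) :
    ∃ P : ℝ, 0 < P ∧
      HasProd (fun i : ℤ => muTheta g ωmin ωmax (c + i * δ) (zst ωmin ωmax i)) P := by
  have hzstIcc : ∀ i : ℤ, zst ωmin ωmax i ∈ Finset.Icc ωmin ωmax := by
    intro i
    by_cases h : i ≤ 0 <;> simp [zst, h, Finset.mem_Icc, hω, le_refl]
  set L : ℤ → ℝ := fun i => Real.log (muTheta g ωmin ωmax (c + i * δ) (zst ωmin ωmax i))
    with hL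
  have hgeo : Summable (fun n : ℕ => Real.exp (-δ) ^ n) :=
    summable_geometric_of_lt_one (Real.exp_nonneg _)
      (Real.exp_lt_one_iff.mpr (by linarith))
  have hsum : Summable L := by
    apply Summable.of_nat_of_neg
    · apply Summable.of_norm_bounded_eventually
        (g := fun n : ℕ => uaux g ωmin ωmax ωmax c * Real.exp (-δ) ^ n) (hgeo.mul_left _)
      rw [Nat.cofinite_eq_atTop, Filter.eventually_atTop]
      refine ⟨1, fun n hn => ?_⟩
      have hzn : zst ωmin ωmax (n : ℤ) = ωmax := if_neg (by omega)
      have hcast : ((n : ℤ) : ℝ) = (n : ℝ) := by push_cast; rfl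
      calc ‖L (n : ℤ)‖ = |Real.log (muTheta g ωmin ωmax (c + n * δ) ωmax)| := by
            rw [hL]; simp only [hzn, hcast, Real.norm_eq_abs]
        _ ≤ uaux g ωmin ωmax ωmax (c + n * δ) := abs_log_muTheta_le hω hg (Finset.mem_Icc.mpr ⟨hω, le_refl _⟩) _
        _ ≤ uaux g ωmin ωmax ωmax c * Real.exp (-(n * δ)) :=
            uaux_decay_max hω hg c δ n (by positivity)
        _ = uaux g ωmin ωmax ωmax c * Real.exp (-δ) ^ n := by
            rw [show -((n : ℝ) * δ) = (n : ℝ) * (-δ) by ring, Real.exp_nat_mul]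
    · apply Summable.of_norm_bounded_eventually
        (g := fun n : ℕ => uaux g ωmin ωmax ωmin c * Real.exp (-δ) ^ n) (hgeo.mul_left _)
      rw [Nat.cofinite_eq_atTop, Filter.eventually_atTop]
      refine ⟨0, fun n _ => ?_⟩
      have hzn : zst ωmin ωmax (-(n : ℤ)) = ωmin := if_pos (by omega)
      have hcast : ((-(n : ℤ)) : ℝ) = -(n : ℝ) := by push_cast; ring
      calc ‖L (-(n : ℤ))‖ = |Real.log (muTheta g ωmin ωmax (c - n * δ) ωmin)| := by
            rw [hL]; simp only [hzn, Real.norm_eq_abs]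
            norm_num
            ring_nf
        _ ≤ uaux g ωmin ωmax ωmin (c - n * δ) := abs_log_muTheta_le hω hg (Finset.mem_Icc.mpr ⟨le_refl _, hω⟩) _
        _ ≤ uaux g ωmin ωmax ωmin c * Real.exp (-(n * δ)) :=
            uaux_decay_min hω hg c δ n (by positivity)
        _ = uaux g ωmin ωmax ωmin c * Real.exp (-δ) ^ n := by
            rw [show -((n : ℝ) * δ) = (n : ℝ) * (-δ) by ring, Real.exp_nat_mul]
  obtain ⟨S, hS⟩ := hsum
  refine ⟨Real.exp S, Real.exp_pos S, ?_⟩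
  have heq : (fun i : ℤ => muTheta g ωmin ωmax (c + i * δ) (zst ωmin ωmax i))
      = Real.exp ∘ L :=
    funext fun i => (Real.exp_log (muTheta_pos hω hg (hzstIcc i) _)).symm
  rw [heq]
  exact hS.rexp

end decay


lemma muTheta_ratio {g : ℤ → ℝ} {ωmin ωmax : ℤ} (hω : ωmin ≤ ωmax)
    (hg : ∀ x ∈ Finset.Icc ωmin ωmax, 0 < g x) {x s : ℤ}
    (hx : x ∈ Finset.Icc ωmin ωmax) (hs : s ∈ Finset.Icc ωmin ωmax) (θ : ℝ) :
    muTheta g ωmin ωmax θ x / muTheta g ωmin ωmax θ s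
      = Real.exp (θ * (x - s)) * (g s / g x) := by
  have hZ : (0:ℝ) < ∑ y ∈ Finset.Icc ωmin ωmax, Real.exp (θ * y) / g y :=
    Finset.sum_pos (fun y hy => div_pos (Real.exp_pos _) (hg y hy))
      (Finset.nonempty_Icc.mpr hω)
  have hgx := (hg x hx).ne'
  have hgs := (hg s hs).ne'
  rw [muTheta, muTheta, div_div_div_cancel_right₀]
  · rw [mul_sub, Real.exp_sub, div_div_div_comm]
    field_simp
  · exact hZ.ne'

lemma muC_shift' (g : ℤ → ℝ) (ωmin ωmax : ℤ) (p c : ℝ) (j : ℤ) (z : ℤ → ℤ) :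
    muC g ωmin ωmax p c (fun i => z (i + j))
      = muC g ωmin ωmax p (c - j * Real.log (p / (1 - p))) z := by
  rw [muC, muC]
  set δ := Real.log (p / (1 - p)) with hδ
  have key := Equiv.tprod_eq (Equiv.addRight j)
    (fun i : ℤ => muTheta g ωmin ωmax (c - j * δ + i * δ) (z i))
  calc ∏' i : ℤ, muTheta g ωmin ωmax (c + i * δ) (z (i + j))
      = ∏' i : ℤ, muTheta g ωmin ωmax (c - j * δ + ((Equiv.addRight j) i) * δ)
          (z ((Equiv.addRight j) i)) := by
        refine tprod_congr fun i => ?_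
        show _ = muTheta g ωmin ωmax (c - (j:ℝ) * δ + ((i + j : ℤ) : ℝ) * δ) (z (i + j))
        congr 1
        push_cast
        ring
    _ = ∏' i : ℤ, muTheta g ωmin ωmax (c - j * δ + i * δ) (z i) := key


lemma muC_scale {p : ℝ} (hp : 1 / 2 < p) (hp1 : p < 1) {ωmin ωmax : ℤ} (hω : ωmin < ωmax)
    {g : ℤ → ℝ} (hg : ∀ x ∈ Finset.Icc ωmin ωmax, 0 < g x) (c c' : ℝ) (n : ℤ) :
    ∃ A : ℝ, 0 < A ∧ ∀ z : ℤ → ℤ, inOmegaGen ωmin ωmax z → Ngen ωmin ωmax z = n →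
      muC g ωmin ωmax p c' z = A * muC g ωmin ωmax p c z := by
  have h1p : 0 < 1 - p := by linarith
  set δ := Real.log (p / (1 - p)) with hδdef
  have hδ : 0 < δ := Real.log_pos (by rw [lt_div_iff₀ h1p]; linarith)
  obtain ⟨P, hP, hProdP⟩ := ref_hasProd hω.le hg δ c hδ
  obtain ⟨P', hP', hProdP'⟩ := ref_hasProd hω.le hg δ c' hδ
  refine ⟨P' / P * Real.exp ((c - c') * n), by positivity, ?_⟩
  intro z hz hn
  have hzIcc : ∀ i, z i ∈ Finset.Icc ωmin ωmax := fun i => Finset.mem_Icc.mpr (hz.1 i)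
  have hzstIcc : ∀ i : ℤ, zst ωmin ωmax i ∈ Finset.Icc ωmin ωmax := by
    intro i; by_cases h : i ≤ 0 <;> simp [zst, h, Finset.mem_Icc, hω.le, le_refl]
  set D : Finset ℤ := (diff_finite hz).toFinset with hD
  set hfun : ℝ → ℤ → ℝ := fun c₀ i =>
    muTheta g ωmin ωmax (c₀ + i * δ) (z i) /
      muTheta g ωmin ωmax (c₀ + i * δ) (zst ωmin ωmax i) with hfundef
  have hone : ∀ c₀ : ℝ, ∀ i ∉ D, hfun c₀ i = 1 := by
    intro c₀ i hi
    have hzz : zst ωmin ωmax i = z i := by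
      by_contra h
      exact hi ((Set.Finite.mem_toFinset _).mpr h)
    simp only [hfundef, hzz]
    exact div_self (muTheta_pos hω.le hg (hzIcc i) _).ne'
  have hdecomp : ∀ c₀ P₀,
      HasProd (fun i : ℤ => muTheta g ωmin ωmax (c₀ + i * δ) (zst ωmin ωmax i)) P₀ →
      muC g ωmin ωmax p c₀ z = P₀ * ∏ i ∈ D, hfun c₀ i := by
    intro c₀ P₀ h₀
    have hmul : (fun i : ℤ => muTheta g ωmin ωmax (c₀ + i * δ) (z i))
        = fun i : ℤ => muTheta g ωmin ωmax (c₀ + i * δ) (zst ωmin ωmax i) * hfun c₀ i := by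
      funext i
      have hne := (muTheta_pos hω.le hg (hzstIcc i) (c₀ + i * δ)).ne'
      simp only [hfundef]
      field_simp
    rw [muC, ← hδdef, hmul]
    exact (h₀.mul (hasProd_prod_of_ne_finset_one (hone c₀))).tprod_eq
  have hsum : ∑ i ∈ D, ((z i : ℝ) - (zst ωmin ωmax i : ℝ)) = -(n : ℝ) := by
    have h0 := Ngen_eq_sum ωmin ωmax z D (fun i hi => (Set.Finite.mem_toFinset _).mpr hi)
    rw [hn] at h0
    have h1 : ∑ i ∈ D, (z i - zst ωmin ωmax i) = -n := by
      calc ∑ i ∈ D, (z i - zst ωmin ωmax i)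
          = -∑ i ∈ D, (zst ωmin ωmax i - z i) := by
            rw [← Finset.sum_neg_distrib]
            exact Finset.sum_congr rfl fun i _ => by ring
        _ = -n := by rw [← h0]
    calc ∑ i ∈ D, ((z i : ℝ) - (zst ωmin ωmax i : ℝ))
        = ((∑ i ∈ D, (z i - zst ωmin ωmax i) : ℤ) : ℝ) := by push_cast; rfl
      _ = -(n : ℝ) := by rw [h1]; push_cast; ring
  have hterm : ∀ i ∈ D, hfun c' i
      = Real.exp ((c' - c) * ((z i : ℝ) - (zst ωmin ωmax i : ℝ))) * hfun c i := by
    intro i _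
    simp only [hfundef]
    rw [muTheta_ratio hω.le hg (hzIcc i) (hzstIcc i),
      muTheta_ratio hω.le hg (hzIcc i) (hzstIcc i), ← mul_assoc, ← Real.exp_add]
    congr 2
    ring
  have hprod_rel : ∏ i ∈ D, hfun c' i = Real.exp ((c - c') * n) * ∏ i ∈ D, hfun c i := by
    rw [Finset.prod_congr rfl hterm, Finset.prod_mul_distrib, ← Real.exp_sum]
    congr 2
    rw [← Finset.mul_sum, hsum]
    ring
  rw [hdecomp c' P' hProdP', hdecomp c P hProdP, hprod_rel]
  field_simp


/-- Shift invariance of the conditioned blocking measures (Corollary 5.5): for every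
`n, j ∈ ℤ` and every `z ∈ Ω` with `N(z) = n`, the shifted configuration `τ^j z` lies in
`Ω` with `N(τ^j z) = n - j (ω^max - ω^min)`, and
`ν^{n - j(ω^max - ω^min)}(τ^j z) = ν^n(z)`, where
`ν^m(y) = μ^c(y) / ∑_{x : N(x) = m} μ^c(x)`. -/
theorem conditioned_blocking_measure_shift_invariant (p : ℝ) (hp : 1 / 2 < p) (hp1 : p < 1)
    (ωmin ωmax : ℤ) (hω : ωmin < ωmax) (g : ℤ → ℝ)
    (hg : ∀ x ∈ Finset.Icc ωmin ωmax, 0 < g x) (c : ℝ) (n j : ℤ) (z : ℤ → ℤ)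
    (hz : inOmegaGen ωmin ωmax z) (hn : Ngen ωmin ωmax z = n) :
    inOmegaGen ωmin ωmax (fun i => z (i + j)) ∧
    Ngen ωmin ωmax (fun i => z (i + j)) = n - j * (ωmax - ωmin) ∧
    muC g ωmin ωmax p c (fun i => z (i + j)) /
        (∑' x : {x : ℤ → ℤ //
            inOmegaGen ωmin ωmax x ∧ Ngen ωmin ωmax x = n - j * (ωmax - ωmin)},
          muC g ωmin ωmax p c x.1) =
      muC g ωmin ωmax p c z /
        ∑' x : {x : ℤ → ℤ // inOmegaGen ωmin ωmax x ∧ Ngen ωmin ωmax x = n},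
          muC g ωmin ωmax p c x.1 := by
  have h1p : 0 < 1 - p := by linarith
  refine ⟨inOmegaGen_shift hz j, by rw [Ngen_shift hz j, hn], ?_⟩
  set δ := Real.log (p / (1 - p)) with hδdef
  set c' := c - (j : ℝ) * δ with hc'
  set n' := n - j * (ωmax - ωmin) with hn'
  let E : {x : ℤ → ℤ // inOmegaGen ωmin ωmax x ∧ Ngen ωmin ωmax x = n}
      ≃ {x : ℤ → ℤ // inOmegaGen ωmin ωmax x ∧ Ngen ωmin ωmax x = n'} :=
    { toFun := fun x => ⟨fun i => x.1 (i + j), inOmegaGen_shift x.2.1 j,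
        by rw [Ngen_shift x.2.1 j, x.2.2]⟩
      invFun := fun y => ⟨fun i => y.1 (i + -j), inOmegaGen_shift y.2.1 (-j),
        by rw [Ngen_shift y.2.1 (-j), y.2.2, hn']; ring⟩
      left_inv := fun x => Subtype.ext (funext fun i => by
        show x.1 (i + -j + j) = x.1 i
        rw [show i + -j + j = i by omega])
      right_inv := fun y => Subtype.ext (funext fun i => by
        show y.1 (i + j + -j) = y.1 i
        rw [show i + j + -j = i by omega]) }
  have hden : (∑' x : {x : ℤ → ℤ // inOmegaGen ωmin ωmax x ∧ Ngen ωmin ωmax x = n'},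
        muC g ωmin ωmax p c x.1)
      = ∑' x : {x : ℤ → ℤ // inOmegaGen ωmin ωmax x ∧ Ngen ωmin ωmax x = n},
        muC g ωmin ωmax p c' x.1 := by
    rw [← E.tsum_eq (fun y : {x : ℤ → ℤ // inOmegaGen ωmin ωmax x ∧ Ngen ωmin ωmax x = n'}
      => muC g ωmin ωmax p c y.1)]
    refine tsum_congr fun x => ?_
    show muC g ωmin ωmax p c (fun i => x.1 (i + j)) = muC g ωmin ωmax p c' x.1
    rw [muC_shift' g ωmin ωmax p c j x.1, hc', hδdef]
  have hnum : muC g ωmin ωmax p c (fun i => z (i + j)) = muC g ωmin ωmax p c' z := by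
    rw [muC_shift' g ωmin ωmax p c j z, hc', hδdef]
  rw [hden, hnum]
  obtain ⟨A, hA, hAeq⟩ := muC_scale hp hp1 hω hg c c' n
  have hdenA : (∑' x : {x : ℤ → ℤ // inOmegaGen ωmin ωmax x ∧ Ngen ωmin ωmax x = n},
        muC g ωmin ωmax p c' x.1)
      = A * ∑' x : {x : ℤ → ℤ // inOmegaGen ωmin ωmax x ∧ Ngen ωmin ωmax x = n},
        muC g ωmin ωmax p c x.1 := by
    rw [← tsum_mul_left]
    exact tsum_congr fun x => hAeq x.1 x.2.1 x.2.2
  rw [hAeq z hz hn, hdenA, mul_div_mul_left _ _ hA.ne']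
end
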